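/- arXiv:1806.06908 — 7 statements merged into one kernel-verified Lean document; each statement's English description precedes it below -/
import Mathlib

section
/- Let g₁, g₂ ∈ (0,1] and p₁, p₂ ∈ (0,1) with p₁ > p₂. For each k ∈ ℕ let S₁,k and S₂,k be independent random variables with S₁,k distributed Binomial(⌊k·g₁⌋, p₁) and S₂,k distributed Binomial(⌊k·g₂⌋, p₂). Then lim_{k→∞} −(1/k)·log P( S₁,k/⌊k·g₁⌋ ≤ S₂,k/⌊k·g₂⌋ ) = inf_{a ∈ [0,1]} { g₁·KL(a‖p₁) + g₂·KL(a‖p₂) }. -/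
open Filter

/-- Bernoulli Kullback–Leibler divergence `KL(a‖b)`, with the convention `0·log 0 = 0`
(automatic here since `Real.log 0 = 0` and multiplication by `0`). -/
noncomputable def klBer (a b : ℝ) : ℝ :=
  a * Real.log (a / b) + (1 - a) * Real.log ((1 - a) / (1 - b))

open Real

noncomputable def klF (a b : ℝ) : ℝ :=
  (a * Real.log a - a * Real.log b) + ((1 - a) * Real.log (1 - a) - (1 - a) * Real.log (1 - b))

lemma klBer_eq_klF {a b : ℝ} (ha : 0 ≤ a) (ha' : a ≤ 1) (hb : 0 < b) (hb' : b < 1) :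
    klBer a b = klF a b := by
  have h1 : a * Real.log (a / b) = a * Real.log a - a * Real.log b := by
    rcases eq_or_lt_of_le ha with h | h
    · simp [← h]
    · rw [Real.log_div (ne_of_gt h) (ne_of_gt hb), mul_sub]
  have h2 : (1 - a) * Real.log ((1 - a) / (1 - b)) =
      (1 - a) * Real.log (1 - a) - (1 - a) * Real.log (1 - b) := by
    rcases eq_or_lt_of_le ha' with h | h
    · simp [h]
    · rw [Real.log_div (by linarith) (by linarith : (1:ℝ) - b ≠ 0), mul_sub]
  rw [klBer, klF, h1, h2]

lemma continuous_klF (b : ℝ) : Continuous (fun a => klF a b) := by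
  unfold klF
  have h1 : Continuous (fun a : ℝ => a * Real.log a) := Real.continuous_mul_log
  have h2 : Continuous (fun a : ℝ => (1 - a) * Real.log (1 - a)) :=
    h1.comp (continuous_const.sub continuous_id)
  continuity

lemma hasDerivAt_klF {a : ℝ} (b : ℝ) (h0 : 0 < a) (h1 : a < 1) :
    HasDerivAt (fun a => klF a b)
      ((Real.log a - Real.log b) - (Real.log (1 - a) - Real.log (1 - b))) a := by
  have d1 : HasDerivAt (fun a : ℝ => a * Real.log a) (Real.log a + 1) a :=
    Real.hasDerivAt_mul_log (ne_of_gt h0)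
  have d2 : HasDerivAt (fun a : ℝ => a * Real.log b) (Real.log b) a := by
    simpa using (hasDerivAt_id a).mul_const (Real.log b)
  have d3 : HasDerivAt (fun a : ℝ => (1 - a) * Real.log (1 - a))
      (-(Real.log (1 - a) + 1)) a := by
    have := (Real.hasDerivAt_mul_log (x := 1 - a) (by linarith)).comp a
      ((hasDerivAt_const a (1:ℝ)).sub (hasDerivAt_id a))
    simpa [Function.comp_def] using this
  have d4 : HasDerivAt (fun a : ℝ => (1 - a) * Real.log (1 - b))
      (-(Real.log (1 - b))) a := by
    have := ((hasDerivAt_const a (1:ℝ)).sub (hasDerivAt_id a)).mul_const (Real.log (1 - b))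
    simpa using this
  have := ((d1.sub d2).add (d3.sub d4))
  exact this.congr_deriv (by ring)

lemma klF_strictMonoOn {b : ℝ} (hb : 0 < b) (hb' : b < 1) :
    StrictMonoOn (fun a => klF a b) (Set.Icc b 1) := by
  apply strictMonoOn_of_deriv_pos (convex_Icc b 1) (continuous_klF b).continuousOn
  intro x hx
  rw [interior_Icc] at hx
  obtain ⟨hx1, hx2⟩ := hx
  rw [(hasDerivAt_klF b (lt_trans hb hx1) hx2).deriv]
  have h1 : Real.log b < Real.log x := Real.log_lt_log hb hx1
  have h2 : Real.log (1 - x) < Real.log (1 - b) := Real.log_lt_log (by linarith) (by linarith)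
  linarith

lemma klF_strictAntiOn {b : ℝ} (hb : 0 < b) (hb' : b < 1) :
    StrictAntiOn (fun a => klF a b) (Set.Icc 0 b) := by
  apply strictAntiOn_of_deriv_neg (convex_Icc 0 b) (continuous_klF b).continuousOn
  intro x hx
  rw [interior_Icc] at hx
  obtain ⟨hx1, hx2⟩ := hx
  rw [(hasDerivAt_klF b hx1 (lt_trans hx2 hb')).deriv]
  have h1 : Real.log x < Real.log b := Real.log_lt_log hx1 hx2
  have h2 : Real.log (1 - b) < Real.log (1 - x) := Real.log_lt_log (by linarith) (by linarith)
  linarith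

lemma klF_self (b : ℝ) : klF b b = 0 := by simp [klF]

lemma klF_nonneg {a b : ℝ} (ha : 0 ≤ a) (ha' : a ≤ 1) (hb : 0 < b) (hb' : b < 1) :
    0 ≤ klF a b := by
  rcases le_or_gt b a with h | h
  · have := (klF_strictMonoOn hb hb').monotoneOn (Set.left_mem_Icc.2 hb'.le) ⟨h, ha'⟩ h
    simpa [klF_self] using this
  · have := (klF_strictAntiOn hb hb').antitoneOn ⟨ha, h.le⟩ (Set.right_mem_Icc.2 hb.le) h.le
    simpa [klF_self] using this

lemma klF_le {a b : ℝ} (ha : 0 ≤ a) (ha' : a ≤ 1) (hb : 0 < b) (hb' : b < 1) :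
    klF a b ≤ -Real.log b - Real.log (1 - b) := by
  have l1 : a * Real.log a ≤ 0 :=
    mul_nonpos_of_nonneg_of_nonpos ha (Real.log_nonpos ha ha')
  have l2 : (1 - a) * Real.log (1 - a) ≤ 0 :=
    mul_nonpos_of_nonneg_of_nonpos (by linarith) (Real.log_nonpos (by linarith) (by linarith))
  have l3 : Real.log b ≤ a * Real.log b := by
    have hlb : Real.log b ≤ 0 := (Real.log_nonpos hb.le hb'.le)
    nlinarith
  have l4 : Real.log (1 - b) ≤ (1 - a) * Real.log (1 - b) := by
    have : Real.log (1 - b) ≤ 0 := Real.log_nonpos (by linarith) (by linarith)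
    nlinarith
  unfold klF
  linarith


noncomputable def bt (n i : ℕ) (p : ℝ) : ℝ := (n.choose i : ℝ) * p ^ i * (1 - p) ^ (n - i)

lemma bt_nonneg {n i : ℕ} {p : ℝ} (h0 : 0 ≤ p) (h1 : p ≤ 1) : 0 ≤ bt n i p :=
  mul_nonneg (mul_nonneg (Nat.cast_nonneg _) (pow_nonneg h0 _)) (pow_nonneg (by linarith) _)

lemma bt_sum (n : ℕ) (p : ℝ) : ∑ j ∈ Finset.range (n+1), bt n j p = 1 := by
  have h := add_pow p (1-p) n
  have h2 : ((p + (1-p)):ℝ) = 1 := by ring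
  rw [h2, one_pow] at h
  calc ∑ j ∈ Finset.range (n+1), bt n j p
      = ∑ m ∈ Finset.range (n+1), p^m * (1-p)^(n-m) * (n.choose m : ℝ) :=
        Finset.sum_congr rfl (fun j _ => by rw [bt]; ring)
    _ = 1 := h.symm

lemma bt_le_one {n i : ℕ} {p : ℝ} (hi : i ≤ n) (h0 : 0 ≤ p) (h1 : p ≤ 1) : bt n i p ≤ 1 := by
  rw [← bt_sum n p]
  exact Finset.single_le_sum (f := fun j => bt n j p) (fun j _ => bt_nonneg h0 h1)
    (Finset.mem_range.2 (Nat.lt_succ_of_le hi))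

lemma choose_id_real {n j : ℕ} (hjn : j ≤ n) :
    (n.choose (j+1) : ℝ) * ((j:ℝ)+1) = (n.choose j : ℝ) * ((n:ℝ) - j) := by
  have h := Nat.choose_succ_right_eq n j
  rw [show ((n:ℝ) - (j:ℝ)) = ((n - j : ℕ) : ℝ) by push_cast [Nat.cast_sub hjn]; ring]
  exact_mod_cast h

lemma step_up {n i j : ℕ} (hij : j < i) (hin : i < n) :
    bt n j ((i:ℝ)/n) ≤ bt n (j+1) ((i:ℝ)/n) := by
  have hn : (0:ℝ) < n := Nat.cast_pos.2 (by omega)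
  set x : ℝ := (i:ℝ)/n with hx
  have hx0 : 0 ≤ x := by positivity
  have hx1 : x < 1 := by rw [hx, div_lt_one hn]; exact_mod_cast hin
  have hid := choose_id_real (show j ≤ n by omega)
  have hji : (j:ℝ) + 1 ≤ i := by exact_mod_cast hij
  have hin' : (i:ℝ) ≤ n := by exact_mod_cast le_of_lt hin
  have hc : (0:ℝ) ≤ n.choose j := Nat.cast_nonneg _
  have hkey2 : ((j:ℝ)+1)*((n:ℝ)-(i:ℝ)) ≤ ((n:ℝ)-(j:ℝ))*(i:ℝ) := by
    nlinarith [mul_le_mul_of_nonneg_right hji hn.le, Nat.cast_nonneg (α := ℝ) i]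
  have key : (n.choose j : ℝ) * (1 - x) ≤ (n.choose (j+1) : ℝ) * x := by
    rw [hx]
    have hmul : (n.choose j : ℝ) * (((j:ℝ)+1)*((n:ℝ)-(i:ℝ)))
        ≤ (n.choose j : ℝ) * (((n:ℝ)-(j:ℝ))*(i:ℝ)) := mul_le_mul_of_nonneg_left hkey2 hc
    have hj1 : (0:ℝ) < (j:ℝ)+1 := by positivity
    rw [show (n.choose j : ℝ) * (1 - (i:ℝ)/n) ≤ (n.choose (j+1) : ℝ) * ((i:ℝ)/n)
        ↔ (n.choose j : ℝ) * (1 - (i:ℝ)/n) * (((j:ℝ)+1)*n) ≤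
          (n.choose (j+1) : ℝ) * ((i:ℝ)/n) * (((j:ℝ)+1)*n) from
      (mul_le_mul_iff_left₀ (by positivity)).symm]
    have e1 : (n.choose j : ℝ) * (1 - (i:ℝ)/n) * (((j:ℝ)+1)*n)
        = (n.choose j : ℝ) * (((j:ℝ)+1) * ((n:ℝ)-(i:ℝ))) := by field_simp
    have e2 : (n.choose (j+1) : ℝ) * ((i:ℝ)/n) * (((j:ℝ)+1)*n)
        = (n.choose j : ℝ) * (((n:ℝ)-(j:ℝ)) * (i:ℝ)) := by
      calc (n.choose (j+1) : ℝ) * ((i:ℝ)/n) * (((j:ℝ)+1)*n)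
          = ((n.choose (j+1) : ℝ) * ((j:ℝ)+1)) * ((i:ℝ)/n*n) := by ring
        _ = ((n.choose j : ℝ) * ((n:ℝ)-(j:ℝ))) * (i:ℝ) := by
            rw [hid, div_mul_cancel₀ _ (ne_of_gt hn)]
        _ = (n.choose j : ℝ) * (((n:ℝ)-(j:ℝ)) * (i:ℝ)) := by ring
    rw [e1, e2]; exact hmul
  obtain ⟨m, hm1, hm2⟩ : ∃ m, n - j = m + 1 ∧ n - (j+1) = m := ⟨n - j - 1, by omega, by omega⟩
  have hpow : (0:ℝ) ≤ x ^ j * (1 - x) ^ m :=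
    mul_nonneg (pow_nonneg hx0 _) (pow_nonneg (by linarith) _)
  calc bt n j x = (x ^ j * (1-x)^m) * ((n.choose j : ℝ) * (1 - x)) := by
        rw [bt, hm1, pow_succ]; ring
    _ ≤ (x ^ j * (1-x)^m) * ((n.choose (j+1) : ℝ) * x) := mul_le_mul_of_nonneg_left key hpow
    _ = bt n (j+1) x := by rw [bt, hm2, pow_succ]; ring

lemma step_down {n i j : ℕ} (hij : i ≤ j) (hjn : j < n) :
    bt n (j+1) ((i:ℝ)/n) ≤ bt n j ((i:ℝ)/n) := by
  have hn : (0:ℝ) < n := Nat.cast_pos.2 (by omega)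
  set x : ℝ := (i:ℝ)/n with hx
  have hx0 : 0 ≤ x := by positivity
  have hx1 : x ≤ 1 := by
    rw [hx, div_le_one hn]; exact_mod_cast le_of_lt (lt_of_le_of_lt hij hjn)
  have hid := choose_id_real (le_of_lt hjn)
  have hji : (i:ℝ) ≤ (j:ℝ) := by exact_mod_cast hij
  have hjn'' : (j:ℝ) < n := by exact_mod_cast hjn
  have hc : (0:ℝ) ≤ n.choose j := Nat.cast_nonneg _
  have hkey2 : ((n:ℝ)-(j:ℝ))*(i:ℝ) ≤ ((j:ℝ)+1)*((n:ℝ)-(i:ℝ)) := by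
    have h1 : (i:ℝ) ≤ n := by linarith
    nlinarith [mul_le_mul_of_nonneg_right (show (i:ℝ) + 1 ≤ (j:ℝ)+1 by linarith) hn.le,
      Nat.cast_nonneg (α := ℝ) i]
  have key : (n.choose (j+1) : ℝ) * x ≤ (n.choose j : ℝ) * (1 - x) := by
    rw [hx]
    have hmul : (n.choose j : ℝ) * (((n:ℝ)-(j:ℝ))*(i:ℝ))
        ≤ (n.choose j : ℝ) * (((j:ℝ)+1) * ((n:ℝ)-(i:ℝ))) := mul_le_mul_of_nonneg_left hkey2 hc
    rw [show (n.choose (j+1) : ℝ) * ((i:ℝ)/n) ≤ (n.choose j : ℝ) * (1 - (i:ℝ)/n)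
        ↔ (n.choose (j+1) : ℝ) * ((i:ℝ)/n) * (((j:ℝ)+1)*n) ≤
          (n.choose j : ℝ) * (1 - (i:ℝ)/n) * (((j:ℝ)+1)*n) from
      (mul_le_mul_iff_left₀ (by positivity)).symm]
    have e1 : (n.choose j : ℝ) * (1 - (i:ℝ)/n) * (((j:ℝ)+1)*n)
        = (n.choose j : ℝ) * (((j:ℝ)+1) * ((n:ℝ)-(i:ℝ))) := by field_simp
    have e2 : (n.choose (j+1) : ℝ) * ((i:ℝ)/n) * (((j:ℝ)+1)*n)
        = (n.choose j : ℝ) * (((n:ℝ)-(j:ℝ)) * (i:ℝ)) := by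
      calc (n.choose (j+1) : ℝ) * ((i:ℝ)/n) * (((j:ℝ)+1)*n)
          = ((n.choose (j+1) : ℝ) * ((j:ℝ)+1)) * ((i:ℝ)/n*n) := by ring
        _ = ((n.choose j : ℝ) * ((n:ℝ)-(j:ℝ))) * (i:ℝ) := by
            rw [hid, div_mul_cancel₀ _ (ne_of_gt hn)]
        _ = (n.choose j : ℝ) * (((n:ℝ)-(j:ℝ)) * (i:ℝ)) := by ring
    rw [e1, e2]; exact hmul
  obtain ⟨m, hm1, hm2⟩ : ∃ m, n - j = m + 1 ∧ n - (j+1) = m := ⟨n - j - 1, by omega, by omega⟩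
  have hpow : (0:ℝ) ≤ x ^ j * (1 - x) ^ m :=
    mul_nonneg (pow_nonneg hx0 _) (pow_nonneg (by linarith) _)
  calc bt n (j+1) x = (x ^ j * (1-x)^m) * ((n.choose (j+1) : ℝ) * x) := by
        rw [bt, hm2, pow_succ]; ring
    _ ≤ (x ^ j * (1-x)^m) * ((n.choose j : ℝ) * (1 - x)) := mul_le_mul_of_nonneg_left key hpow
    _ = bt n j x := by rw [bt, hm1, pow_succ]; ring

lemma bt_max {n i : ℕ} (hn : 0 < n) (hi : i ≤ n) (j : ℕ) :
    bt n j ((i:ℝ)/n) ≤ bt n i ((i:ℝ)/n) := by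
  have hnR : (0:ℝ) < n := Nat.cast_pos.2 hn
  set x : ℝ := (i:ℝ)/n with hx
  have hx0 : 0 ≤ x := by positivity
  have hx1 : x ≤ 1 := by rw [hx, div_le_one hnR]; exact_mod_cast hi
  rcases eq_or_lt_of_le hi with heq | hin
  · -- i = n, x = 1
    have hx1' : x = 1 := by rw [hx, heq]; exact div_self (ne_of_gt hnR)
    rw [hx1', heq]
    have hbn : bt n n (1:ℝ) = 1 := by simp [bt]
    rw [hbn]
    rcases le_or_gt j n with h | h
    · exact bt_le_one h zero_le_one le_rfl
    · rw [bt, Nat.choose_eq_zero_of_lt h]; simp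
  · rcases le_or_gt j i with hji | hij
    · have up : ∀ d j', j' + d = i → bt n j' x ≤ bt n i x := by
        intro d
        induction d with
        | zero => intro j' h; rw [show j' = i by omega]
        | succ d ih =>
          intro j' h
          have h1 : j' < i := by omega
          exact le_trans (step_up h1 hin) (ih (j'+1) (by omega))
      exact up (i - j) j (by omega)
    · have down : ∀ d, bt n (i + d) x ≤ bt n i x := by
        intro d
        induction d with
        | zero => rw [Nat.add_zero]
        | succ d ih =>
          rcases lt_or_ge (i + d) n with h | h
          · rw [show i + (d+1) = (i + d) + 1 by omega]
            exact le_trans (step_down (Nat.le_add_right i d) h) ih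
          · have : n.choose (i + (d+1)) = 0 := Nat.choose_eq_zero_of_lt (by omega)
            rw [bt, this]
            simpa using bt_nonneg (n := n) (i := i) hx0 hx1
      have := down (j - i)
      rwa [show i + (j - i) = j by omega] at this

lemma one_le_bt {n i : ℕ} (hn : 0 < n) (hi : i ≤ n) :
    1 ≤ ((n:ℝ)+1) * bt n i ((i:ℝ)/n) := by
  have h := bt_sum n ((i:ℝ)/n)
  have h2 : ∑ j ∈ Finset.range (n+1), bt n j ((i:ℝ)/n)
      ≤ ∑ _j ∈ Finset.range (n+1), bt n i ((i:ℝ)/n) :=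
    Finset.sum_le_sum (fun j _ => bt_max hn hi j)
  rw [h, Finset.sum_const, Finset.card_range, nsmul_eq_mul] at h2
  calc (1:ℝ) ≤ ((n+1 : ℕ):ℝ) * bt n i ((i:ℝ)/n) := h2
    _ = ((n:ℝ)+1) * bt n i ((i:ℝ)/n) := by push_cast; ring

lemma bt_eq_exp {n i : ℕ} {p : ℝ} (hn : 0 < n) (hi : i ≤ n) (hp : 0 < p) (hp' : p < 1) :
    bt n i p = bt n i ((i:ℝ)/n) * Real.exp (-(n:ℝ) * klF ((i:ℝ)/n) p) := by
  have hnR : (0:ℝ) < n := Nat.cast_pos.2 hn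
  rcases Nat.eq_zero_or_pos i with rfl | hi0
  · -- i = 0
    simp only [Nat.cast_zero, zero_div]
    rw [bt, bt, klF]
    simp only [Nat.choose_zero_right, Nat.cast_one, pow_zero, Nat.sub_zero, one_mul,
      Real.log_zero, mul_zero, sub_self, sub_zero, one_pow, mul_one, Real.log_one, zero_sub,
      zero_add, zero_mul]
    rw [show -(n:ℝ) * -Real.log (1 - p) = (n:ℕ) * Real.log (1-p) by push_cast; ring,
      Real.exp_nat_mul, Real.exp_log (by linarith : (0:ℝ) < 1 - p)]
  rcases eq_or_lt_of_le hi with heq | hin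
  · -- i = n
    rw [heq]
    have hx1 : ((n:ℝ))/n = 1 := div_self (ne_of_gt hnR)
    rw [hx1, bt, bt, klF]
    simp only [Nat.choose_self, Nat.cast_one, one_mul, Nat.sub_self, pow_zero, mul_one,
      Real.log_one, mul_zero, sub_self, sub_zero, zero_mul, add_zero, zero_sub]
    rw [one_pow, show -(n:ℝ) * -Real.log p = (n:ℕ) * Real.log p by push_cast; ring,
      Real.exp_nat_mul, Real.exp_log hp, one_mul]
  · -- 0 < i < n
    set x : ℝ := (i:ℝ)/n with hx
    have hx0 : 0 < x := by positivity
    have hx1 : x < 1 := by rw [hx, div_lt_one hnR]; exact_mod_cast hin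
    have hnx : (n:ℝ) * x = (i:ℝ) := by rw [hx]; field_simp
    have hnx2 : (n:ℝ) * (1 - x) = ((n - i : ℕ) : ℝ) := by
      rw [hx]; push_cast [Nat.cast_sub hi]; field_simp
    have hpx : (0:ℝ) < p/x := div_pos hp hx0
    have h1px : (0:ℝ) < (1-p)/(1-x) := div_pos (by linarith) (by linarith)
    have hexp : Real.exp (-(n:ℝ) * klF x p)
        = (p/x)^i * ((1-p)/(1-x))^(n-i) := by
      have hlog1 : Real.log (p/x) = Real.log p - Real.log x :=
        Real.log_div (ne_of_gt hp) (ne_of_gt hx0)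
      have hlog2 : Real.log ((1-p)/(1-x)) = Real.log (1-p) - Real.log (1-x) :=
        Real.log_div (by linarith : (1:ℝ)-p ≠ 0) (by linarith : (1:ℝ)-x ≠ 0)
      have hmain : -(n:ℝ) * klF x p
          = (i:ℝ) * Real.log (p/x) + ((n-i:ℕ):ℝ) * Real.log ((1-p)/(1-x)) := by
        rw [hlog1, hlog2, ← hnx, ← hnx2, klF]; ring
      rw [hmain, Real.exp_add, Real.exp_nat_mul, Real.exp_nat_mul,
        Real.exp_log hpx, Real.exp_log h1px]
    rw [hexp, bt, bt]
    have c1 : x ^ i * (p/x)^i = p^i := by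
      rw [← mul_pow, mul_div_cancel₀ _ (ne_of_gt hx0)]
    have c2 : (1-x) ^ (n-i) * ((1-p)/(1-x))^(n-i) = (1-p)^(n-i) := by
      rw [← mul_pow, mul_div_cancel₀ _ (by linarith : (1:ℝ)-x ≠ 0)]
    calc (n.choose i : ℝ) * p ^ i * (1-p)^(n-i)
        = (n.choose i : ℝ) * (x ^ i * (p/x)^i) * ((1-x)^(n-i) * ((1-p)/(1-x))^(n-i)) := by
          rw [c1, c2]
      _ = (n.choose i : ℝ) * x ^ i * (1-x)^(n-i) * ((p/x)^i * ((1-p)/(1-x))^(n-i)) := by ring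

lemma bt_upper {n i : ℕ} {p : ℝ} (hn : 0 < n) (hi : i ≤ n) (hp : 0 < p) (hp' : p < 1) :
    bt n i p ≤ Real.exp (-(n:ℝ) * klF ((i:ℝ)/n) p) := by
  rw [bt_eq_exp hn hi hp hp']
  have hx0 : (0:ℝ) ≤ (i:ℝ)/n := by positivity
  have hx1 : (i:ℝ)/n ≤ 1 := by
    rw [div_le_one (Nat.cast_pos.2 hn : (0:ℝ) < n)]; exact_mod_cast hi
  calc bt n i ((i:ℝ)/n) * Real.exp (-(n:ℝ) * klF ((i:ℝ)/n) p)
      ≤ 1 * Real.exp (-(n:ℝ) * klF ((i:ℝ)/n) p) :=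
        mul_le_mul_of_nonneg_right (bt_le_one hi hx0 hx1) (Real.exp_nonneg _)
    _ = _ := one_mul _

lemma bt_lower {n i : ℕ} {p : ℝ} (hn : 0 < n) (hi : i ≤ n) (hp : 0 < p) (hp' : p < 1) :
    Real.exp (-(n:ℝ) * klF ((i:ℝ)/n) p) ≤ ((n:ℝ)+1) * bt n i p := by
  rw [bt_eq_exp hn hi hp hp']
  calc Real.exp (-(n:ℝ) * klF ((i:ℝ)/n) p)
      = 1 * Real.exp (-(n:ℝ) * klF ((i:ℝ)/n) p) := (one_mul _).symm
    _ ≤ (((n:ℝ)+1) * bt n i ((i:ℝ)/n)) * Real.exp (-(n:ℝ) * klF ((i:ℝ)/n) p) :=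
        mul_le_mul_of_nonneg_right (one_le_bt hn hi) (Real.exp_nonneg _)
    _ = ((n:ℝ)+1) * (bt n i ((i:ℝ)/n) * Real.exp (-(n:ℝ) * klF ((i:ℝ)/n) p)) := by ring

section Analysis
variable {g₁ g₂ p₁ p₂ : ℝ}

/-- constrained minimum reduction -/
lemma constrained_ge (hg₁ : 0 < g₁) (hg₂ : 0 < g₂)
    (hp₁ : p₁ ∈ Set.Ioo (0:ℝ) 1) (hp₂ : p₂ ∈ Set.Ioo (0:ℝ) 1) (hpp : p₂ < p₁)
    {astar : ℝ} (hastar : astar ∈ Set.Icc (0:ℝ) 1)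
    (hmin : ∀ a ∈ Set.Icc (0:ℝ) 1, g₁ * klF astar p₁ + g₂ * klF astar p₂ ≤ g₁ * klF a p₁ + g₂ * klF a p₂)
    {x y : ℝ} (hx : x ∈ Set.Icc (0:ℝ) 1) (hy : y ∈ Set.Icc (0:ℝ) 1) (hxy : x ≤ y) :
    g₁ * klF astar p₁ + g₂ * klF astar p₂ ≤ g₁ * klF x p₁ + g₂ * klF y p₂ := by
  obtain ⟨hx0, hx1⟩ := hx
  obtain ⟨hy0, hy1⟩ := hy
  obtain ⟨hp₁0, hp₁1⟩ := hp₁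
  obtain ⟨hp₂0, hp₂1⟩ := hp₂
  -- choose a = clamp
  rcases le_or_gt y p₂ with h | h1
  · -- a = y : klF y p₁ ≤ klF x p₁ (both ≤ p₂ < p₁, anti), klF y p₂ = itself
    have h2 : klF y p₁ ≤ klF x p₁ :=
      (klF_strictAntiOn hp₁0 hp₁1).antitoneOn ⟨hx0, by linarith⟩ ⟨hy0, by linarith⟩ hxy
    have := hmin y ⟨hy0, hy1⟩
    nlinarith
  rcases le_or_gt p₁ x with h | h2
  · have h3 : klF x p₂ ≤ klF y p₂ :=
      (klF_strictMonoOn hp₂0 hp₂1).monotoneOn ⟨by linarith, hx1⟩ ⟨by linarith, hy1⟩ hxy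
    have := hmin x ⟨hx0, hx1⟩
    nlinarith
  · set a := max x p₂ with ha
    have hax : x ≤ a := le_max_left _ _
    have hap2 : p₂ ≤ a := le_max_right _ _
    have hap1 : a ≤ p₁ := max_le (le_of_lt h2) (le_of_lt hpp)
    have hay : a ≤ y := max_le hxy (le_of_lt h1)
    have h3 : klF a p₁ ≤ klF x p₁ :=
      (klF_strictAntiOn hp₁0 hp₁1).antitoneOn ⟨hx0, by linarith⟩ ⟨by linarith, hap1⟩ hax
    have h4 : klF a p₂ ≤ klF y p₂ :=
      (klF_strictMonoOn hp₂0 hp₂1).monotoneOn ⟨hap2, by linarith⟩ ⟨by linarith, hy1⟩ hay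
    have := hmin a ⟨by linarith, by linarith⟩
    nlinarith

end Analysis

section Limits
open Filter

lemma one_div_nat_tendsto : Tendsto (fun k : ℕ => 1/(k:ℝ)) atTop (nhds 0) :=
  tendsto_one_div_atTop_nhds_zero_nat

lemma floor_mul_le {g : ℝ} (hg : 0 ≤ g) (k : ℕ) : (⌊(k:ℝ)*g⌋₊ : ℝ) ≤ (k:ℝ)*g :=
  Nat.floor_le (by positivity)

lemma floor_mul_gt (g : ℝ) (k : ℕ) : (k:ℝ)*g - 1 < (⌊(k:ℝ)*g⌋₊ : ℝ) :=
  Nat.sub_one_lt_floor _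

lemma floor_div_tendsto {g : ℝ} (hg : 0 < g) :
    Tendsto (fun k : ℕ => (⌊(k:ℝ)*g⌋₊ : ℝ) / k) atTop (nhds g) := by
  apply tendsto_of_tendsto_of_tendsto_of_le_of_le' (g := fun k : ℕ => g - 1/(k:ℝ))
    (h := fun _ : ℕ => g)
  · simpa using tendsto_const_nhds.sub one_div_nat_tendsto
  · exact tendsto_const_nhds
  · filter_upwards [eventually_ge_atTop 1] with k hk
    have hk0 : (0:ℝ) < k := by exact_mod_cast hk
    rw [sub_le_iff_le_add, ← add_div, le_div_iff₀ hk0]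
    have := floor_mul_gt g k
    nlinarith
  · filter_upwards [eventually_ge_atTop 1] with k hk
    have hk0 : (0:ℝ) < k := by exact_mod_cast hk
    rw [div_le_iff₀ hk0]
    have := floor_mul_le hg.le k
    nlinarith

lemma floor_mul_tendsto_atTop {g : ℝ} (hg : 0 < g) :
    Tendsto (fun k : ℕ => ⌊(k:ℝ)*g⌋₊) atTop atTop := by
  apply tendsto_nat_floor_atTop.comp
  exact Tendsto.atTop_mul_const hg tendsto_natCast_atTop_atTop

lemma log_div_self_tendsto : Tendsto (fun x : ℝ => Real.log x / x) atTop (nhds 0) :=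
  Real.isLittleO_log_id_atTop.tendsto_div_nhds_zero

lemma log_succ_div_tendsto : Tendsto (fun k : ℕ => Real.log ((k:ℝ)+1) / k) atTop (nhds 0) := by
  have h1 : Tendsto (fun k : ℕ => Real.log ((k:ℝ)+1) / ((k:ℝ)+1)) atTop (nhds 0) :=
    log_div_self_tendsto.comp
      (tendsto_atTop_add_const_right atTop 1 tendsto_natCast_atTop_atTop)
  have h2 : Tendsto (fun k : ℕ => ((k:ℝ)+1) / k) atTop (nhds 1) := by
    have : Tendsto (fun k : ℕ => 1 + 1/(k:ℝ)) atTop (nhds 1) := by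
      simpa using tendsto_const_nhds.add one_div_nat_tendsto
    apply this.congr'
    filter_upwards [eventually_ge_atTop 1] with k hk
    have hk0 : (k:ℝ) ≠ 0 := by positivity
    field_simp
  have := h1.mul h2
  rw [zero_mul] at this
  apply this.congr'
  filter_upwards [eventually_ge_atTop 1] with k hk
  have hk0 : (k:ℝ) ≠ 0 := by
    have : (0:ℝ) < k := by exact_mod_cast hk
    exact ne_of_gt this
  field_simp

lemma log_bounded_div_tendsto {N : ℕ → ℕ} (hN : ∀ᶠ k in atTop, N k ≤ k) :
    Tendsto (fun k : ℕ => Real.log ((N k : ℝ)+1) / k) atTop (nhds 0) := by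
  apply tendsto_of_tendsto_of_tendsto_of_le_of_le' (g := fun _ : ℕ => (0:ℝ))
    (h := fun k : ℕ => Real.log ((k:ℝ)+1) / k)
  · exact tendsto_const_nhds
  · exact log_succ_div_tendsto
  · filter_upwards [eventually_ge_atTop 1] with k hk
    have hk0 : (0:ℝ) < k := by exact_mod_cast hk
    apply div_nonneg _ hk0.le
    apply Real.log_nonneg
    have : (0:ℝ) ≤ N k := Nat.cast_nonneg _
    linarith
  · filter_upwards [hN, eventually_ge_atTop 1] with k hk hk1
    have hk0 : (0:ℝ) < k := by exact_mod_cast hk1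
    have h2 : ((N k : ℝ)+1) ≤ (k:ℝ)+1 := by
      have : (N k : ℝ) ≤ (k:ℝ) := by exact_mod_cast hk
      linarith
    have h3 : Real.log ((N k : ℝ)+1) ≤ Real.log ((k:ℝ)+1) :=
      Real.log_le_log (by positivity) h2
    exact div_le_div_of_nonneg_right h3 hk0.le |>.trans_eq rfl

end Limits

noncomputable def Psum (p₁ p₂ : ℝ) (n₁ n₂ : ℕ) : ℝ :=
  ∑ i ∈ Finset.range (n₁ + 1), ∑ j ∈ Finset.range (n₂ + 1),
    bt n₁ i p₁ * bt n₂ j p₂ * (if (i : ℝ) / (n₁ : ℝ) ≤ (j : ℝ) / (n₂ : ℝ) then 1 else 0)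

lemma Psum_term_nonneg {p₁ p₂ : ℝ} (h₁ : 0 ≤ p₁) (h₁' : p₁ ≤ 1) (h₂ : 0 ≤ p₂) (h₂' : p₂ ≤ 1)
    (n₁ n₂ i j : ℕ) :
    0 ≤ bt n₁ i p₁ * bt n₂ j p₂ * (if (i : ℝ) / (n₁ : ℝ) ≤ (j : ℝ) / (n₂ : ℝ) then 1 else 0) := by
  apply mul_nonneg (mul_nonneg (bt_nonneg h₁ h₁') (bt_nonneg h₂ h₂'))
  split <;> norm_num

lemma Psum_ge_term {p₁ p₂ : ℝ} (h₁ : 0 ≤ p₁) (h₁' : p₁ ≤ 1) (h₂ : 0 ≤ p₂) (h₂' : p₂ ≤ 1)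
    {n₁ n₂ i j : ℕ} (hi : i ≤ n₁) (hj : j ≤ n₂)
    (hind : (i : ℝ) / (n₁ : ℝ) ≤ (j : ℝ) / (n₂ : ℝ)) :
    bt n₁ i p₁ * bt n₂ j p₂ ≤ Psum p₁ p₂ n₁ n₂ := by
  have hterm : bt n₁ i p₁ * bt n₂ j p₂
      = bt n₁ i p₁ * bt n₂ j p₂ * (if (i : ℝ) / (n₁ : ℝ) ≤ (j : ℝ) / (n₂ : ℝ) then 1 else 0) := by
    rw [if_pos hind, mul_one]
  rw [hterm, Psum]
  have hinner : bt n₁ i p₁ * bt n₂ j p₂ * (if (i : ℝ) / (n₁ : ℝ) ≤ (j : ℝ) / (n₂ : ℝ) then 1 else 0)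
      ≤ ∑ j' ∈ Finset.range (n₂ + 1),
        bt n₁ i p₁ * bt n₂ j' p₂ * (if (i : ℝ) / (n₁ : ℝ) ≤ (j' : ℝ) / (n₂ : ℝ) then 1 else 0) :=
    Finset.single_le_sum (f := fun j' => bt n₁ i p₁ * bt n₂ j' p₂ *
        (if (i : ℝ) / (n₁ : ℝ) ≤ (j' : ℝ) / (n₂ : ℝ) then 1 else 0))
      (fun j' _ => Psum_term_nonneg h₁ h₁' h₂ h₂' n₁ n₂ i j')
      (Finset.mem_range.2 (Nat.lt_succ_of_le hj))
  refine hinner.trans ?_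
  exact Finset.single_le_sum (f := fun i' => ∑ j' ∈ Finset.range (n₂ + 1),
      bt n₁ i' p₁ * bt n₂ j' p₂ * (if (i' : ℝ) / (n₁ : ℝ) ≤ (j' : ℝ) / (n₂ : ℝ) then 1 else 0))
    (fun i' _ => Finset.sum_nonneg (fun j' _ => Psum_term_nonneg h₁ h₁' h₂ h₂' n₁ n₂ i' j'))
    (Finset.mem_range.2 (Nat.lt_succ_of_le hi))

lemma Psum_le {p₁ p₂ B : ℝ} (hB : 0 ≤ B) {n₁ n₂ : ℕ}
    (h : ∀ i ≤ n₁, ∀ j ≤ n₂, (i : ℝ) / (n₁ : ℝ) ≤ (j : ℝ) / (n₂ : ℝ) →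
      bt n₁ i p₁ * bt n₂ j p₂ ≤ B) :
    Psum p₁ p₂ n₁ n₂ ≤ ((n₁ : ℝ) + 1) * ((n₂ : ℝ) + 1) * B := by
  have hterm : ∀ i ∈ Finset.range (n₁+1), ∀ j ∈ Finset.range (n₂+1),
      bt n₁ i p₁ * bt n₂ j p₂ * (if (i : ℝ) / (n₁ : ℝ) ≤ (j : ℝ) / (n₂ : ℝ) then 1 else 0) ≤ B := by
    intro i hi j hj
    split
    · rw [mul_one]
      exact h i (Nat.lt_succ_iff.1 (Finset.mem_range.1 hi)) j
        (Nat.lt_succ_iff.1 (Finset.mem_range.1 hj)) (by assumption)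
    · rw [mul_zero]; exact hB
  calc Psum p₁ p₂ n₁ n₂ ≤ ∑ i ∈ Finset.range (n₁+1), ∑ j ∈ Finset.range (n₂+1), B := by
        apply Finset.sum_le_sum
        intro i hi
        exact Finset.sum_le_sum (fun j hj => hterm i hi j hj)
    _ = ((n₁ : ℝ) + 1) * ((n₂ : ℝ) + 1) * B := by
        simp [Finset.sum_const, Finset.card_range]
        push_cast; ring

lemma bt_pos {n i : ℕ} {p : ℝ} (hi : i ≤ n) (hp : 0 < p) (hp' : p < 1) : 0 < bt n i p := by
  have h1 : (0:ℝ) < (n.choose i : ℝ) := by exact_mod_cast Nat.choose_pos hi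
  have h2 : (0:ℝ) < p ^ i := pow_pos hp i
  have h3 : (0:ℝ) < (1-p) ^ (n-i) := pow_pos (by linarith) _
  rw [bt]; positivity

set_option maxHeartbeats 2000000 in
lemma main_aux (g₁ g₂ p₁ p₂ : ℝ) (hg₁ : 0 < g₁) (hg₁' : g₁ ≤ 1) (hg₂ : 0 < g₂) (hg₂' : g₂ ≤ 1)
    (hp₁0 : 0 < p₁) (hp₁1 : p₁ < 1) (hp₂0 : 0 < p₂) (hp₂1 : p₂ < 1) (hpp : p₂ < p₁)
    (astar : ℝ) (hastar : astar ∈ Set.Icc (0:ℝ) 1)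
    (hmin : ∀ a ∈ Set.Icc (0:ℝ) 1,
      g₁ * klF astar p₁ + g₂ * klF astar p₂ ≤ g₁ * klF a p₁ + g₂ * klF a p₂) :
    Tendsto (fun k : ℕ => -(1/(k:ℝ)) * Real.log (Psum p₁ p₂ ⌊(k:ℝ)*g₁⌋₊ ⌊(k:ℝ)*g₂⌋₊)) atTop
      (nhds (g₁ * klF astar p₁ + g₂ * klF astar p₂)) := by
  obtain ⟨ha0, ha1⟩ := hastar
  set L : ℝ := g₁ * klF astar p₁ + g₂ * klF astar p₂ with hLdef
  set N₁ : ℕ → ℕ := fun k => ⌊(k:ℝ)*g₁⌋₊ with hN₁def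
  set N₂ : ℕ → ℕ := fun k => ⌊(k:ℝ)*g₂⌋₊ with hN₂def
  set M₁ : ℝ := -Real.log p₁ - Real.log (1 - p₁) with hM₁def
  set M₂ : ℝ := -Real.log p₂ - Real.log (1 - p₂) with hM₂def
  set C : ℝ := M₁ + M₂ with hCdef
  set i0 : ℕ → ℕ := fun k => ⌊(N₁ k : ℝ) * astar⌋₊ with hi0def
  set j0 : ℕ → ℕ := fun k => ⌈(N₂ k : ℝ) * astar⌉₊ with hj0def
  set x₁ : ℕ → ℝ := fun k => (i0 k : ℝ) / (N₁ k : ℝ) with hx₁def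
  set y₂ : ℕ → ℝ := fun k => (j0 k : ℝ) / (N₂ k : ℝ) with hy₂def
  -- basic tendsto facts
  have hN₁top : Tendsto N₁ atTop atTop := floor_mul_tendsto_atTop hg₁
  have hN₂top : Tendsto N₂ atTop atTop := floor_mul_tendsto_atTop hg₂
  have hN₁div : Tendsto (fun k : ℕ => (N₁ k : ℝ)/(k:ℝ)) atTop (nhds g₁) := floor_div_tendsto hg₁
  have hN₂div : Tendsto (fun k : ℕ => (N₂ k : ℝ)/(k:ℝ)) atTop (nhds g₂) := floor_div_tendsto hg₂
  have hinvN₁ : Tendsto (fun k : ℕ => 1/(N₁ k : ℝ)) atTop (nhds 0) :=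
    one_div_nat_tendsto.comp hN₁top
  have hinvN₂ : Tendsto (fun k : ℕ => 1/(N₂ k : ℝ)) atTop (nhds 0) :=
    one_div_nat_tendsto.comp hN₂top
  have hN₁lek : ∀ k : ℕ, N₁ k ≤ k := by
    intro k
    have h1 : (k:ℝ)*g₁ ≤ ((k:ℕ):ℝ) := mul_le_of_le_one_right (Nat.cast_nonneg k) hg₁'
    calc N₁ k ≤ ⌊((k:ℕ):ℝ)⌋₊ := Nat.floor_le_floor h1
      _ = k := Nat.floor_natCast k
  have hN₂lek : ∀ k : ℕ, N₂ k ≤ k := by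
    intro k
    have h1 : (k:ℝ)*g₂ ≤ ((k:ℕ):ℝ) := mul_le_of_le_one_right (Nat.cast_nonneg k) hg₂'
    calc N₂ k ≤ ⌊((k:ℕ):ℝ)⌋₊ := Nat.floor_le_floor h1
      _ = k := Nat.floor_natCast k
  have hlog₁ : Tendsto (fun k : ℕ => Real.log ((N₁ k : ℝ)+1) / (k:ℝ)) atTop (nhds 0) :=
    log_bounded_div_tendsto (Eventually.of_forall hN₁lek)
  have hlog₂ : Tendsto (fun k : ℕ => Real.log ((N₂ k : ℝ)+1) / (k:ℝ)) atTop (nhds 0) :=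
    log_bounded_div_tendsto (Eventually.of_forall hN₂lek)
  -- x₁ → astar, y₂ → astar
  have hx₁astar : ∀ k, 1 ≤ N₁ k → x₁ k ≤ astar := by
    intro k hk
    have hn : (0:ℝ) < N₁ k := by exact_mod_cast hk
    rw [hx₁def]
    rw [div_le_iff₀ hn]
    calc (i0 k : ℝ) ≤ (N₁ k : ℝ) * astar := Nat.floor_le (by positivity)
      _ = astar * N₁ k := by ring
  have hx₁low : ∀ k, 1 ≤ N₁ k → astar - 1/(N₁ k : ℝ) ≤ x₁ k := by
    intro k hk
    have hn : (0:ℝ) < N₁ k := by exact_mod_cast hk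
    have h2 : (N₁ k:ℝ)*astar - 1 < (i0 k : ℝ) := Nat.sub_one_lt_floor _
    rw [hx₁def, le_div_iff₀ hn]
    have e : (astar - 1/(N₁ k:ℝ)) * (N₁ k:ℝ) = (N₁ k:ℝ)*astar - 1 := by field_simp
    rw [e]; exact h2.le
  have hy₂astar : ∀ k, 1 ≤ N₂ k → astar ≤ y₂ k := by
    intro k hk
    have hn : (0:ℝ) < N₂ k := by exact_mod_cast hk
    rw [hy₂def, le_div_iff₀ hn]
    calc astar * N₂ k = (N₂ k : ℝ) * astar := by ring
      _ ≤ (j0 k : ℝ) := Nat.le_ceil _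
  have hy₂up : ∀ k, 1 ≤ N₂ k → y₂ k ≤ astar + 1/(N₂ k : ℝ) := by
    intro k hk
    have hn : (0:ℝ) < N₂ k := by exact_mod_cast hk
    rw [hy₂def, div_le_iff₀ hn]
    have := Nat.ceil_lt_add_one (show (0:ℝ) ≤ (N₂ k : ℝ) * astar by positivity)
    calc (j0 k : ℝ) ≤ (N₂ k : ℝ) * astar + 1 := le_of_lt this
      _ = (astar + 1/(N₂ k:ℝ)) * N₂ k := by field_simp
  have hx₁tend : Tendsto x₁ atTop (nhds astar) := by
    apply tendsto_of_tendsto_of_tendsto_of_le_of_le'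
      (g := fun k => astar - 1/(N₁ k : ℝ)) (h := fun _ => astar)
    · simpa using tendsto_const_nhds.sub hinvN₁
    · exact tendsto_const_nhds
    · filter_upwards [hN₁top.eventually_ge_atTop 1] with k hk using hx₁low k hk
    · filter_upwards [hN₁top.eventually_ge_atTop 1] with k hk using hx₁astar k hk
  have hy₂tend : Tendsto y₂ atTop (nhds astar) := by
    apply tendsto_of_tendsto_of_tendsto_of_le_of_le'
      (g := fun _ => astar) (h := fun k => astar + 1/(N₂ k : ℝ))
    · exact tendsto_const_nhds
    · simpa using tendsto_const_nhds.add hinvN₂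
    · filter_upwards [hN₂top.eventually_ge_atTop 1] with k hk using hy₂astar k hk
    · filter_upwards [hN₂top.eventually_ge_atTop 1] with k hk using hy₂up k hk
  have hkl₁ : Tendsto (fun k => klF (x₁ k) p₁) atTop (nhds (klF astar p₁)) :=
    ((continuous_klF p₁).tendsto astar).comp hx₁tend
  have hkl₂ : Tendsto (fun k => klF (y₂ k) p₂) atTop (nhds (klF astar p₂)) :=
    ((continuous_klF p₂).tendsto astar).comp hy₂tend
  -- upper and lower comparison sequences
  set U : ℕ → ℝ := fun k => ((N₁ k : ℝ)/(k:ℝ)) * klF (x₁ k) p₁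
      + ((N₂ k : ℝ)/(k:ℝ)) * klF (y₂ k) p₂
      + Real.log ((N₁ k : ℝ)+1)/(k:ℝ) + Real.log ((N₂ k : ℝ)+1)/(k:ℝ) with hUdef
  set V : ℕ → ℝ := fun k => L - C * (1/(k:ℝ))
      - Real.log ((N₁ k : ℝ)+1)/(k:ℝ) - Real.log ((N₂ k : ℝ)+1)/(k:ℝ) with hVdef
  have hUtend : Tendsto U atTop (nhds L) := by
    have := (((hN₁div.mul hkl₁).add (hN₂div.mul hkl₂)).add hlog₁).add hlog₂
    simpa [hLdef] using this
  have hVtend : Tendsto V atTop (nhds L) := by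
    have := ((tendsto_const_nhds (x := L) (f := atTop)).sub
      (one_div_nat_tendsto.const_mul C)).sub hlog₁ |>.sub hlog₂
    simpa [hVdef, one_div] using this
  apply tendsto_of_tendsto_of_tendsto_of_le_of_le' hVtend hUtend
  -- the two eventual inequalities
  · -- lower bound : V k ≤ -(1/k) log Psum
    filter_upwards [hN₁top.eventually_ge_atTop 1, hN₂top.eventually_ge_atTop 1,
      eventually_ge_atTop 1] with k hk₁ hk₂ hk
    have hn₁ : (0:ℝ) < N₁ k := by exact_mod_cast hk₁
    have hn₂ : (0:ℝ) < N₂ k := by exact_mod_cast hk₂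
    have hkR : (0:ℝ) < k := by exact_mod_cast hk
    have hi0le : i0 k ≤ N₁ k := by
      calc i0 k ≤ ⌊((N₁ k : ℕ):ℝ)⌋₊ :=
            Nat.floor_le_floor (mul_le_of_le_one_right (Nat.cast_nonneg _) ha1)
        _ = N₁ k := Nat.floor_natCast _
    have hj0le : j0 k ≤ N₂ k :=
      Nat.ceil_le.2 (mul_le_of_le_one_right (Nat.cast_nonneg _) ha1)
    have hxy : x₁ k ≤ y₂ k := (hx₁astar k hk₁).trans (hy₂astar k hk₂)
    have hterm : ∀ i ≤ N₁ k, ∀ j ≤ N₂ k, (i:ℝ)/(N₁ k : ℝ) ≤ (j:ℝ)/(N₂ k : ℝ) →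
        bt (N₁ k) i p₁ * bt (N₂ k) j p₂ ≤ Real.exp (-((k:ℝ)*L - C)) := by
      intro i hi j hj hind
      have hxm : (i:ℝ)/(N₁ k : ℝ) ∈ Set.Icc (0:ℝ) 1 :=
        ⟨by positivity, by rw [div_le_one hn₁]; exact_mod_cast hi⟩
      have hym : (j:ℝ)/(N₂ k : ℝ) ∈ Set.Icc (0:ℝ) 1 :=
        ⟨by positivity, by rw [div_le_one hn₂]; exact_mod_cast hj⟩
      set K₁ := klF ((i:ℝ)/(N₁ k : ℝ)) p₁ with hK₁def
      set K₂ := klF ((j:ℝ)/(N₂ k : ℝ)) p₂ with hK₂def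
      have h0₁ : 0 ≤ K₁ := klF_nonneg hxm.1 hxm.2 hp₁0 hp₁1
      have h0₂ : 0 ≤ K₂ := klF_nonneg hym.1 hym.2 hp₂0 hp₂1
      have hM₁' : K₁ ≤ M₁ := klF_le hxm.1 hxm.2 hp₁0 hp₁1
      have hM₂' : K₂ ≤ M₂ := klF_le hym.1 hym.2 hp₂0 hp₂1
      have hcon : L ≤ g₁ * K₁ + g₂ * K₂ :=
        constrained_ge hg₁ hg₂ ⟨hp₁0, hp₁1⟩ ⟨hp₂0, hp₂1⟩ hpp ⟨ha0, ha1⟩ hmin hxm hym hind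
      have hfl₁ : (k:ℝ)*g₁ - 1 < (N₁ k : ℝ) := Nat.sub_one_lt_floor _
      have hfl₂ : (k:ℝ)*g₂ - 1 < (N₂ k : ℝ) := Nat.sub_one_lt_floor _
      have hc' : (k:ℝ)*L ≤ (k:ℝ)*(g₁ * K₁ + g₂ * K₂) := mul_le_mul_of_nonneg_left hcon hkR.le
      have e₁ : ((k:ℝ)*g₁ - 1)*K₁ ≤ (N₁ k : ℝ)*K₁ := mul_le_mul_of_nonneg_right hfl₁.le h0₁
      have e₂ : ((k:ℝ)*g₂ - 1)*K₂ ≤ (N₂ k : ℝ)*K₂ := mul_le_mul_of_nonneg_right hfl₂.le h0₂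
      have hineq : (k:ℝ)*L - C ≤ (N₁ k : ℝ)*K₁ + (N₂ k : ℝ)*K₂ := by
        rw [hCdef]; nlinarith [hc', e₁, e₂, hM₁', hM₂']
      have hK₁b := bt_upper hk₁ hi hp₁0 hp₁1
      have hK₂b := bt_upper hk₂ hj hp₂0 hp₂1
      calc bt (N₁ k) i p₁ * bt (N₂ k) j p₂
          ≤ Real.exp (-(N₁ k : ℝ) * K₁) * Real.exp (-(N₂ k : ℝ) * K₂) :=
            mul_le_mul hK₁b hK₂b (bt_nonneg hp₂0.le hp₂1.le) (Real.exp_nonneg _)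
        _ = Real.exp (-((N₁ k : ℝ)*K₁ + (N₂ k : ℝ)*K₂)) := by
            rw [← Real.exp_add]; ring_nf
        _ ≤ Real.exp (-((k:ℝ)*L - C)) := Real.exp_le_exp.2 (by linarith)
    have hPup := Psum_le (Real.exp_nonneg _) hterm
    have hP0 : 0 < Psum p₁ p₂ (N₁ k) (N₂ k) :=
      lt_of_lt_of_le (mul_pos (bt_pos hi0le hp₁0 hp₁1) (bt_pos hj0le hp₂0 hp₂1))
        (Psum_ge_term hp₁0.le hp₁1.le hp₂0.le hp₂1.le hi0le hj0le hxy)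
    have hlogle : Real.log (Psum p₁ p₂ (N₁ k) (N₂ k))
        ≤ Real.log (((N₁ k : ℝ)+1) * ((N₂ k : ℝ)+1) * Real.exp (-((k:ℝ)*L - C))) :=
      Real.log_le_log hP0 hPup
    have h5 : -(1/(k:ℝ)) * Real.log (((N₁ k : ℝ)+1) * ((N₂ k : ℝ)+1) * Real.exp (-((k:ℝ)*L - C)))
        = V k := by
      rw [Real.log_mul (by positivity) (Real.exp_ne_zero _),
        Real.log_mul (by positivity) (by positivity), Real.log_exp, hVdef]
      field_simp
      ring
    have hc : -(1/(k:ℝ)) ≤ 0 := neg_nonpos_of_nonneg (le_of_lt (by positivity : (0:ℝ) < 1/(k:ℝ)))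
    calc V k = -(1/(k:ℝ)) * Real.log (((N₁ k : ℝ)+1) * ((N₂ k : ℝ)+1)
            * Real.exp (-((k:ℝ)*L - C))) := h5.symm
      _ ≤ -(1/(k:ℝ)) * Real.log (Psum p₁ p₂ (N₁ k) (N₂ k)) :=
          mul_le_mul_of_nonpos_left hlogle hc
  · -- upper bound : -(1/k) log Psum ≤ U k
    filter_upwards [hN₁top.eventually_ge_atTop 1, hN₂top.eventually_ge_atTop 1,
      eventually_ge_atTop 1] with k hk₁ hk₂ hk
    have hn₁ : (0:ℝ) < N₁ k := by exact_mod_cast hk₁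
    have hn₂ : (0:ℝ) < N₂ k := by exact_mod_cast hk₂
    have hkR : (0:ℝ) < k := by exact_mod_cast hk
    have hi0le : i0 k ≤ N₁ k := by
      calc i0 k ≤ ⌊((N₁ k : ℕ):ℝ)⌋₊ :=
            Nat.floor_le_floor (mul_le_of_le_one_right (Nat.cast_nonneg _) ha1)
        _ = N₁ k := Nat.floor_natCast _
    have hj0le : j0 k ≤ N₂ k :=
      Nat.ceil_le.2 (mul_le_of_le_one_right (Nat.cast_nonneg _) ha1)
    have hxy : x₁ k ≤ y₂ k := (hx₁astar k hk₁).trans (hy₂astar k hk₂)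
    set D : ℝ := ((N₁ k : ℝ)+1) * ((N₂ k : ℝ)+1) with hDdef
    have hD0 : 0 < D := by rw [hDdef]; positivity
    set E : ℝ := -((N₁ k : ℝ) * klF (x₁ k) p₁) - (N₂ k : ℝ) * klF (y₂ k) p₂ with hEdef
    have hlow1 := bt_lower hk₁ hi0le hp₁0 hp₁1
    have hlow2 := bt_lower hk₂ hj0le hp₂0 hp₂1
    have hprod : Real.exp E ≤ D * (bt (N₁ k) (i0 k) p₁ * bt (N₂ k) (j0 k) p₂) := by
      have := mul_le_mul hlow1 hlow2 (Real.exp_nonneg _)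
        (mul_nonneg (by positivity) (bt_nonneg hp₁0.le hp₁1.le))
      calc Real.exp E = Real.exp (-(N₁ k : ℝ) * klF ((i0 k : ℝ)/(N₁ k : ℝ)) p₁)
            * Real.exp (-(N₂ k : ℝ) * klF ((j0 k : ℝ)/(N₂ k : ℝ)) p₂) := by
            rw [← Real.exp_add, hEdef]; simp only [hx₁def, hy₂def]; ring_nf
        _ ≤ (((N₁ k : ℝ)+1) * bt (N₁ k) (i0 k) p₁) * (((N₂ k : ℝ)+1) * bt (N₂ k) (j0 k) p₂) :=
            this
        _ = D * (bt (N₁ k) (i0 k) p₁ * bt (N₂ k) (j0 k) p₂) := by rw [hDdef]; ring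
    have hPlow : Real.exp E / D ≤ Psum p₁ p₂ (N₁ k) (N₂ k) := by
      rw [div_le_iff₀ hD0]
      calc Real.exp E ≤ D * (bt (N₁ k) (i0 k) p₁ * bt (N₂ k) (j0 k) p₂) := hprod
        _ ≤ D * Psum p₁ p₂ (N₁ k) (N₂ k) := by
            apply mul_le_mul_of_nonneg_left _ hD0.le
            exact Psum_ge_term hp₁0.le hp₁1.le hp₂0.le hp₂1.le hi0le hj0le hxy
        _ = Psum p₁ p₂ (N₁ k) (N₂ k) * D := by ring
    have hlo0 : 0 < Real.exp E / D := div_pos (Real.exp_pos _) hD0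
    have hloggt : Real.log (Real.exp E / D) ≤ Real.log (Psum p₁ p₂ (N₁ k) (N₂ k)) :=
      Real.log_le_log hlo0 hPlow
    have h6 : -(1/(k:ℝ)) * Real.log (Real.exp E / D) = U k := by
      rw [Real.log_div (Real.exp_ne_zero _) (ne_of_gt hD0), Real.log_exp, hDdef,
        Real.log_mul (by positivity) (by positivity), hEdef, hUdef]
      field_simp
      ring
    have hc : -(1/(k:ℝ)) ≤ 0 := neg_nonpos_of_nonneg (le_of_lt (by positivity : (0:ℝ) < 1/(k:ℝ)))
    calc -(1/(k:ℝ)) * Real.log (Psum p₁ p₂ (N₁ k) (N₂ k))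
        ≤ -(1/(k:ℝ)) * Real.log (Real.exp E / D) := mul_le_mul_of_nonpos_left hloggt hc
      _ = U k := h6

/-- **Large deviations rate for misranking two binomial scores.**
Let `g₁, g₂ ∈ (0,1]`, `p₁ > p₂` in `(0,1)`.  With `S₁ₖ ~ Binomial(⌊k g₁⌋, p₁)` and
`S₂ₖ ~ Binomial(⌊k g₂⌋, p₂)` independent, the probability
`P(S₁ₖ/⌊k g₁⌋ ≤ S₂ₖ/⌊k g₂⌋)` — written out explicitly as a double sum over the two binomial
distributions — satisfies
`-(1/k) log P → inf_{a ∈ [0,1]} { g₁ KL(a‖p₁) + g₂ KL(a‖p₂) }`. -/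
theorem binomial_misranking_rate
    (g₁ g₂ p₁ p₂ : ℝ) (hg₁ : 0 < g₁) (hg₁' : g₁ ≤ 1) (hg₂ : 0 < g₂) (hg₂' : g₂ ≤ 1)
    (hp₁ : p₁ ∈ Set.Ioo (0 : ℝ) 1) (hp₂ : p₂ ∈ Set.Ioo (0 : ℝ) 1) (hpp : p₂ < p₁) :
    Tendsto
      (fun k : ℕ =>
        -(1 / (k : ℝ)) * Real.log
          (∑ i ∈ Finset.range (⌊(k : ℝ) * g₁⌋₊ + 1),
            ∑ j ∈ Finset.range (⌊(k : ℝ) * g₂⌋₊ + 1),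
              (((⌊(k : ℝ) * g₁⌋₊).choose i : ℝ) * p₁ ^ i *
                  (1 - p₁) ^ (⌊(k : ℝ) * g₁⌋₊ - i)) *
                (((⌊(k : ℝ) * g₂⌋₊).choose j : ℝ) * p₂ ^ j *
                  (1 - p₂) ^ (⌊(k : ℝ) * g₂⌋₊ - j)) *
                (if (i : ℝ) / (⌊(k : ℝ) * g₁⌋₊ : ℝ) ≤ (j : ℝ) / (⌊(k : ℝ) * g₂⌋₊ : ℝ)
                  then 1 else 0)))
      atTop
      (nhds (⨅ a : Set.Icc (0 : ℝ) 1, g₁ * klBer a p₁ + g₂ * klBer a p₂)) := by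

  obtain ⟨hp₁0, hp₁1⟩ := hp₁
  obtain ⟨hp₂0, hp₂1⟩ := hp₂
  have hFcont : Continuous (fun a => g₁ * klF a p₁ + g₂ * klF a p₂) :=
    (continuous_const.mul (continuous_klF p₁)).add (continuous_const.mul (continuous_klF p₂))
  obtain ⟨astar, hastar, hminOn⟩ := isCompact_Icc.exists_isMinOn
    (Set.nonempty_Icc.2 zero_le_one) hFcont.continuousOn
  have hmin : ∀ a ∈ Set.Icc (0:ℝ) 1,
      g₁ * klF astar p₁ + g₂ * klF astar p₂ ≤ g₁ * klF a p₁ + g₂ * klF a p₂ :=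
    fun a ha => isMinOn_iff.1 hminOn a ha
  have hInf : (⨅ a : Set.Icc (0:ℝ) 1, g₁ * klBer a p₁ + g₂ * klBer a p₂)
      = g₁ * klF astar p₁ + g₂ * klF astar p₂ := by
    have hEq : ∀ a : Set.Icc (0:ℝ) 1,
        g₁ * klBer (a:ℝ) p₁ + g₂ * klBer (a:ℝ) p₂ = g₁ * klF (a:ℝ) p₁ + g₂ * klF (a:ℝ) p₂ := by
      rintro ⟨a, ha0, ha1⟩
      rw [klBer_eq_klF ha0 ha1 hp₁0 hp₁1, klBer_eq_klF ha0 ha1 hp₂0 hp₂1]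
    rw [iInf_congr hEq]
    apply le_antisymm
    · apply ciInf_le ?_ (⟨astar, hastar⟩ : Set.Icc (0:ℝ) 1)
      refine ⟨g₁ * klF astar p₁ + g₂ * klF astar p₂, ?_⟩
      rintro v ⟨⟨a, ha⟩, rfl⟩
      exact hmin a ha
    · exact le_ciInf (fun a => hmin a a.2)
  rw [hInf]
  exact main_aux g₁ g₂ p₁ p₂ hg₁ hg₁' hg₂ hg₂' hp₁0 hp₁1 hp₂0 hp₂1 hpp astar hastar hmin
end

section
/- For all g₁, g₂ > 0 and all t₁, t₂ ∈ (0,1), the infimum inf_{a ∈ [0,1]} { g₁·KL(a‖t₁) + g₂·KL(a‖t₂) } equals −(g₁+g₂)·log[ (1−t₁)^{g₁/(g₁+g₂)}·(1−t₂)^{g₂/(g₁+g₂)} + t₁^{g₁/(g₁+g₂)}·t₂^{g₂/(g₁+g₂)} ]. -/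
lemma mul_log_div_aux (a t : ℝ) (ha : 0 ≤ a) (ht : 0 < t) :
    a * Real.log (a / t) = a * Real.log a - a * Real.log t := by
  rcases eq_or_lt_of_le ha with h | h
  · simp [← h]
  · rw [Real.log_div (ne_of_gt h) (ne_of_gt ht)]; ring

lemma klBer_nonneg {a b : ℝ} (ha : a ∈ Set.Icc (0:ℝ) 1) (hb : b ∈ Set.Ioo (0:ℝ) 1) :
    0 ≤ klBer a b := by
  obtain ⟨ha0, ha1⟩ := ha
  obtain ⟨hb0, hb1⟩ := hb
  have h1b : (0:ℝ) < 1 - b := by linarith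
  rcases eq_or_lt_of_le ha0 with h0 | h0
  · have : klBer a b = - Real.log (1 - b) := by
      simp [klBer, ← h0]
    rw [this]
    simp only [neg_nonneg]
    exact Real.log_nonpos (by linarith) (by linarith)
  rcases eq_or_lt_of_le ha1 with h1 | h1
  · have : klBer a b = - Real.log b := by
      simp [klBer, h1]
    rw [this]
    simp only [neg_nonneg]
    exact Real.log_nonpos (by linarith) (by linarith)
  · have h1a : (0:ℝ) < 1 - a := by linarith
    have l1 := Real.log_le_sub_one_of_pos (show 0 < b / a by positivity)
    have l2 := Real.log_le_sub_one_of_pos (show 0 < (1 - b) / (1 - a) by positivity)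
    rw [Real.log_div (ne_of_gt hb0) (ne_of_gt h0)] at l1
    rw [Real.log_div (ne_of_gt h1b) (ne_of_gt h1a)] at l2
    unfold klBer
    rw [Real.log_div (ne_of_gt h0) (ne_of_gt hb0),
        Real.log_div (ne_of_gt h1a) (ne_of_gt h1b)]
    have m1 : a * (Real.log b - Real.log a) ≤ a * (b / a - 1) :=
      mul_le_mul_of_nonneg_left l1 h0.le
    have m2 : (1 - a) * (Real.log (1 - b) - Real.log (1 - a))
        ≤ (1 - a) * ((1 - b) / (1 - a) - 1) :=
      mul_le_mul_of_nonneg_left l2 h1a.le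
    have e1 : a * (b / a - 1) = b - a := by field_simp
    have e2 : (1 - a) * ((1 - b) / (1 - a) - 1) = a - b := by field_simp; ring
    rw [e1] at m1
    rw [e2] at m2
    nlinarith [m1, m2]

/-- **Closed form for the pairwise large-deviations rate.**
For `g₁, g₂ > 0` and `t₁, t₂ ∈ (0,1)`,
`inf_{a ∈ [0,1]} { g₁ KL(a‖t₁) + g₂ KL(a‖t₂) }
  = -(g₁+g₂) log[(1-t₁)^{g₁/(g₁+g₂)} (1-t₂)^{g₂/(g₁+g₂)} + t₁^{g₁/(g₁+g₂)} t₂^{g₂/(g₁+g₂)}]`. -/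
theorem inf_weighted_klBer_eq
    (g₁ g₂ t₁ t₂ : ℝ) (hg₁ : 0 < g₁) (hg₂ : 0 < g₂)
    (ht₁ : t₁ ∈ Set.Ioo (0 : ℝ) 1) (ht₂ : t₂ ∈ Set.Ioo (0 : ℝ) 1) :
    (⨅ a : Set.Icc (0 : ℝ) 1, g₁ * klBer a t₁ + g₂ * klBer a t₂)
      = -(g₁ + g₂) *
        Real.log ((1 - t₁) ^ (g₁ / (g₁ + g₂)) * (1 - t₂) ^ (g₂ / (g₁ + g₂))
          + t₁ ^ (g₁ / (g₁ + g₂)) * t₂ ^ (g₂ / (g₁ + g₂))) := by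
  obtain ⟨ht₁0, ht₁1⟩ := ht₁
  obtain ⟨ht₂0, ht₂1⟩ := ht₂
  have h1t₁ : (0:ℝ) < 1 - t₁ := by linarith
  have h1t₂ : (0:ℝ) < 1 - t₂ := by linarith
  have hG : (0:ℝ) < g₁ + g₂ := by linarith
  set p : ℝ := t₁ ^ (g₁ / (g₁ + g₂)) * t₂ ^ (g₂ / (g₁ + g₂)) with hpdef
  set q : ℝ := (1 - t₁) ^ (g₁ / (g₁ + g₂)) * (1 - t₂) ^ (g₂ / (g₁ + g₂)) with hqdef
  have hp0 : 0 < p := mul_pos (Real.rpow_pos_of_pos ht₁0 _) (Real.rpow_pos_of_pos ht₂0 _)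
  have hq0 : 0 < q := mul_pos (Real.rpow_pos_of_pos h1t₁ _) (Real.rpow_pos_of_pos h1t₂ _)
  set S : ℝ := q + p with hSdef
  have hS0 : 0 < S := by positivity
  have hstar0 : 0 < p / S := by positivity
  have hstar1 : p / S < 1 := by
    rw [div_lt_one hS0]; linarith
  have h1star : 1 - p / S = q / S := by field_simp; ring
  -- log identities
  have hA : g₁ * Real.log t₁ + g₂ * Real.log t₂
      = (g₁ + g₂) * Real.log (p / S) + (g₁ + g₂) * Real.log S := by
    rw [Real.log_div (ne_of_gt hp0) (ne_of_gt hS0), hpdef,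
        Real.log_mul (ne_of_gt (Real.rpow_pos_of_pos ht₁0 _)) (ne_of_gt (Real.rpow_pos_of_pos ht₂0 _)),
        Real.log_rpow ht₁0, Real.log_rpow ht₂0]
    field_simp; ring
  have hB : g₁ * Real.log (1 - t₁) + g₂ * Real.log (1 - t₂)
      = (g₁ + g₂) * Real.log (q / S) + (g₁ + g₂) * Real.log S := by
    rw [Real.log_div (ne_of_gt hq0) (ne_of_gt hS0), hqdef,
        Real.log_mul (ne_of_gt (Real.rpow_pos_of_pos h1t₁ _)) (ne_of_gt (Real.rpow_pos_of_pos h1t₂ _)),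
        Real.log_rpow h1t₁, Real.log_rpow h1t₂]
    field_simp; ring
  -- the key pointwise identity
  have key : ∀ a : ℝ, a ∈ Set.Icc (0:ℝ) 1 →
      g₁ * klBer a t₁ + g₂ * klBer a t₂
        = (g₁ + g₂) * klBer a (p / S) - (g₁ + g₂) * Real.log S := by
    rintro a ⟨ha0, ha1⟩
    have ha1' : (0:ℝ) ≤ 1 - a := by linarith
    unfold klBer
    rw [h1star,
        mul_log_div_aux a t₁ ha0 ht₁0, mul_log_div_aux a t₂ ha0 ht₂0,
        mul_log_div_aux a (p / S) ha0 hstar0,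
        mul_log_div_aux (1 - a) (1 - t₁) ha1' h1t₁,
        mul_log_div_aux (1 - a) (1 - t₂) ha1' h1t₂,
        mul_log_div_aux (1 - a) (q / S) ha1' (by positivity)]
    linear_combination (-a) * hA + (a - 1) * hB
  have astar_mem : p / S ∈ Set.Icc (0:ℝ) 1 := ⟨hstar0.le, hstar1.le⟩
  have hzero : klBer (p / S) (p / S) = 0 := by
    unfold klBer
    rw [div_self (ne_of_gt hstar0), h1star, div_self (by positivity : (q / S : ℝ) ≠ 0)]
    simp
  -- lower bound for all points
  have lb : ∀ x : Set.Icc (0:ℝ) 1,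
      -(g₁ + g₂) * Real.log S ≤ g₁ * klBer x t₁ + g₂ * klBer x t₂ := by
    intro x
    rw [key x x.2]
    have h := klBer_nonneg x.2 ⟨hstar0, hstar1⟩
    nlinarith [mul_nonneg hG.le h]
  have bdd : BddBelow (Set.range fun a : Set.Icc (0:ℝ) 1 =>
      g₁ * klBer a t₁ + g₂ * klBer a t₂) := by
    refine ⟨-(g₁ + g₂) * Real.log S, ?_⟩
    rintro _ ⟨x, rfl⟩
    exact lb x
  apply le_antisymm
  · calc (⨅ a : Set.Icc (0 : ℝ) 1, g₁ * klBer a t₁ + g₂ * klBer a t₂)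
        ≤ g₁ * klBer (⟨p / S, astar_mem⟩ : Set.Icc (0:ℝ) 1) t₁
          + g₂ * klBer (⟨p / S, astar_mem⟩ : Set.Icc (0:ℝ) 1) t₂ := ciInf_le bdd _
      _ = -(g₁ + g₂) * Real.log S := by
          rw [key _ astar_mem, hzero]; ring
  · exact le_ciInf lb
end

section
/- For all g₁, g₂ > 0 and all t₁, t₂ ∈ (0,1), the function a ↦ g₁·KL(a‖t₁) + g₂·KL(a‖t₂) on [0,1] attains its infimum at the unique point a* = c/(1+c), where c = [ (t₁/(1−t₁))^{g₁} · (t₂/(1−t₂))^{g₂} ]^{1/(g₁+g₂)}. -/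
lemma mul_log_div' (a b : ℝ) (hb : b ≠ 0) :
    a * Real.log (a / b) = a * Real.log a - a * Real.log b := by
  rcases eq_or_ne a 0 with rfl | ha
  · simp
  · rw [Real.log_div ha hb]; ring

lemma klBer_pos {a b : ℝ} (ha : a ∈ Set.Icc (0:ℝ) 1) (hb : b ∈ Set.Ioo (0:ℝ) 1)
    (hab : a ≠ b) : 0 < klBer a b := by
  obtain ⟨hb0, hb1⟩ := hb
  obtain ⟨ha0, ha1⟩ := ha
  rcases eq_or_lt_of_le ha0 with h0 | h0
  · -- a = 0
    have : klBer a b = Real.log (1 / (1 - b)) := by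
      simp [klBer, ← h0]
    rw [this, one_div, Real.log_inv, neg_pos]
    exact Real.log_neg (by linarith) (by linarith)
  rcases eq_or_lt_of_le ha1 with h1 | h1
  · -- a = 1
    have : klBer a b = Real.log (1 / b) := by
      simp [klBer, h1]
    rw [this, one_div, Real.log_inv, neg_pos]
    exact Real.log_neg hb0 hb1
  · have hne1 : b / a ≠ 1 := by
      intro h; apply hab
      field_simp at h; linarith
    have hne2 : (1 - b) / (1 - a) ≠ 1 := by
      intro h; apply hab
      rw [div_eq_one_iff_eq (by linarith : (1:ℝ) - a ≠ 0)] at h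
      linarith
    have l1 : Real.log (b / a) < b / a - 1 :=
      Real.log_lt_sub_one_of_pos (div_pos hb0 h0) hne1
    have l2 : Real.log ((1 - b) / (1 - a)) < (1 - b) / (1 - a) - 1 :=
      Real.log_lt_sub_one_of_pos (div_pos (by linarith) (by linarith)) hne2
    have e1 : Real.log (a / b) = -Real.log (b / a) := by
      rw [← Real.log_inv, inv_div]
    have e2 : Real.log ((1 - a) / (1 - b)) = -Real.log ((1 - b) / (1 - a)) := by
      rw [← Real.log_inv, inv_div]
    have k1 : a - b < a * Real.log (a / b) := by
      have := mul_lt_mul_of_pos_left l1 h0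
      rw [mul_sub, mul_div_cancel₀ _ h0.ne'] at this
      rw [e1]; nlinarith
    have k2 : b - a < (1 - a) * Real.log ((1 - a) / (1 - b)) := by
      have h1a : (0:ℝ) < 1 - a := by linarith
      have := mul_lt_mul_of_pos_left l2 h1a
      rw [mul_sub, mul_div_cancel₀ _ h1a.ne'] at this
      rw [e2]; nlinarith
    unfold klBer; linarith

lemma klBer_self {b : ℝ} (hb0 : 0 < b) (hb1 : b < 1) : klBer b b = 0 := by
  simp [klBer, div_self hb0.ne', div_self (by linarith : (1:ℝ) - b ≠ 0)]

/-- **Unique minimizer of the weighted KL sum.**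
For `g₁, g₂ > 0` and `t₁, t₂ ∈ (0,1)`, the function `a ↦ g₁ KL(a‖t₁) + g₂ KL(a‖t₂)`
on `[0,1]` attains its infimum at the unique point `a* = c/(1+c)` with
`c = [(t₁/(1-t₁))^{g₁} (t₂/(1-t₂))^{g₂}]^{1/(g₁+g₂)}`. -/
theorem weighted_klBer_unique_minimizer
    (g₁ g₂ t₁ t₂ : ℝ) (hg₁ : 0 < g₁) (hg₂ : 0 < g₂)
    (ht₁ : t₁ ∈ Set.Ioo (0 : ℝ) 1) (ht₂ : t₂ ∈ Set.Ioo (0 : ℝ) 1)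
    (c astar : ℝ)
    (hc : c = ((t₁ / (1 - t₁)) ^ g₁ * (t₂ / (1 - t₂)) ^ g₂) ^ (1 / (g₁ + g₂)))
    (ha : astar = c / (1 + c)) :
    astar ∈ Set.Icc (0 : ℝ) 1 ∧
      ∀ a ∈ Set.Icc (0 : ℝ) 1, a ≠ astar →
        g₁ * klBer astar t₁ + g₂ * klBer astar t₂ <
          g₁ * klBer a t₁ + g₂ * klBer a t₂ := by
  obtain ⟨ht₁0, ht₁1⟩ := ht₁
  obtain ⟨ht₂0, ht₂1⟩ := ht₂
  have hx₁ : (0:ℝ) < t₁ / (1 - t₁) := div_pos ht₁0 (by linarith)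
  have hx₂ : (0:ℝ) < t₂ / (1 - t₂) := div_pos ht₂0 (by linarith)
  have hprod : (0:ℝ) < (t₁ / (1 - t₁)) ^ g₁ * (t₂ / (1 - t₂)) ^ g₂ :=
    mul_pos (Real.rpow_pos_of_pos hx₁ _) (Real.rpow_pos_of_pos hx₂ _)
  have hc0 : 0 < c := hc ▸ Real.rpow_pos_of_pos hprod _
  have h1c : (0:ℝ) < 1 + c := by linarith
  have has0 : 0 < astar := ha ▸ div_pos hc0 h1c
  have has1 : astar < 1 := by rw [ha, div_lt_one h1c]; linarith
  have h1as : (0:ℝ) < 1 - astar := by linarith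
  -- key log identity
  have hkey : astar / (1 - astar) = c := by
    rw [ha]; field_simp; ring
  have hlogc : (g₁ + g₂) * Real.log c = g₁ * Real.log (t₁ / (1 - t₁)) + g₂ * Real.log (t₂ / (1 - t₂)) := by
    rw [hc, Real.log_rpow hprod,
      Real.log_mul (Real.rpow_pos_of_pos hx₁ _).ne' (Real.rpow_pos_of_pos hx₂ _).ne',
      Real.log_rpow hx₁, Real.log_rpow hx₂]
    field_simp
  have hlogastar : Real.log c = Real.log astar - Real.log (1 - astar) := by
    rw [← hkey, Real.log_div has0.ne' h1as.ne']
  have hPQ : (g₁ + g₂) * Real.log astar - g₁ * Real.log t₁ - g₂ * Real.log t₂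
      = (g₁ + g₂) * Real.log (1 - astar) - g₁ * Real.log (1 - t₁) - g₂ * Real.log (1 - t₂) := by
    have e1 : Real.log (t₁ / (1 - t₁)) = Real.log t₁ - Real.log (1 - t₁) :=
      Real.log_div ht₁0.ne' (by linarith)
    have e2 : Real.log (t₂ / (1 - t₂)) = Real.log t₂ - Real.log (1 - t₂) :=
      Real.log_div ht₂0.ne' (by linarith)
    rw [hlogastar, e1, e2] at hlogc
    linarith
  set Q : ℝ := (g₁ + g₂) * Real.log (1 - astar) - g₁ * Real.log (1 - t₁) - g₂ * Real.log (1 - t₂)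
    with hQ
  have ident : ∀ a : ℝ,
      g₁ * klBer a t₁ + g₂ * klBer a t₂ = (g₁ + g₂) * klBer a astar + Q := by
    intro a
    unfold klBer
    rw [mul_log_div' a t₁ ht₁0.ne', mul_log_div' a t₂ ht₂0.ne',
      mul_log_div' a astar has0.ne',
      mul_log_div' (1 - a) (1 - t₁) (by linarith : (1:ℝ) - t₁ ≠ 0),
      mul_log_div' (1 - a) (1 - t₂) (by linarith : (1:ℝ) - t₂ ≠ 0),
      mul_log_div' (1 - a) (1 - astar) h1as.ne']
    have h' : a * ((g₁ + g₂) * Real.log astar - g₁ * Real.log t₁ - g₂ * Real.log t₂)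
        = a * Q := by rw [hPQ]
    rw [hQ] at h' ⊢
    nlinarith [h']
  refine ⟨⟨has0.le, has1.le⟩, fun a haI hne => ?_⟩
  have h1 := ident a
  have h2 := ident astar
  rw [klBer_self has0 has1] at h2
  have hpos : 0 < klBer a astar := klBer_pos haI ⟨has0, has1⟩ hne
  have : 0 < (g₁ + g₂) * klBer a astar := mul_pos (by linarith) hpos
  rw [h1, h2]
  linarith
end

section
/- Let M ≥ 3 and let g₁,…,g_{M−2} > 0. Then there exists a unique equalized solution t* = (t*₀,…,t*_{M−1}), and t* maximizes the maximin objective R(t) = min{ −g₁·log(1−t₁), min_{2 ≤ i ≤ M−2} r_{g_{i−1},g_i}(t_{i−1},t_i), −g_{M−2}·log(t_{M−2}) } over all vectors t with 0 = t₀ ≤ t₁ ≤ ⋯ ≤ t_{M−1} = 1; moreover, any maximizer of R over this set equals t*. -/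
/-- The pairwise large-deviations rate
`r_{g,h}(p,q) = -(g+h)·log[(1-p)^{g/(g+h)}·(1-q)^{h/(g+h)} + p^{g/(g+h)}·q^{h/(g+h)}]`. -/
noncomputable def pairRate (g h p q : ℝ) : ℝ :=
  -(g + h) *
    Real.log ((1 - p) ^ (g / (g + h)) * (1 - q) ^ (h / (g + h))
      + p ^ (g / (g + h)) * q ^ (h / (g + h)))

/-- The `i`-th rate (for `1 ≤ i ≤ M-1`) of a level vector `t` with weights `g`:
`r₁ = -g₁·log(1-t₁)`, `rᵢ = r_{g_{i-1},g_i}(t_{i-1},t_i)` for `2 ≤ i ≤ M-2`, and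
`r_{M-1} = -g_{M-2}·log(t_{M-2})`. -/
noncomputable def rateAt (M : ℕ) (g t : ℕ → ℝ) (i : ℕ) : ℝ :=
  if i = 1 then -(g 1) * Real.log (1 - t 1)
  else if i = M - 1 then -(g (M - 2)) * Real.log (t (M - 2))
  else pairRate (g (i - 1)) (g i) (t (i - 1)) (t i)

/-- `t` is an equalized solution with `M` levels for the weights `g`, with common rate `r`:
`t₀ = 0 < t₁ < ⋯ < t_{M-2} < 1 = t_{M-1}` and all of the `M-1` rates equal `r`. -/
def IsEqualizedWithRate (M : ℕ) (g t : ℕ → ℝ) (r : ℝ) : Prop :=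
  t 0 = 0 ∧ t (M - 1) = 1 ∧ (∀ i, i < M - 1 → t i < t (i + 1)) ∧
    ∀ i, 1 ≤ i → i ≤ M - 1 → rateAt M g t i = r

/-- `t` is an equalized solution with `M` levels for the weights `g`. -/
def IsEqualizedSol (M : ℕ) (g t : ℕ → ℝ) : Prop :=
  ∃ r, IsEqualizedWithRate M g t r

/-- The maximin objective `R(t)`: the minimum of the `M-1` rates of the level vector `t`. -/
noncomputable def minRate (M : ℕ) (g t : ℕ → ℝ) : ℝ :=
  sInf {x | ∃ i, 1 ≤ i ∧ i ≤ M - 1 ∧ x = rateAt M g t i}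

open Real Set



noncomputable def phi (a p q : ℝ) : ℝ :=
  (1 - p) ^ a * (1 - q) ^ (1 - a) + p ^ a * q ^ (1 - a)

section phi
variable {a p q : ℝ}

lemma phi_self (ha : 0 < a) (ha1 : a < 1) (hp0 : 0 ≤ p) (hp1 : p ≤ 1) : phi a p p = 1 := by
  rcases eq_or_lt_of_le hp0 with h0 | h0
  · simp [phi, ← h0, Real.zero_rpow (ne_of_gt ha),
      Real.zero_rpow (by linarith : (1:ℝ) - a ≠ 0)]
  rcases eq_or_lt_of_le hp1 with h1 | h1
  · simp [phi, h1, Real.zero_rpow (ne_of_gt ha),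
      Real.zero_rpow (by linarith : (1:ℝ) - a ≠ 0)]
  · unfold phi
    rw [← Real.rpow_add (by linarith) a (1-a), ← Real.rpow_add h0 a (1-a)]
    norm_num

lemma phi_one (ha1 : a < 1) (hp0 : 0 ≤ p) : phi a p 1 = p ^ a := by
  simp [phi, Real.zero_rpow (by linarith : (1:ℝ) - a ≠ 0)]

lemma phi_pos (hp1 : p ≤ 1) (hq1 : q ≤ 1) (hp : 0 < p) (hq : 0 < q) : 0 < phi a p q := by
  have h1 : 0 ≤ (1 - p) ^ a * (1 - q) ^ (1 - a) :=
    mul_nonneg (Real.rpow_nonneg (by linarith) a) (Real.rpow_nonneg (by linarith) (1 - a))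
  have h2 : 0 < p ^ a * q ^ (1 - a) := by
    have := Real.rpow_pos_of_pos hp a
    have := Real.rpow_pos_of_pos hq (1 - a)
    positivity
  unfold phi; linarith

lemma phi_continuous_q (ha : 0 ≤ a) (ha1 : a ≤ 1) : Continuous (phi a p) := by
  unfold phi
  fun_prop (disch := intros; first | positivity | linarith)

lemma phi_continuous_p (ha : 0 ≤ a) (ha1 : a ≤ 1) : Continuous (fun p => phi a p q) := by
  unfold phi
  fun_prop (disch := intros; first | positivity | linarith)

lemma phi_hasDerivAt_q (ha : 0 < a) (ha1 : a < 1) (hq0 : 0 < q) (hq1 : q < 1) :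
    HasDerivAt (phi a p)
      ((1 - p) ^ a * (-1 * ((1 - a) * (1 - q) ^ (1 - a - 1)))
        + p ^ a * ((1 - a) * q ^ (1 - a - 1))) q := by
  have h1 : HasDerivAt (fun q : ℝ => (1 - q) ^ (1 - a))
      (-1 * ((1 - a) * (1 - q) ^ (1 - a - 1))) q := by
    have hinner : HasDerivAt (fun q : ℝ => 1 - q) (-1) q := by
      simpa using (hasDerivAt_id q).const_sub 1
    have := (Real.hasDerivAt_rpow_const (p := 1 - a)
      (Or.inl (by linarith : (1:ℝ) - q ≠ 0))).comp q hinner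
    simpa [mul_comm, Function.comp_def] using this
  have h2 : HasDerivAt (fun q : ℝ => q ^ (1 - a)) ((1 - a) * q ^ (1 - a - 1)) q :=
    Real.hasDerivAt_rpow_const (Or.inl (ne_of_gt hq0))
  exact ((h1.const_mul ((1 - p) ^ a)).add (h2.const_mul (p ^ a)))

lemma phi_strictAntiOn_q (ha : 0 < a) (ha1 : a < 1) (hp0 : 0 < p) (hp1 : p < 1) :
    StrictAntiOn (phi a p) (Icc p 1) := by
  apply strictAntiOn_of_deriv_neg (convex_Icc p 1)
    ((phi_continuous_q ha.le ha1.le).continuousOn)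
  intro q hq
  rw [interior_Icc] at hq
  obtain ⟨hpq, hq1⟩ := hq
  have hq0 : 0 < q := lt_trans hp0 hpq
  rw [(phi_hasDerivAt_q ha ha1 hq0 hq1).deriv]
  -- show the derivative value is negative
  have key : p ^ a * (1 - q) ^ a < (1 - p) ^ a * q ^ a := by
    rw [← Real.mul_rpow hp0.le (by linarith), ← Real.mul_rpow (by linarith) hq0.le]
    exact Real.rpow_lt_rpow (mul_nonneg hp0.le (by linarith)) (by nlinarith) ha
  have e1 : (1 - q) ^ (1 - a - 1) = ((1 - q) ^ a)⁻¹ := by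
    rw [show (1 : ℝ) - a - 1 = -a by ring, Real.rpow_neg (by linarith)]
  have e2 : q ^ (1 - a - 1) = (q ^ a)⁻¹ := by
    rw [show (1 : ℝ) - a - 1 = -a by ring, Real.rpow_neg hq0.le]
  rw [e1, e2]
  have hX : 0 < (1 - q) ^ a := Real.rpow_pos_of_pos (by linarith) a
  have hY : 0 < q ^ a := Real.rpow_pos_of_pos hq0 a
  have hdiv : p ^ a * (q ^ a)⁻¹ < (1 - p) ^ a * ((1 - q) ^ a)⁻¹ := by
    rw [← div_eq_mul_inv, ← div_eq_mul_inv, div_lt_div_iff₀ hY hX]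
    nlinarith [key]
  nlinarith [hdiv, sub_pos.mpr ha1]
end phi

lemma phi_hasDerivAt_p {a q : ℝ} (ha : 0 < a) (ha1 : a < 1) (p : ℝ) (hp0 : 0 < p) (hp1 : p < 1) :
    HasDerivAt (fun p => phi a p q)
      (-1 * (a * (1 - p) ^ (a - 1)) * (1 - q) ^ (1 - a)
        + a * p ^ (a - 1) * q ^ (1 - a)) p := by
  have h1 : HasDerivAt (fun p : ℝ => (1 - p) ^ a) (-1 * (a * (1 - p) ^ (a - 1))) p := by
    have hinner : HasDerivAt (fun p : ℝ => 1 - p) (-1) p := by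
      simpa using (hasDerivAt_id p).const_sub 1
    have := (Real.hasDerivAt_rpow_const (p := a)
      (Or.inl (by linarith : (1:ℝ) - p ≠ 0))).comp p hinner
    simpa [mul_comm, Function.comp_def] using this
  have h2 : HasDerivAt (fun p : ℝ => p ^ a) (a * p ^ (a - 1)) p :=
    Real.hasDerivAt_rpow_const (Or.inl (ne_of_gt hp0))
  exact ((h1.mul_const ((1 - q) ^ (1 - a))).add (h2.mul_const (q ^ (1 - a))))

lemma phi_strictMonoOn_p {a q : ℝ} (ha : 0 < a) (ha1 : a < 1) (hq0 : 0 < q) (hq1 : q ≤ 1) :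
    StrictMonoOn (fun p => phi a p q) (Icc 0 q) := by
  apply strictMonoOn_of_deriv_pos (convex_Icc 0 q)
    ((phi_continuous_p ha.le ha1.le).continuousOn)
  intro p hp
  rw [interior_Icc] at hp
  obtain ⟨hp0, hpq⟩ := hp
  have hp1 : p < 1 := lt_of_lt_of_le hpq hq1
  rw [(phi_hasDerivAt_p ha ha1 p hp0 hp1).deriv]
  have key : (1 - q) ^ (1 - a) * p ^ (1 - a) < q ^ (1 - a) * (1 - p) ^ (1 - a) := by
    rw [← Real.mul_rpow (by linarith) hp0.le, ← Real.mul_rpow hq0.le (by linarith)]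
    exact Real.rpow_lt_rpow (mul_nonneg (by linarith) hp0.le) (by nlinarith) (by linarith)
  have e1 : (1 - p) ^ (a - 1) = ((1 - p) ^ (1 - a))⁻¹ := by
    rw [show a - 1 = -(1 - a) by ring, Real.rpow_neg (by linarith)]
  have e2 : p ^ (a - 1) = (p ^ (1 - a))⁻¹ := by
    rw [show a - 1 = -(1 - a) by ring, Real.rpow_neg hp0.le]
  rw [e1, e2]
  have hX : 0 < (1 - p) ^ (1 - a) := Real.rpow_pos_of_pos (by linarith) _
  have hY : 0 < p ^ (1 - a) := Real.rpow_pos_of_pos hp0 _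
  have hdiv : ((1 - p) ^ (1 - a))⁻¹ * (1 - q) ^ (1 - a) < (p ^ (1 - a))⁻¹ * q ^ (1 - a) := by
    rw [inv_mul_eq_div, inv_mul_eq_div, div_lt_div_iff₀ hX hY]
    nlinarith [key]
  nlinarith [hdiv, ha]

section pr
variable {g h p q r : ℝ} (hg : 0 < g) (hh : 0 < h)

lemma aux_a_pos (hg : 0 < g) (hh : 0 < h) : 0 < g / (g + h) := by positivity
lemma aux_a_lt_one (hg : 0 < g) (hh : 0 < h) : g / (g + h) < 1 := by
  rw [div_lt_one (by linarith)]; linarith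

lemma pairRate_eq (hg : 0 < g) (hh : 0 < h) (p q : ℝ) :
    pairRate g h p q = -(g + h) * Real.log (phi (g / (g + h)) p q) := by
  have : h / (g + h) = 1 - g / (g + h) := by field_simp; ring
  rw [pairRate, phi, this]

lemma pairRate_self (hg : 0 < g) (hh : 0 < h) (hp0 : 0 ≤ p) (hp1 : p ≤ 1) :
    pairRate g h p p = 0 := by
  rw [pairRate_eq hg hh, phi_self (aux_a_pos hg hh) (aux_a_lt_one hg hh) hp0 hp1]
  simp

lemma pairRate_one (hg : 0 < g) (hh : 0 < h) (hp0 : 0 < p) :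
    pairRate g h p 1 = -(g * Real.log p) := by
  rw [pairRate_eq hg hh, phi_one (aux_a_lt_one hg hh) hp0.le, Real.log_rpow hp0]
  field_simp

lemma pairRate_strictMonoOn_q (hg : 0 < g) (hh : 0 < h) (hp0 : 0 < p) (hp1 : p < 1) :
    StrictMonoOn (pairRate g h p) (Icc p 1) := by
  intro q1 hq1 q2 hq2 hlt
  rw [pairRate_eq hg hh, pairRate_eq hg hh]
  have hphi := phi_strictAntiOn_q (aux_a_pos hg hh) (aux_a_lt_one hg hh) hp0 hp1 hq1 hq2 hlt
  have hpos : 0 < phi (g / (g + h)) p q2 :=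
    phi_pos hp1.le hq2.2 hp0 (lt_of_lt_of_le hp0 (le_trans hq1.1 hlt.le))
  have := Real.log_lt_log hpos hphi
  nlinarith [this]

lemma pairRate_strictAntiOn_p (hg : 0 < g) (hh : 0 < h) (hq0 : 0 < q) (hq1 : q ≤ 1) :
    StrictAntiOn (fun p => pairRate g h p q) (Ioc 0 q) := by
  intro p1 hp1 p2 hp2 hlt
  simp only [pairRate_eq hg hh]
  have hphi := phi_strictMonoOn_p (aux_a_pos hg hh) (aux_a_lt_one hg hh) hq0 hq1
    (Icc_subset_Icc_left le_rfl ⟨hp1.1.le, hp1.2⟩) ⟨hp2.1.le, hp2.2⟩ hlt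
  have hpos : 0 < phi (g / (g + h)) p1 q :=
    phi_pos (le_trans hp1.2 hq1) hq1 hp1.1 hq0
  have := Real.log_lt_log hpos hphi
  nlinarith [this]

lemma pairRate_pos (hg : 0 < g) (hh : 0 < h) (hp0 : 0 < p) (hp1 : p < 1)
    (hpq : p < q) (hq1 : q ≤ 1) : 0 < pairRate g h p q := by
  have := pairRate_strictMonoOn_q hg hh hp0 hp1 (Set.mem_Icc.mpr ⟨le_rfl, hp1.le⟩)
    (Set.mem_Icc.mpr ⟨hpq.le, hq1⟩) hpq
  rwa [pairRate_self hg hh hp0.le hp1.le] at this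

lemma pairRate_continuousOn_q (hg : 0 < g) (hh : 0 < h) (hp0 : 0 < p) (hp1 : p < 1) :
    ContinuousOn (pairRate g h p) (Icc p 1) := by
  have : ∀ q ∈ Icc p 1, pairRate g h p q
      = -(g + h) * Real.log (phi (g / (g + h)) p q) := fun q _ => pairRate_eq hg hh p q
  apply ContinuousOn.congr _ this
  apply ContinuousOn.mul continuousOn_const
  apply ContinuousOn.log ((phi_continuous_q (aux_a_pos hg hh).le
    (aux_a_lt_one hg hh).le).continuousOn)
  intro q hq
  exact ne_of_gt (phi_pos hp1.le hq.2 hp0 (lt_of_lt_of_le hp0 hq.1))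

lemma pairRate_continuousAt_p (hg : 0 < g) (hh : 0 < h) (hq0 : 0 < q) (hq1 : q ≤ 1)
    (hp0 : 0 < p) (hp1 : p < 1) :
    ContinuousAt (fun p => pairRate g h p q) p := by
  have hev : ∀ x : ℝ, pairRate g h x q = -(g + h) * Real.log (phi (g / (g + h)) x q) :=
    fun x => pairRate_eq hg hh x q
  simp only [hev]
  apply ContinuousAt.mul continuousAt_const
  exact ContinuousAt.log
    (phi_continuous_p (aux_a_pos hg hh).le (aux_a_lt_one hg hh).le).continuousAt
    (ne_of_gt (phi_pos hp1.le hq1 hp0 hq0))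

lemma pairRate_solve (hg : 0 < g) (hh : 0 < h) (hp0 : 0 < p) (hp1 : p < 1)
    (hr0 : 0 < r) (hr1 : r < -(g * Real.log p)) :
    ∃ q, (p < q ∧ q < 1 ∧ pairRate g h p q = r) ∧
      ∀ q', p < q' → q' < 1 → pairRate g h p q' = r → q' = q := by
  have hiv := intermediate_value_Ioo (le_of_lt hp1) (pairRate_continuousOn_q hg hh hp0 hp1)
  rw [pairRate_self hg hh hp0.le hp1.le, pairRate_one hg hh hp0] at hiv
  obtain ⟨q, hq, hqr⟩ := hiv ⟨hr0, hr1⟩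
  refine ⟨q, ⟨hq.1, hq.2, hqr⟩, ?_⟩
  intro q' h1 h2 h3
  exact (pairRate_strictMonoOn_q hg hh hp0 hp1).injOn ⟨h1.le, h2.le⟩ ⟨hq.1.le, hq.2.le⟩
    (h3.trans hqr.symm)

end pr

open Classical in
noncomputable def chain (g : ℕ → ℝ) (r : ℝ) : ℕ → ℝ
  | 0 => 0
  | 1 => 1 - Real.exp (-r / g 1)
  | (n+2) => if hq : ∃ q, chain g r (n+1) < q ∧ q < 1 ∧
      pairRate (g (n+1)) (g (n+2)) (chain g r (n+1)) q = r then hq.choose else 1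

def ok (g : ℕ → ℝ) (k : ℕ) (r : ℝ) : Prop :=
  0 < r ∧ ∀ i, 1 ≤ i → i < k → r < -(g i * Real.log (chain g r i))

section chain
variable {g : ℕ → ℝ} {r r' : ℝ} {k : ℕ}

lemma chain_zero : chain g r 0 = 0 := rfl
lemma chain_one : chain g r 1 = 1 - Real.exp (-r / g 1) := rfl
open Classical in
lemma chain_succ (n : ℕ) : chain g r (n+2) = if hq : ∃ q, chain g r (n+1) < q ∧ q < 1 ∧
    pairRate (g (n+1)) (g (n+2)) (chain g r (n+1)) q = r then hq.choose else 1 := rfl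

lemma ok_mono_k {j : ℕ} (hok : ok g k r) (hj : j ≤ k) : ok g j r :=
  ⟨hok.1, fun i h1 h2 => hok.2 i h1 (lt_of_lt_of_le h2 hj)⟩

lemma chain_one_mem (hg1 : 0 < g 1) (hr : 0 < r) : 0 < chain g r 1 ∧ chain g r 1 < 1 := by
  rw [chain_one]
  constructor
  · have h0 : -r / g 1 < 0 := div_neg_of_neg_of_pos (by linarith) hg1
    have : Real.exp (-r / g 1) < 1 := Real.exp_lt_one_iff.mpr h0
    linarith
  · linarith [Real.exp_pos (-r / g 1)]

lemma chain_props (hgk : ∀ i, 1 ≤ i → i ≤ k → 0 < g i) (hok : ok g k r) :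
    ∀ i, 1 ≤ i → i ≤ k → 0 < chain g r i ∧ chain g r i < 1 ∧ chain g r (i-1) < chain g r i ∧
      (2 ≤ i → pairRate (g (i-1)) (g i) (chain g r (i-1)) (chain g r i) = r) := by
  intro i
  induction i with
  | zero => omega
  | succ n ih =>
    intro _ hnk
    rcases Nat.eq_zero_or_pos n with rfl | hn
    · have h1 := chain_one_mem (hgk 1 le_rfl (by omega)) hok.1
      exact ⟨h1.1, h1.2, by rw [show (1:ℕ) - 1 = 0 from rfl, chain_zero]; exact h1.1,
        by omega⟩
    · -- n ≥ 1, stage n+1 ≥ 2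
      obtain ⟨m, rfl⟩ : ∃ m, n = m + 1 := ⟨n - 1, by omega⟩
      obtain ⟨hp0, hp1, _, _⟩ := ih (by omega) (by omega)
      have hthr : r < -(g (m+1) * Real.log (chain g r (m+1))) := hok.2 (m+1) hn (by omega)
      obtain ⟨q, ⟨hq1, hq2, hq3⟩, _⟩ := pairRate_solve (hgk (m+1) hn (by omega))
        (hgk (m+2) (by omega) (by omega)) hp0 hp1 hok.1 hthr
      have hex : ∃ q, chain g r (m+1) < q ∧ q < 1 ∧
          pairRate (g (m+1)) (g (m+2)) (chain g r (m+1)) q = r := ⟨q, hq1, hq2, hq3⟩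
      have hch : chain g r (m+2) = hex.choose := by rw [chain_succ m, dif_pos hex]
      have hs := hex.choose_spec
      rw [← hch] at hs
      have e2 : m + 1 + 1 = m + 2 := rfl
      rw [e2]
      exact ⟨lt_trans hp0 hs.1, hs.2.1, by simpa using hs.1, fun _ => by simpa using hs.2.2⟩

lemma chain_mono_r (hgk : ∀ i, 1 ≤ i → i ≤ k → 0 < g i) (hok : ok g k r) (hok' : ok g k r')
    (hlt : r < r') : ∀ i, 1 ≤ i → i ≤ k → chain g r i < chain g r' i := by
  intro i
  induction i with
  | zero => omega
  | succ n ih =>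
    intro _ hnk
    rcases Nat.eq_zero_or_pos n with rfl | hn
    · rw [chain_one, chain_one]
      have hg1 : 0 < g 1 := hgk 1 le_rfl (by omega)
      have : Real.exp (-r' / g 1) < Real.exp (-r / g 1) := by
        apply Real.exp_lt_exp.mpr
        gcongr
      linarith
    · have hp := ih (by omega) (by omega)
      obtain ⟨hP0, hP1, hPm, hPe⟩ := chain_props hgk hok (n+1) (by omega) hnk
      obtain ⟨hQ0, hQ1, hQm, hQe⟩ := chain_props hgk hok' (n+1) (by omega) hnk
      simp only [Nat.add_sub_cancel] at hPm hPe hQm hQe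
      by_contra hcon
      push_neg at hcon
      have hgi := hgk n hn (by omega)
      have hgi1 := hgk (n+1) (by omega) hnk
      obtain ⟨hp0, hp1, _, _⟩ := chain_props hgk hok n hn (by omega)
      obtain ⟨hp0', hp1', _, _⟩ := chain_props hgk hok' n hn (by omega)
      have h1 : pairRate (g n) (g (n+1)) (chain g r' n) (chain g r' (n+1))
          < pairRate (g n) (g (n+1)) (chain g r n) (chain g r' (n+1)) :=
        pairRate_strictAntiOn_p hgi hgi1 hQ0 hQ1.le
          (Set.mem_Ioc.mpr ⟨hp0, le_trans hp.le hQm.le⟩)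
          (Set.mem_Ioc.mpr ⟨hp0', hQm.le⟩) hp
      have h2 : pairRate (g n) (g (n+1)) (chain g r n) (chain g r' (n+1))
          ≤ pairRate (g n) (g (n+1)) (chain g r n) (chain g r (n+1)) := by
        rcases eq_or_lt_of_le hcon with he | hlt2
        · rw [he]
        · exact le_of_lt ((pairRate_strictMonoOn_q hgi hgi1 hp0 hp1)
            (Set.mem_Icc.mpr ⟨le_trans hp.le hQm.le, hQ1.le⟩)
            (Set.mem_Icc.mpr ⟨hPm.le, hP1.le⟩) hlt2)
      rw [hPe (by omega), hQe (by omega)] at *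
      linarith
end chain

section chain2
variable {g : ℕ → ℝ} {r r' b : ℝ} {k : ℕ}

lemma ok_mono_r : ∀ (k : ℕ), (∀ i, 1 ≤ i → i ≤ k → 0 < g i) → ok g k r' → 0 < r → r < r' →
    ok g k r := by
  intro k
  induction k with
  | zero => exact fun _ _ hr0 _ => ⟨hr0, fun i h1 h2 => absurd h2 (by omega)⟩
  | succ n ihk =>
    intro hgk hok' hr0 hlt
    have hok'n : ok g n r' := ok_mono_k hok' (Nat.le_succ n)
    have hgn : ∀ i, 1 ≤ i → i ≤ n → 0 < g i := fun i h1 h2 => hgk i h1 (by omega)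
    have hokn : ok g n r := ihk hgn hok'n hr0 hlt
    refine ⟨hr0, fun i h1 h2 => ?_⟩
    rcases Nat.lt_or_ge i n with hin | hin
    · exact hokn.2 i h1 hin
    · have hieq : i = n := by omega
      subst hieq
      have hc := chain_mono_r hgn hokn hok'n hlt i h1 le_rfl
      obtain ⟨hc0, _, _, _⟩ := chain_props hgn hokn i h1 le_rfl
      have hlog := Real.log_lt_log hc0 hc
      have hthr := hok'.2 i h1 (by omega)
      have hgi := hgk i h1 (by omega)
      nlinarith

lemma ok_of_mem (hgk : ∀ i, 1 ≤ i → i ≤ k → 0 < g i) (hok : ok g k b) (hr : r ∈ Ioc 0 b) :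
    ok g k r := by
  rcases eq_or_lt_of_le hr.2 with he | hlt
  · rwa [he]
  · exact ok_mono_r k hgk hok hr.1 hlt

lemma chain_index_strict (hgk : ∀ i, 1 ≤ i → i ≤ k → 0 < g i) (hok : ok g k r) :
    ∀ i j, 1 ≤ i → i ≤ j → j ≤ k → chain g r i ≤ chain g r j := by
  intro i j h1 hij hjk
  induction j with
  | zero => omega
  | succ n ihj =>
    rcases Nat.lt_or_ge n i with h | h
    · have : i = n + 1 := by omega
      rw [this]
    · have hstep := (chain_props hgk hok (n+1) (by omega) hjk).2.2.1
      simp only [Nat.add_sub_cancel] at hstep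
      exact le_trans (ihj (by omega) (by omega)) hstep.le

lemma chain_contOn (hgk : ∀ i, 1 ≤ i → i ≤ k → 0 < g i) (hok : ok g k b)
    (i : ℕ) (h1 : 1 ≤ i) (hik : i ≤ k) :
    ContinuousOn (fun r => chain g r i) (Ioc 0 b) := by
  induction i with
  | zero => omega
  | succ n ih =>
    rcases Nat.eq_zero_or_pos n with rfl | hn
    · have : (fun r => chain g r 1) = fun r : ℝ => 1 - Real.exp (-r / g 1) := by
        funext r; exact chain_one
      rw [this]
      fun_prop
    -- main case: stage n+1 with n ≥ 1
    have ihc := ih hn (by omega)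
    intro r0 hr0
    have hok0 : ok g k r0 := ok_of_mem hgk hok hr0
    obtain ⟨hp0, hp1, _, _⟩ := chain_props hgk hok0 n hn (by omega)
    obtain ⟨hq0, hq1, hqm, hqe⟩ := chain_props hgk hok0 (n+1) (by omega) hik
    simp only [Nat.add_sub_cancel] at hqm hqe
    have hqe0 : pairRate (g n) (g (n+1)) (chain g r0 n) (chain g r0 (n+1)) = r0 :=
      hqe (by omega)
    have hgi := hgk n hn (by omega)
    have hgi1 := hgk (n+1) (by omega) hik
    set p0 := chain g r0 n with hp0def
    set q0 := chain g r0 (n+1) with hq0def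
    rw [ContinuousWithinAt]
    rw [Metric.tendsto_nhds]
    intro ε hε
    set qm : ℝ := max ((p0 + q0)/2) (q0 - ε/2) with hqmdef
    set qp : ℝ := min ((q0+1)/2) (q0 + ε/2) with hqpdef
    have hqm1 : p0 < qm := lt_max_of_lt_left (by linarith)
    have hqm2 : qm < q0 := max_lt (by linarith) (by linarith)
    have hqm3 : q0 - ε/2 ≤ qm := le_max_right _ _
    have hqp1 : q0 < qp := lt_min (by linarith) (by linarith)
    have hqp2 : qp < 1 := lt_of_le_of_lt (min_le_left _ _) (by linarith)
    have hqp3 : qp ≤ q0 + ε/2 := min_le_right _ _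
    have hqm0 : 0 < qm := lt_trans hp0 hqm1
    -- continuity of the comparison maps
    have hF1 : ContinuousWithinAt (fun r => pairRate (g n) (g (n+1)) (chain g r n) qm)
        (Ioc 0 b) r0 := by
      have t1 := (pairRate_continuousAt_p hgi hgi1 hqm0 (by linarith : qm ≤ 1) hp0 hp1).tendsto
      have t2 := ihc r0 hr0
      exact t1.comp t2
    have hF2 : ContinuousWithinAt (fun r => pairRate (g n) (g (n+1)) (chain g r n) qp)
        (Ioc 0 b) r0 := by
      have t1 := (pairRate_continuousAt_p hgi hgi1 (by linarith : (0:ℝ) < qp)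
        (by linarith : qp ≤ 1) hp0 hp1).tendsto
      have t2 := ihc r0 hr0
      exact t1.comp t2
    have hF1v : pairRate (g n) (g (n+1)) p0 qm < r0 := by
      rw [← hqe0]
      exact pairRate_strictMonoOn_q hgi hgi1 hp0 hp1
        (Set.mem_Icc.mpr ⟨hqm1.le, by linarith⟩)
        (Set.mem_Icc.mpr ⟨hqm.le, hq1.le⟩) hqm2
    have hF2v : r0 < pairRate (g n) (g (n+1)) p0 qp := by
      rw [← hqe0]
      exact pairRate_strictMonoOn_q hgi hgi1 hp0 hp1
        (Set.mem_Icc.mpr ⟨hqm.le, hq1.le⟩)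
        (Set.mem_Icc.mpr ⟨le_trans hqm.le hqp1.le, hqp2.le⟩) hqp1
    have hev1 : ∀ᶠ r in nhdsWithin r0 (Ioc 0 b),
        pairRate (g n) (g (n+1)) (chain g r n) qm - r < 0 := by
      have ht : Filter.Tendsto (fun r => pairRate (g n) (g (n+1)) (chain g r n) qm - r)
          (nhdsWithin r0 (Ioc 0 b)) (nhds (pairRate (g n) (g (n+1)) p0 qm - r0)) :=
        hF1.sub continuousWithinAt_id
      exact ht.eventually_lt_const (by linarith)
    have hev2 : ∀ᶠ r in nhdsWithin r0 (Ioc 0 b),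
        0 < pairRate (g n) (g (n+1)) (chain g r n) qp - r := by
      have ht : Filter.Tendsto (fun r => pairRate (g n) (g (n+1)) (chain g r n) qp - r)
          (nhdsWithin r0 (Ioc 0 b)) (nhds (pairRate (g n) (g (n+1)) p0 qp - r0)) :=
        hF2.sub continuousWithinAt_id
      exact ht.eventually_const_lt (by linarith)
    have hev3 : ∀ᶠ r in nhdsWithin r0 (Ioc 0 b), chain g r n < qm :=
      (ihc r0 hr0).eventually_lt_const hqm1
    have hev4 : ∀ᶠ r in nhdsWithin r0 (Ioc 0 b), r ∈ Ioc 0 b :=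
      self_mem_nhdsWithin
    filter_upwards [hev1, hev2, hev3, hev4] with r h1' h2' h3' h4'
    have hokr : ok g k r := ok_of_mem hgk hok h4'
    obtain ⟨hrp0, hrp1, _, _⟩ := chain_props hgk hokr n hn (by omega)
    obtain ⟨hrq0, hrq1, hrqm, hrqe⟩ := chain_props hgk hokr (n+1) (by omega) hik
    simp only [Nat.add_sub_cancel] at hrqm hrqe
    have hrqe0 : pairRate (g n) (g (n+1)) (chain g r n) (chain g r (n+1)) = r :=
      hrqe (by omega)
    have hmono := pairRate_strictMonoOn_q hgi hgi1 hrp0 hrp1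
    have hlo : qm < chain g r (n+1) := by
      have := (hmono.lt_iff_lt (Set.mem_Icc.mpr ⟨h3'.le, by linarith⟩)
        (Set.mem_Icc.mpr ⟨hrqm.le, hrq1.le⟩)).mp
      apply this
      rw [hrqe0]
      linarith
    have hhi : chain g r (n+1) < qp := by
      have := (hmono.lt_iff_lt (Set.mem_Icc.mpr ⟨hrqm.le, hrq1.le⟩)
        (Set.mem_Icc.mpr ⟨le_trans h3'.le (by linarith), hqp2.le⟩)).mp
      apply this
      rw [hrqe0]
      linarith
    rw [Real.dist_eq, abs_lt]
    constructor <;> linarith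
end chain2

section exist
variable {g : ℕ → ℝ} {N : ℕ}

set_option maxHeartbeats 1000000 in
lemma small_r (hgN : ∀ i, 1 ≤ i → i ≤ N → 0 < g i) :
    ∀ i, 1 ≤ i → i ≤ N → ∀ ε : ℝ, 0 < ε → ∃ δ : ℝ, 0 < δ ∧ ∀ r, 0 < r → r < δ →
      ok g i r ∧ chain g r i < ε := by
  intro i
  induction i with
  | zero => omega
  | succ n ih =>
    intro _ hik ε hε
    rcases Nat.eq_zero_or_pos n with rfl | hn
    · -- base case i = 1
      have hg1 : 0 < g 1 := hgN 1 le_rfl (by omega)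
      set ε' : ℝ := min ε (1/2) with hε'
      have hε'0 : 0 < ε' := lt_min hε (by norm_num)
      have hε'1 : ε' < 1 := lt_of_le_of_lt (min_le_right _ _) (by norm_num)
      have hlog : Real.log (1 - ε') < 0 :=
        Real.log_neg (by linarith) (by linarith)
      refine ⟨-(g 1 * Real.log (1 - ε')), by nlinarith, fun r hr hrδ => ?_⟩
      refine ⟨⟨hr, fun i h1 h2 => absurd h2 (by omega)⟩, ?_⟩
      rw [chain_one]
      have h1 : Real.log (1 - ε') < -r / g 1 := by
        rw [lt_div_iff₀' hg1]  -- maybe wrong; fix with alternative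
        nlinarith
      have h2 : (1 : ℝ) - ε' < Real.exp (-r / g 1) := by
        calc (1:ℝ) - ε' = Real.exp (Real.log (1 - ε')) := (Real.exp_log (by linarith)).symm
        _ < Real.exp (-r / g 1) := Real.exp_lt_exp.mpr h1
      have : 1 - Real.exp (-r / g 1) < ε' := by linarith
      exact lt_of_lt_of_le this (min_le_left _ _)
    · -- step case: stage n+1, n ≥ 1
      have hgi : 0 < g n := hgN n hn (by omega)
      have hgi1 : 0 < g (n+1) := hgN (n+1) (by omega) hik
      set G : ℝ := g n + g (n+1) with hGdef
      have hG : 0 < G := by positivity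
      set a : ℝ := g n / G with hadef
      have ha0 : 0 < a := by positivity
      have ha1 : a < 1 := by
        rw [hadef, div_lt_one hG]; linarith
      set ε₁ : ℝ := min ε (1/2) with hε₁def
      have hε₁0 : 0 < ε₁ := lt_min hε (by norm_num)
      have hε₁1 : ε₁ < 1 := lt_of_le_of_lt (min_le_right _ _) (by norm_num)
      set c : ℝ := (1 - ε₁) ^ (1 - a) with hcdef
      have hc0 : 0 < c := Real.rpow_pos_of_pos (by linarith) _
      have hc1 : c < 1 := Real.rpow_lt_one (by linarith) (by linarith) (by linarith)
      set gap : ℝ := (1 - c)/4 with hgapdef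
      have hgap0 : 0 < gap := by linarith
      have hgap1 : gap < 1 := by linarith
      set εp : ℝ := min (gap ^ (1/a)) (1/2) with hεpdef
      have hεp0 : 0 < εp := lt_min (Real.rpow_pos_of_pos hgap0 _) (by norm_num)
      have hεp1 : εp < 1 := lt_of_le_of_lt (min_le_right _ _) (by norm_num)
      obtain ⟨δi, hδi0, hδi⟩ := ih hn (by omega) εp hεp0
      have hτ : 0 < -(g n * Real.log εp) := by
        have := Real.log_neg hεp0 hεp1
        nlinarith
      have hδe0 : 0 < -(G * Real.log (1 - gap)) := by
        have := Real.log_neg (show (0:ℝ) < 1 - gap by linarith)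
          (show (1:ℝ) - gap < 1 by linarith)
        nlinarith
      refine ⟨min δi (min (-(g n * Real.log εp)) (-(G * Real.log (1 - gap)))),
        lt_min hδi0 (lt_min hτ hδe0), fun r hr hrδ => ?_⟩
      have hrδi : r < δi := lt_of_lt_of_le hrδ (min_le_left _ _)
      have hrτ : r < -(g n * Real.log εp) :=
        lt_of_lt_of_le hrδ (le_trans (min_le_right _ _) (min_le_left _ _))
      have hrδe : r < -(G * Real.log (1 - gap)) :=
        lt_of_lt_of_le hrδ (le_trans (min_le_right _ _) (min_le_right _ _))
      obtain ⟨hokn, hcn⟩ := hδi r hr hrδi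
      have hgn' : ∀ i, 1 ≤ i → i ≤ n → 0 < g i := fun i h1 h2 => hgN i h1 (by omega)
      obtain ⟨hcp0, hcp1, _, _⟩ := chain_props hgn' hokn n hn le_rfl
      -- threshold for stage n+1
      have hthr : r < -(g n * Real.log (chain g r n)) := by
        have hll : Real.log (chain g r n) < Real.log εp := Real.log_lt_log hcp0 hcn
        nlinarith
      have hokn1 : ok g (n+1) r := by
        refine ⟨hr, fun i h1 h2 => ?_⟩
        rcases Nat.lt_or_ge i n with h | h
        · exact hokn.2 i h1 h
        · have : i = n := by omega
          subst this
          exact hthr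
      refine ⟨hokn1, ?_⟩
      have hgn1' : ∀ i, 1 ≤ i → i ≤ n+1 → 0 < g i := fun i h1 h2 => hgN i h1 (by omega)
      obtain ⟨hq0, hq1, hqm, hqe⟩ := chain_props hgn1' hokn1 (n+1) (by omega) le_rfl
      simp only [Nat.add_sub_cancel] at hqm hqe
      have heq : pairRate (g n) (g (n+1)) (chain g r n) (chain g r (n+1)) = r := hqe (by omega)
      set p : ℝ := chain g r n
      set q : ℝ := chain g r (n+1)
      have hφpos : 0 < phi a p q := phi_pos hcp1.le hq1.le hcp0 hq0
      have hφ : phi a p q = Real.exp (-r / G) := by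
        rw [pairRate_eq hgi hgi1, ← hGdef, ← hadef] at heq
        have hGne : G ≠ 0 := ne_of_gt hG
        have hlog : Real.log (phi a p q) = -r / G := by
          field_simp
          linarith
        rw [← hlog, Real.exp_log hφpos]
      -- bound p^a ≤ gap
      have hpa : p ^ a ≤ gap := by
        have h1 : p ^ a ≤ (gap ^ (1/a)) ^ a := by
          apply Real.rpow_le_rpow hcp0.le _ ha0.le
          exact le_trans hcn.le (min_le_left _ _)
        have h2 : (gap ^ (1/a)) ^ a = gap := by
          rw [← Real.rpow_mul hgap0.le]
          rw [one_div, inv_mul_cancel₀ (ne_of_gt ha0), Real.rpow_one]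
        linarith
      -- bound exp(-r/G) > 1 - gap
      have hexp : 1 - gap < Real.exp (-r / G) := by
        have h1 : Real.log (1 - gap) < -r / G := by
          rw [lt_div_iff₀' hG]
          nlinarith
        calc (1:ℝ) - gap = Real.exp (Real.log (1 - gap)) :=
              (Real.exp_log (show (0:ℝ) < 1 - gap by linarith)).symm
        _ < Real.exp (-r / G) := Real.exp_lt_exp.mpr h1
      -- upper bound phi ≤ (1-q)^(1-a) + p^a
      have hφle : phi a p q ≤ (1 - q) ^ (1 - a) + p ^ a := by
        unfold phi
        have t1 : (1 - p) ^ a ≤ 1 := Real.rpow_le_one (by linarith) (by linarith) ha0.le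
        have t2 : q ^ (1 - a) ≤ 1 := Real.rpow_le_one hq0.le hq1.le (by linarith)
        have t3 : (0:ℝ) ≤ (1 - q) ^ (1 - a) := Real.rpow_nonneg (by linarith) _
        have t4 : (0:ℝ) ≤ p ^ a := Real.rpow_nonneg hcp0.le _
        nlinarith
      have hkey : c < (1 - q) ^ (1 - a) := by
        have : (1:ℝ) - 2*gap ≤ (1 - q) ^ (1 - a) := by nlinarith [hφ ▸ hφle]
        nlinarith
      have hq' : q < ε₁ := by
        by_contra hcon
        push_neg at hcon
        have : (1 - q) ^ (1 - a) ≤ c := by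
          rw [hcdef]
          exact Real.rpow_le_rpow (by linarith) (by linarith) (by linarith)
        linarith
      exact lt_of_lt_of_le hq' (min_le_left _ _)
end exist

noncomputable def HFun (g : ℕ → ℝ) (N : ℕ) (r : ℝ) : ℝ := r + g N * Real.log (chain g r N)

section exist2
variable {g : ℕ → ℝ} {N : ℕ}

lemma HFun_mono (hgN : ∀ i, 1 ≤ i → i ≤ N → 0 < g i) (hN : 1 ≤ N) {r r' : ℝ}
    (hok : ok g N r) (hok' : ok g N r') (hlt : r < r') : HFun g N r < HFun g N r' := by
  have hc := chain_mono_r hgN hok hok' hlt N hN le_rfl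
  have hc0 := (chain_props hgN hok N hN le_rfl).1
  have hlog := Real.log_lt_log hc0 hc
  have hgNpos := hgN N hN le_rfl
  unfold HFun
  nlinarith

lemma HFun_contOn (hgN : ∀ i, 1 ≤ i → i ≤ N → 0 < g i) (hN : 1 ≤ N) {b : ℝ}
    (hok : ok g N b) : ContinuousOn (HFun g N) (Ioc 0 b) := by
  apply ContinuousOn.add continuousOn_id
  apply ContinuousOn.mul continuousOn_const
  apply ContinuousOn.log (chain_contOn hgN hok N hN le_rfl)
  intro r hr
  exact ne_of_gt (chain_props hgN (ok_of_mem hgN hok hr) N hN le_rfl).1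

lemma big_r (hgN : ∀ i, 1 ≤ i → i ≤ N → 0 < g i) (hN : 1 ≤ N)
    {r0 : ℝ} (hr0 : ok g N r0) :
    ∃ b, ok g N b ∧ 0 ≤ HFun g N b := by
  by_contra hcon
  push_neg at hcon
  have hgNpos : 0 < g N := hgN N hN le_rfl
  have hg1pos : 0 < g 1 := hgN 1 le_rfl hN
  have hlog2 : 0 < Real.log 2 := Real.log_pos (by norm_num)
  -- boundedness of the domain
  have hbound : ∀ r, ok g N r → r ≤ g 1 * Real.log 2 + g N * Real.log 2 := by
    intro r hok
    by_contra hB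
    push_neg at hB
    have hr : 0 < r := hok.1
    have h10 := (chain_props hgN hok 1 le_rfl hN).1
    have h1N : chain g r 1 ≤ chain g r N := chain_index_strict hgN hok 1 N le_rfl hN le_rfl
    have hNpos := (chain_props hgN hok N hN le_rfl).1
    have hhalf : (2:ℝ)⁻¹ ≤ chain g r 1 := by
      rw [chain_one]
      have h1 : -r / g 1 ≤ -Real.log 2 := by
        rw [div_le_iff₀ hg1pos]
        nlinarith
      have h2 : Real.exp (-r / g 1) ≤ 2⁻¹ := by
        calc Real.exp (-r / g 1) ≤ Real.exp (-Real.log 2) := Real.exp_le_exp.mpr h1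
        _ = 2⁻¹ := by rw [Real.exp_neg, Real.exp_log (by norm_num)]
      linarith
    have hlogN : -Real.log 2 ≤ Real.log (chain g r N) := by
      calc -Real.log 2 = Real.log (2:ℝ)⁻¹ := (Real.log_inv 2).symm
      _ ≤ Real.log (chain g r 1) := Real.log_le_log (by norm_num) hhalf
      _ ≤ Real.log (chain g r N) := Real.log_le_log h10 h1N
    have := hcon r hok
    unfold HFun at this
    nlinarith
  classical
  have hDbdd : BddAbove {r | ok g N r} := ⟨_, fun r hr => hbound r hr⟩
  have hDne : Set.Nonempty {r | ok g N r} := ⟨r0, hr0⟩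
  set s : ℝ := sSup {r | ok g N r} with hsdef
  have hs0 : 0 < s := lt_of_lt_of_le hr0.1 (le_csSup hDbdd hr0)
  set P : ℕ → Prop := fun i => 1 ≤ i ∧ i ≤ N ∧ BddAbove {r | ok g i r} ∧
    sSup {r | ok g i r} = s with hPdef
  have hex : ∃ i, P i := ⟨N, hN, le_rfl, hDbdd, rfl⟩
  haveI : DecidablePred P := Classical.decPred P
  set j : ℕ := Nat.find hex with hjdef
  obtain ⟨hj1, hjN, hDjb, hDjs⟩ : P j := Nat.find_spec hex
  have hjmin : ∀ i, i < j → ¬ P i := fun i hi => Nat.find_min hex hi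
  have hj2 : 2 ≤ j := by
    rcases Nat.lt_or_ge j 2 with h | h
    · exfalso
      have hj1' : j = 1 := by omega
      have : {r | ok g j r} = Ioi 0 := by
        ext r
        constructor
        · exact fun hh => hh.1
        · exact fun hh => ⟨hh, fun i hi1 hi2 => absurd hi2 (by omega)⟩
      rw [this] at hDjb
      exact not_bddAbove_Ioi (a := (0:ℝ)) hDjb
    · exact h
  have hgj2 : ∀ i, 1 ≤ i → i ≤ j → 0 < g i := fun i h1 h2 => hgN i h1 (by omega)
  have hgj : ∀ i, 1 ≤ i → i ≤ j - 1 → 0 < g i := fun i h1 h2 => hgN i h1 (by omega)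
  have hDjne : Set.Nonempty {r | ok g j r} := ⟨r0, ok_mono_k hr0 hjN⟩
  have hsub : {r | ok g j r} ⊆ {r | ok g (j-1) r} :=
    fun r hr => ok_mono_k hr (by omega)
  -- an element bb of the (j-1)-domain above s
  obtain ⟨bb, hbbDp, hsbb⟩ : ∃ bb, ok g (j-1) bb ∧ s < bb := by
    by_cases hb : BddAbove {r | ok g (j-1) r}
    · have hge : s ≤ sSup {r | ok g (j-1) r} := by
        rw [← hDjs]
        exact csSup_le_csSup hb hDjne hsub
      have hne : ¬ P (j-1) := hjmin (j-1) (by omega)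
      have : sSup {r | ok g (j-1) r} ≠ s := by
        intro hcontra
        exact hne ⟨by omega, by omega, hb, hcontra⟩
      obtain ⟨a, ha, hsa⟩ := exists_lt_of_lt_csSup (hDjne.mono hsub)
        (lt_of_le_of_ne hge (Ne.symm this))
      exact ⟨a, ha, hsa⟩
    · obtain ⟨a, ha, hsa⟩ := not_bddAbove_iff.mp hb s
      exact ⟨a, ha, hsa⟩
  have hcont := chain_contOn hgj hbbDp (j-1) (by omega) le_rfl
  have hsmem : s ∈ Ioc 0 bb := ⟨hs0, hsbb.le⟩
  have hoks : ok g (j-1) s := ok_of_mem hgj hbbDp hsmem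
  obtain ⟨hpS0, hpS1, _, _⟩ := chain_props hgj hoks (j-1) (by omega) le_rfl
  have hgjm1 : 0 < g (j-1) := hgj (j-1) (by omega) le_rfl
  have hgjpos : 0 < g j := hgj2 j (by omega) le_rfl
  -- the threshold function and its continuity at s
  have hthrT : Filter.Tendsto (fun r => -(g (j-1) * Real.log (chain g r (j-1))))
      (nhdsWithin s (Ioc 0 bb)) (nhds (-(g (j-1) * Real.log (chain g s (j-1))))) := by
    have h1 : ContinuousWithinAt (fun r => chain g r (j-1)) (Ioc 0 bb) s := hcont s hsmem
    exact (((h1.log (ne_of_gt hpS0)).const_mul (g (j-1))).neg)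
  -- no r in (s, bb) is in the j-domain
  have hnotok : ∀ r', r' ∈ Ioo s bb → -(g (j-1) * Real.log (chain g r' (j-1))) ≤ r' := by
    intro r' hr'
    have hokp : ok g (j-1) r' := ok_of_mem hgj hbbDp ⟨lt_trans hs0 hr'.1, hr'.2.le⟩
    by_contra hcontra
    push_neg at hcontra
    have hokj : ok g j r' := by
      refine ⟨lt_trans hs0 hr'.1, fun i h1 h2 => ?_⟩
      rcases Nat.lt_or_ge i (j-1) with h | h
      · exact hokp.2 i h1 h
      · have : i = j - 1 := by omega
        subst this
        exact hcontra
    have : r' ≤ s := hDjs ▸ le_csSup hDjb hokj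
    linarith [hr'.1]
  have hIoosub : Ioo s bb ⊆ Ioc 0 bb := fun x hx => ⟨lt_trans hs0 hx.1, hx.2.le⟩
  have hIoosub2 : Ioo 0 s ⊆ Ioc 0 bb := fun x hx => ⟨hx.1, le_trans hx.2.le hsbb.le⟩
  -- thr s ≤ s (limit from the right)
  have hthr_le : -(g (j-1) * Real.log (chain g s (j-1))) ≤ s := by
    haveI : Filter.NeBot (nhdsWithin s (Ioo s bb)) := left_nhdsWithin_Ioo_neBot hsbb
    exact le_of_tendsto_of_tendsto (hthrT.mono_left (nhdsWithin_mono s hIoosub))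
      (Filter.tendsto_id.mono_left nhdsWithin_le_nhds)
      (Filter.eventually_of_mem self_mem_nhdsWithin hnotok)
  -- every r in (0,s) is in the j-domain
  have hokIoo : ∀ r, r ∈ Ioo 0 s → ok g j r := by
    intro r hr
    obtain ⟨d, hd, hrd⟩ := exists_lt_of_lt_csSup hDjne (hDjs ▸ hr.2)
    exact ok_mono_r j hgj2 hd hr.1 hrd
  have hokIooN : ∀ r, r ∈ Ioo 0 s → ok g N r := by
    intro r hr
    obtain ⟨d, hd, hrd⟩ := exists_lt_of_lt_csSup hDne hr.2
    exact ok_mono_r N hgN hd hr.1 hrd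
  -- s ≤ thr s (limit from the left)
  have hthr_ge : s ≤ -(g (j-1) * Real.log (chain g s (j-1))) := by
    haveI : Filter.NeBot (nhdsWithin s (Ioo 0 s)) := right_nhdsWithin_Ioo_neBot hs0
    apply le_of_tendsto_of_tendsto (Filter.tendsto_id.mono_left nhdsWithin_le_nhds)
      (hthrT.mono_left (nhdsWithin_mono s hIoosub2))
    apply Filter.eventually_of_mem self_mem_nhdsWithin
    intro r hr
    exact ((hokIoo r hr).2 (j-1) (by omega) (by omega)).le
  -- the supremum of stage-j chain values over (0, s)
  have hTne : Set.Nonempty ((fun r => chain g r j) '' Ioo 0 s) :=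
    ⟨_, Set.mem_image_of_mem _ (show s/2 ∈ Ioo 0 s by constructor <;> linarith)⟩
  have hTbdd : BddAbove ((fun r => chain g r j) '' Ioo 0 s) := by
    refine ⟨1, fun y hy => ?_⟩
    obtain ⟨r, hr, rfl⟩ := hy
    exact (chain_props hgj2 (hokIoo r hr) j (by omega) le_rfl).2.1.le
  set qsup : ℝ := sSup ((fun r => chain g r j) '' Ioo 0 s) with hqsupdef
  have hqsup_le_one : qsup ≤ 1 := by
    apply csSup_le hTne
    intro y hy
    obtain ⟨r, hr, rfl⟩ := hy
    exact (chain_props hgj2 (hokIoo r hr) j (by omega) le_rfl).2.1.le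
  -- pS ≤ qsup
  have hple : chain g s (j-1) ≤ qsup := by
    haveI : Filter.NeBot (nhdsWithin s (Ioo 0 s)) := right_nhdsWithin_Ioo_neBot hs0
    apply le_of_tendsto ((hcont s hsmem).mono_left (nhdsWithin_mono s hIoosub2))
    apply Filter.eventually_of_mem self_mem_nhdsWithin
    intro r hr
    have h1 : chain g r (j-1) ≤ chain g r j :=
      chain_index_strict hgj2 (hokIoo r hr) (j-1) j (by omega) (by omega) le_rfl
    exact le_trans h1 (le_csSup hTbdd (Set.mem_image_of_mem _ hr))
  have hqsup0 : 0 < qsup := lt_of_lt_of_le hpS0 hple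
  -- qsup = 1
  have hqsup1 : qsup = 1 := by
    by_contra hne1
    have hq1 : qsup < 1 := lt_of_le_of_ne hqsup_le_one hne1
    have hFt : Filter.Tendsto
        (fun r => pairRate (g (j-1)) (g j) (chain g r (j-1)) qsup)
        (nhdsWithin s (Ioo 0 s))
        (nhds (pairRate (g (j-1)) (g j) (chain g s (j-1)) qsup)) := by
      have t1 := (pairRate_continuousAt_p hgjm1 hgjpos hqsup0 hqsup_le_one hpS0 hpS1).tendsto
      have t2 := (hcont s hsmem).mono_left (nhdsWithin_mono s hIoosub2)
      exact t1.comp t2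
    haveI : Filter.NeBot (nhdsWithin s (Ioo 0 s)) := right_nhdsWithin_Ioo_neBot hs0
    have hsleV : s ≤ pairRate (g (j-1)) (g j) (chain g s (j-1)) qsup := by
      apply le_of_tendsto_of_tendsto (Filter.tendsto_id.mono_left nhdsWithin_le_nhds) hFt
      apply Filter.eventually_of_mem self_mem_nhdsWithin
      intro r hr
      obtain ⟨hc0, hc1, hcm, hce⟩ := chain_props hgj2 (hokIoo r hr) j (by omega) le_rfl
      have heq : pairRate (g (j-1)) (g j) (chain g r (j-1)) (chain g r j) = r :=
        hce (by omega)
      have hjm0 := (chain_props hgj2 (hokIoo r hr) (j-1) (by omega) (by omega)).1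
      have hjm1 := (chain_props hgj2 (hokIoo r hr) (j-1) (by omega) (by omega)).2.1
      have hchain_le : chain g r j ≤ qsup := le_csSup hTbdd (Set.mem_image_of_mem _ hr)
      show r ≤ pairRate (g (j - 1)) (g j) (chain g r (j - 1)) qsup
      calc r = pairRate (g (j-1)) (g j) (chain g r (j-1)) (chain g r j) := heq.symm
      _ ≤ pairRate (g (j-1)) (g j) (chain g r (j-1)) qsup := by
          rcases eq_or_lt_of_le hchain_le with he | hlt
          · rw [he]
          · exact le_of_lt (pairRate_strictMonoOn_q hgjm1 hgjpos hjm0 hjm1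
              (Set.mem_Icc.mpr ⟨hcm.le, hc1.le⟩)
              (Set.mem_Icc.mpr ⟨le_trans hcm.le hchain_le, hqsup_le_one⟩) hlt)
    have hVlt : pairRate (g (j-1)) (g j) (chain g s (j-1)) qsup
        < pairRate (g (j-1)) (g j) (chain g s (j-1)) 1 :=
      pairRate_strictMonoOn_q hgjm1 hgjpos hpS0 hpS1
        (Set.mem_Icc.mpr ⟨hple, hqsup_le_one⟩)
        (Set.mem_Icc.mpr ⟨hpS1.le, le_rfl⟩) hq1
    rw [pairRate_one hgjm1 hgjpos hpS0] at hVlt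
    linarith
  -- final contradiction: find r with HFun ≥ 0
  have hC1 : Real.exp (-(s/2) / g N) < 1 := by
    rw [Real.exp_lt_one_iff]
    apply div_neg_of_neg_of_pos _ hgNpos
    linarith
  obtain ⟨y, hy, hCy⟩ := exists_lt_of_lt_csSup hTne (hqsup1 ▸ hC1)
  obtain ⟨r1, hr1, rfl⟩ := hy
  set r2 : ℝ := max r1 (3/4 * s) with hr2def
  have hr2mem : r2 ∈ Ioo 0 s := ⟨lt_of_lt_of_le hr1.1 (le_max_left _ _),
    max_lt hr1.2 (by linarith)⟩
  have hokr2 : ok g N r2 := hokIooN r2 hr2mem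
  have hchain12 : chain g r1 j ≤ chain g r2 j := by
    rcases eq_or_lt_of_le (le_max_left r1 (3/4 * s)) with he | hlt
    · have he2 : r2 = r1 := by rw [hr2def, ← he]
      rw [he2]
    · exact (chain_mono_r hgj2 (hokIoo r1 hr1) (hokIoo r2 hr2mem) hlt j (by omega) le_rfl).le
  have hchain2N : chain g r2 j ≤ chain g r2 N :=
    chain_index_strict hgN hokr2 j N (by omega) hjN le_rfl
  have hCd : Real.exp (-(s/2) / g N) < chain g r2 N :=
    lt_of_lt_of_le hCy (le_trans hchain12 hchain2N)
  have hlogC : -(s/2) / g N < Real.log (chain g r2 N) := by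
    calc -(s/2) / g N = Real.log (Real.exp (-(s/2) / g N)) := (Real.log_exp _).symm
    _ < Real.log (chain g r2 N) := Real.log_lt_log (Real.exp_pos _) hCd
  have hHpos : 0 < HFun g N r2 := by
    unfold HFun
    have h34 : 3/4 * s ≤ r2 := le_max_right _ _
    have : -(s/2) < g N * Real.log (chain g r2 N) := by
      rw [div_lt_iff₀ hgNpos] at hlogC
      nlinarith
    linarith
  linarith [hcon r2 hokr2]
end exist2

section main
variable {M : ℕ} {g : ℕ → ℝ}

lemma t_mono_le {t : ℕ → ℝ} {K : ℕ} (h : ∀ i, i < K → t i ≤ t (i+1)) :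
    ∀ i j, i ≤ j → j ≤ K → t i ≤ t j := by
  intro i j hij hjK
  induction j with
  | zero =>
    have : i = 0 := by omega
    rw [this]
  | succ n ih =>
    rcases Nat.lt_or_ge i (n+1) with hi | hi
    · exact le_trans (ih (by omega) (by omega)) (h n (by omega))
    · have : i = n + 1 := by omega
      rw [this]

lemma t_mono_lt {t : ℕ → ℝ} {K : ℕ} (h : ∀ i, i < K → t i < t (i+1)) :
    ∀ i j, i < j → j ≤ K → t i < t j := by
  intro i j hij hjK
  induction j with
  | zero => omega
  | succ n ih =>
    rcases Nat.lt_or_ge i n with hi | hi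
    · exact lt_trans (ih (by omega) (by omega)) (h n (by omega))
    · have : i = n := by omega
      rw [this]
      exact h n (by omega)

lemma rateAt_one (t : ℕ → ℝ) : rateAt M g t 1 = -(g 1) * Real.log (1 - t 1) := if_pos rfl

lemma rateAt_last (hM : 3 ≤ M) (t : ℕ → ℝ) :
    rateAt M g t (M-1) = -(g (M - 2)) * Real.log (t (M - 2)) := by
  rw [rateAt, if_neg (by omega), if_pos rfl]

lemma rateAt_mid (hM : 3 ≤ M) (t : ℕ → ℝ) {i : ℕ} (h2 : 2 ≤ i) (hi : i ≤ M - 2) :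
    rateAt M g t i = pairRate (g (i - 1)) (g i) (t (i - 1)) (t i) := by
  rw [rateAt, if_neg (by omega), if_neg (by omega)]

lemma minRate_le (hM : 3 ≤ M) (t : ℕ → ℝ) {i : ℕ} (h1 : 1 ≤ i) (h2 : i ≤ M - 1) :
    minRate M g t ≤ rateAt M g t i := by
  rw [minRate]
  have he : {x | ∃ i, 1 ≤ i ∧ i ≤ M - 1 ∧ x = rateAt M g t i}
      = rateAt M g t '' (Icc 1 (M-1)) := by
    ext x
    constructor
    · rintro ⟨i, hi1, hi2, rfl⟩
      exact ⟨i, ⟨hi1, hi2⟩, rfl⟩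
    · rintro ⟨i, ⟨hi1, hi2⟩, rfl⟩
      exact ⟨i, hi1, hi2, rfl⟩
  have hbdd : BddBelow {x | ∃ i, 1 ≤ i ∧ i ≤ M - 1 ∧ x = rateAt M g t i} := by
    rw [he]
    exact ((Set.finite_Icc 1 (M-1)).image _).bddBelow
  exact csInf_le hbdd ⟨i, h1, h2, rfl⟩

lemma le_minRate (hM : 3 ≤ M) (t : ℕ → ℝ) {c : ℝ}
    (h : ∀ i, 1 ≤ i → i ≤ M - 1 → c ≤ rateAt M g t i) : c ≤ minRate M g t := by
  rw [minRate]
  refine le_csInf ⟨rateAt M g t 1, 1, le_rfl, by omega, rfl⟩ ?_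
  rintro x ⟨i, h1, h2, rfl⟩
  exact h i h1 h2
end main


set_option maxHeartbeats 2000000 in
/-- **Existence, uniqueness, and maximin optimality of the equalized solution.**
For `M ≥ 3` and positive weights `g₁,…,g_{M-2}` there is a unique equalized solution `t*`,
it maximizes `R(t) = min` of the `M-1` rates over all monotone vectors with `t₀ = 0`,
`t_{M-1} = 1`, and any maximizer of `R` over this set equals `t*`. -/
theorem equalized_unique_and_maximin
    (M : ℕ) (hM : 3 ≤ M) (g : ℕ → ℝ)
    (hg : ∀ i, 1 ≤ i → i ≤ M - 2 → 0 < g i) :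
    ∃ tstar : ℕ → ℝ,
      IsEqualizedSol M g tstar ∧
      (∀ t : ℕ → ℝ, IsEqualizedSol M g t → ∀ i, i < M → t i = tstar i) ∧
      (∀ t : ℕ → ℝ, t 0 = 0 → t (M - 1) = 1 → (∀ i, i < M - 1 → t i ≤ t (i + 1)) →
        minRate M g t ≤ minRate M g tstar) ∧
      (∀ t : ℕ → ℝ, t 0 = 0 → t (M - 1) = 1 → (∀ i, i < M - 1 → t i ≤ t (i + 1)) →
        minRate M g t = minRate M g tstar → ∀ i, i < M → t i = tstar i) := by
  set N : ℕ := M - 2 with hNdef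
  have hN1 : 1 ≤ N := by omega
  have hM1 : M - 1 = N + 1 := by omega
  have hgN : ∀ i, 1 ≤ i → i ≤ N → 0 < g i := fun i h1 h2 => hg i h1 (by omega)
  have hg1 : 0 < g 1 := hgN 1 le_rfl hN1
  have hgNN : 0 < g N := hgN N hN1 le_rfl
  -- find a small point where HFun < 0
  obtain ⟨δ, hδ0, hδ⟩ := small_r hgN N hN1 le_rfl (Real.exp (-(2 / g N))) (Real.exp_pos _)
  have hmin0 : 0 < min δ 1 := lt_min hδ0 one_pos
  have haa0 : 0 < min δ 1 / 2 := by linarith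
  have haaδ : min δ 1 / 2 < δ := by
    have := min_le_left δ 1; linarith
  have haa1 : min δ 1 / 2 < 1 := by
    have := min_le_right δ 1; linarith
  obtain ⟨hokaa, hcaa⟩ := hδ (min δ 1 / 2) haa0 haaδ
  have hHaa : HFun g N (min δ 1 / 2) < 0 := by
    unfold HFun
    have hcpos := (chain_props hgN hokaa N hN1 le_rfl).1
    have hlog := Real.log_lt_log hcpos hcaa
    rw [Real.log_exp] at hlog
    have he : g N * (-(2 / g N)) = -2 := by field_simp
    nlinarith
  obtain ⟨b, hokb, hHb⟩ := big_r hgN hN1 hokaa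
  have haab : min δ 1 / 2 < b := by
    rcases lt_trichotomy (min δ 1 / 2) b with h | h | h
    · exact h
    · exfalso; rw [h] at hHaa; linarith
    · exfalso; linarith [HFun_mono hgN hN1 hokb hokaa h]
  have hcontH : ContinuousOn (HFun g N) (Icc (min δ 1 / 2) b) :=
    (HFun_contOn hgN hN1 hokb).mono (fun x hx => ⟨lt_of_lt_of_le haa0 hx.1, hx.2⟩)
  obtain ⟨rstar, hrmem, hHr⟩ := intermediate_value_Icc haab.le hcontH ⟨hHaa.le, hHb⟩
  have hokr : ok g N rstar := ok_of_mem hgN hokb ⟨lt_of_lt_of_le haa0 hrmem.1, hrmem.2⟩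
  have hr0 : 0 < rstar := hokr.1
  have hroot_uniq : ∀ r', ok g N r' → HFun g N r' = 0 → r' = rstar := by
    intro r' hok' hH'
    rcases lt_trichotomy r' rstar with h | h | h
    · have := HFun_mono hgN hN1 hok' hokr h; rw [hH', hHr] at this; linarith
    · exact h
    · have := HFun_mono hgN hN1 hokr hok' h; rw [hH', hHr] at this; linarith
  -- the equalized solution
  set tstar : ℕ → ℝ := fun i => if i ≤ N then chain g rstar i else 1 with htstardef
  have htseq : ∀ i, i ≤ N → tstar i = chain g rstar i := fun i hi => if_pos hi
  have htstar0 : tstar 0 = 0 := by rw [htseq 0 (by omega), chain_zero]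
  have htstarM1 : tstar (M-1) = 1 := by
    rw [htstardef]
    simp only []
    rw [if_neg (by omega)]
  have hprops := chain_props hgN hokr
  have hlast : -(g N * Real.log (chain g rstar N)) = rstar := by
    unfold HFun at hHr; linarith
  have hts_strict : ∀ i, i < M - 1 → tstar i < tstar (i+1) := by
    intro i hi
    rw [hM1] at hi
    rcases Nat.lt_or_ge i N with h | h
    · rw [htseq i (by omega), htseq (i+1) (by omega)]
      have := (hprops (i+1) (by omega) (by omega)).2.2.1
      simpa using this
    · have hiN : i = N := by omega
      rw [hiN, htseq N le_rfl, htstardef]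
      simp only []
      rw [if_neg (by omega)]
      exact (hprops N hN1 le_rfl).2.1
  have hrates : ∀ i, 1 ≤ i → i ≤ M - 1 → rateAt M g tstar i = rstar := by
    intro i h1 h2
    rcases eq_or_ne i 1 with rfl | hne1
    · rw [rateAt_one, htseq 1 hN1, chain_one]
      have : (1 : ℝ) - (1 - Real.exp (-rstar / g 1)) = Real.exp (-rstar / g 1) := by ring
      rw [this, Real.log_exp]
      field_simp
    rcases eq_or_ne i (M-1) with rfl | hne2
    · rw [rateAt_last hM, show M - 2 = N from rfl, htseq N le_rfl]
      linarith [hlast]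
    · have h2' : 2 ≤ i := by omega
      have hiN : i ≤ N := by omega
      rw [rateAt_mid hM _ h2' (by omega), htseq (i-1) (by omega), htseq i hiN]
      exact (hprops i (by omega) hiN).2.2.2 h2'
  have hminr : minRate M g tstar = rstar := by
    apply le_antisymm
    · have := minRate_le (g := g) hM tstar (i := 1) le_rfl (by omega)
      rwa [hrates 1 le_rfl (by omega)] at this
    · exact le_minRate hM tstar (fun i h1 h2 => (hrates i h1 h2).ge)
  refine ⟨tstar, ⟨rstar, htstar0, htstarM1, hts_strict, hrates⟩, ?_, ?_, ?_⟩
  · -- uniqueness of equalized solutions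
    rintro t ⟨r, ht0, ht1, htlt, htr⟩ i hiM
    have tchain_lt : ∀ i j, i < j → j ≤ M-1 → t i < t j := fun i j hij hj =>
      t_mono_lt htlt i j hij hj
    have t1pos : 0 < t 1 := by
      have := tchain_lt 0 1 (by omega) (by omega); rwa [ht0] at this
    have t1lt1 : t 1 < 1 := by
      have := tchain_lt 1 (M-1) (by omega) le_rfl; rwa [ht1] at this
    have hr_pos : 0 < r := by
      have he := htr 1 le_rfl (by omega)
      rw [rateAt_one] at he
      have hlogneg : Real.log (1 - t 1) < 0 := Real.log_neg (by linarith) (by linarith)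
      nlinarith
    have hind : ∀ i, 1 ≤ i → i ≤ N → ok g i r ∧ chain g r i = t i := by
      intro i
      induction i with
      | zero => omega
      | succ n ih =>
        intro _ hik
        rcases Nat.eq_zero_or_pos n with rfl | hn
        · refine ⟨⟨hr_pos, fun i h1 h2 => absurd h2 (by omega)⟩, ?_⟩
          have he := htr 1 le_rfl (by omega)
          rw [rateAt_one] at he
          have hlogeq : Real.log (1 - t 1) = -r / g 1 := by
            field_simp
            linarith
          rw [chain_one, ← hlogeq, Real.exp_log (by linarith)]
          ring
        · obtain ⟨okn, hceq⟩ := ih (by omega) (by omega)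
          have he := htr (n+1) (by omega) (by omega)
          rw [rateAt_mid hM t (by omega) (by omega)] at he
          simp only [Nat.add_sub_cancel] at he
          have tn_pos : 0 < t n := by
            have := tchain_lt 0 n (by omega) (by omega); rwa [ht0] at this
          have tn_lt1 : t n < 1 := by
            have := tchain_lt n (M-1) (by omega) le_rfl; rwa [ht1] at this
          have tn1_lt1 : t (n+1) < 1 := by
            have := tchain_lt (n+1) (M-1) (by omega) le_rfl; rwa [ht1] at this
          have tnn1 : t n < t (n+1) := tchain_lt n (n+1) (by omega) (by omega)
          have hgn := hgN n hn (by omega)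
          have hgn1 := hgN (n+1) (by omega) hik
          have hthr : r < -(g n * Real.log (t n)) := by
            have hlt := pairRate_strictMonoOn_q hgn hgn1 tn_pos tn_lt1
              (Set.mem_Icc.mpr ⟨tnn1.le, tn1_lt1.le⟩)
              (Set.mem_Icc.mpr ⟨tn_lt1.le, le_rfl⟩) tn1_lt1
            rw [pairRate_one hgn hgn1 tn_pos] at hlt
            rw [he] at hlt
            exact hlt
          have okn1 : ok g (n+1) r := by
            refine ⟨hr_pos, fun i h1 h2 => ?_⟩
            rcases Nat.lt_or_ge i n with h | h
            · exact okn.2 i h1 h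
            · have : i = n := by omega
              subst this
              rw [hceq]
              exact hthr
          refine ⟨okn1, ?_⟩
          have hgn1' : ∀ i, 1 ≤ i → i ≤ n+1 → 0 < g i := fun i h1 h2 => hgN i h1 (by omega)
          obtain ⟨hc0, hc1, hcm, hce⟩ := chain_props hgn1' okn1 (n+1) (by omega) le_rfl
          simp only [Nat.add_sub_cancel] at hcm hce
          obtain ⟨q, _, huniq⟩ := pairRate_solve hgn hgn1 tn_pos tn_lt1 hr_pos hthr
          have e1 : chain g r (n+1) = q := by
            apply huniq
            · rw [← hceq]; exact hcm
            · exact hc1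
            · rw [← hceq]; exact hce (by omega)
          have e2 : t (n+1) = q := huniq _ tnn1 tn1_lt1 he
          rw [e1, e2]
    have okNr : ok g N r := (hind N hN1 le_rfl).1
    have hHr' : HFun g N r = 0 := by
      have he := htr (M-1) (by omega) le_rfl
      rw [rateAt_last hM, show M - 2 = N from rfl] at he
      unfold HFun
      rw [(hind N hN1 le_rfl).2]
      linarith
    have hrr : r = rstar := hroot_uniq r okNr hHr'
    subst hrr
    rcases Nat.eq_zero_or_pos i with rfl | hi0
    · rw [ht0, htstar0]
    rcases eq_or_ne i (M-1) with rfl | hne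
    · rw [ht1, htstarM1]
    · have hiN : 1 ≤ i ∧ i ≤ N := by omega
      rw [← (hind i hiN.1 hiN.2).2, htseq i hiN.2]
  · -- maximin inequality
    intro t ht0 ht1 htle
    rw [hminr]
    by_contra hcon
    push_neg at hcon
    have hrate_gt : ∀ i, 1 ≤ i → i ≤ M - 1 → rstar < rateAt M g t i :=
      fun i h1 h2 => lt_of_lt_of_le hcon (minRate_le hM t h1 h2)
    have tmono : ∀ i j, i ≤ j → j ≤ M-1 → t i ≤ t j := t_mono_le htle
    have tnn : ∀ i, i ≤ M-1 → 0 ≤ t i := by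
      intro i hi
      have := tmono 0 i (by omega) hi; rwa [ht0] at this
    have tle1 : ∀ i, i ≤ M-1 → t i ≤ 1 := by
      intro i hi
      have := tmono i (M-1) hi le_rfl; rwa [ht1] at this
    have hfwd : ∀ i, 1 ≤ i → i ≤ N → chain g rstar i < t i := by
      intro i
      induction i with
      | zero => omega
      | succ n ih =>
        intro _ hik
        rcases Nat.eq_zero_or_pos n with rfl | hn
        · have hgt := hrate_gt 1 le_rfl (by omega)
          rw [rateAt_one] at hgt
          have t1lt1 : t 1 < 1 := by
            rcases lt_or_eq_of_le (tle1 1 (by omega)) with h | h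
            · exact h
            · exfalso
              rw [h] at hgt
              simp [Real.log_zero] at hgt
              linarith
          have hlog : Real.log (1 - t 1) < -rstar / g 1 := by
            rw [lt_div_iff₀ hg1]
            nlinarith
          have : 1 - t 1 < Real.exp (-rstar / g 1) := by
            calc 1 - t 1 = Real.exp (Real.log (1 - t 1)) :=
                  (Real.exp_log (by linarith [tle1 1 (show (1:ℕ) ≤ M - 1 by omega)])).symm
            _ < Real.exp (-rstar / g 1) := Real.exp_lt_exp.mpr hlog
          rw [chain_one]
          linarith
      -- inductive step
        · have hlt := ih hn (by omega)
          have hgt := hrate_gt (n+1) (by omega) (by omega)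
          rw [rateAt_mid hM t (by omega) (by omega)] at hgt
          simp only [Nat.add_sub_cancel] at hgt
          obtain ⟨hcn0, hcn1, _, _⟩ := hprops n hn (by omega)
          obtain ⟨hcn10, hcn11, hcnm, hcne⟩ := hprops (n+1) (by omega) hik
          simp only [Nat.add_sub_cancel] at hcnm hcne
          have heq : pairRate (g n) (g (n+1)) (chain g rstar n) (chain g rstar (n+1))
              = rstar := hcne (by omega)
          have hgn := hgN n hn (by omega)
          have hgn1 := hgN (n+1) (by omega) hik
          have tnn1 : t n < t (n+1) := by
            rcases lt_or_eq_of_le (tmono n (n+1) (by omega) (by omega)) with h | h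
            · exact h
            · exfalso
              rw [← h] at hgt
              rw [pairRate_self hgn hgn1 (tnn n (by omega)) (tle1 n (by omega))] at hgt
              linarith
          by_contra hcontra
          push_neg at hcontra
          -- t (n+1) ≤ chain g rstar (n+1)
          have h1 : pairRate (g n) (g (n+1)) (t n) (t (n+1))
              < pairRate (g n) (g (n+1)) (chain g rstar n) (t (n+1)) :=
            pairRate_strictAntiOn_p hgn hgn1 (lt_of_lt_of_le (lt_trans hcn0 hlt) tnn1.le)
              (le_trans hcontra hcn11.le)
              (Set.mem_Ioc.mpr ⟨hcn0, le_trans hlt.le tnn1.le⟩)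
              (Set.mem_Ioc.mpr ⟨lt_trans hcn0 hlt, tnn1.le⟩) hlt
          have h2 : pairRate (g n) (g (n+1)) (chain g rstar n) (t (n+1))
              ≤ pairRate (g n) (g (n+1)) (chain g rstar n) (chain g rstar (n+1)) := by
            rcases eq_or_lt_of_le hcontra with he | hlt2
            · rw [he]
            · exact le_of_lt (pairRate_strictMonoOn_q hgn hgn1 hcn0 hcn1
                (Set.mem_Icc.mpr ⟨le_trans hlt.le tnn1.le, le_trans hcontra hcn11.le⟩)
                (Set.mem_Icc.mpr ⟨hcnm.le, hcn11.le⟩) hlt2)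
          rw [heq] at h2
          linarith
    have hgt := hrate_gt (M-1) (by omega) le_rfl
    rw [rateAt_last hM, show M - 2 = N from rfl] at hgt
    have hNlt := hfwd N hN1 le_rfl
    have hcN0 := (hprops N hN1 le_rfl).1
    have hloglt : Real.log (chain g rstar N) < Real.log (t N) :=
      Real.log_lt_log hcN0 hNlt
    nlinarith
  · -- uniqueness of the maximizer
    intro t ht0 ht1 htle heq
    rw [hminr] at heq
    have hrate_ge : ∀ i, 1 ≤ i → i ≤ M - 1 → rstar ≤ rateAt M g t i :=
      fun i h1 h2 => heq ▸ minRate_le hM t h1 h2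
    have tmono : ∀ i j, i ≤ j → j ≤ M-1 → t i ≤ t j := t_mono_le htle
    have tnn : ∀ i, i ≤ M-1 → 0 ≤ t i := by
      intro i hi
      have := tmono 0 i (by omega) hi; rwa [ht0] at this
    have tle1 : ∀ i, i ≤ M-1 → t i ≤ 1 := by
      intro i hi
      have := tmono i (M-1) hi le_rfl; rwa [ht1] at this
    have hfwd : ∀ i, 1 ≤ i → i ≤ N → chain g rstar i ≤ t i := by
      intro i
      induction i with
      | zero => omega
      | succ n ih =>
        intro _ hik
        rcases Nat.eq_zero_or_pos n with rfl | hn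
        · have hgt := hrate_ge 1 le_rfl (by omega)
          rw [rateAt_one] at hgt
          have t1lt1 : t 1 < 1 := by
            rcases lt_or_eq_of_le (tle1 1 (by omega)) with h | h
            · exact h
            · exfalso
              rw [h] at hgt
              simp [Real.log_zero] at hgt
              linarith
          have hlog : Real.log (1 - t 1) ≤ -rstar / g 1 := by
            rw [le_div_iff₀ hg1]
            nlinarith
          have : 1 - t 1 ≤ Real.exp (-rstar / g 1) := by
            calc 1 - t 1 = Real.exp (Real.log (1 - t 1)) :=
                  (Real.exp_log (by linarith [tle1 1 (show (1:ℕ) ≤ M - 1 by omega)])).symm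
            _ ≤ Real.exp (-rstar / g 1) := Real.exp_le_exp.mpr hlog
          rw [chain_one]
          linarith
        · have hge := ih hn (by omega)
          have hgt := hrate_ge (n+1) (by omega) (by omega)
          rw [rateAt_mid hM t (by omega) (by omega)] at hgt
          simp only [Nat.add_sub_cancel] at hgt
          obtain ⟨hcn0, hcn1, _, _⟩ := hprops n hn (by omega)
          obtain ⟨hcn10, hcn11, hcnm, hcne⟩ := hprops (n+1) (by omega) hik
          simp only [Nat.add_sub_cancel] at hcnm hcne
          have heqc : pairRate (g n) (g (n+1)) (chain g rstar n) (chain g rstar (n+1))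
              = rstar := hcne (by omega)
          have hgn := hgN n hn (by omega)
          have hgn1 := hgN (n+1) (by omega) hik
          have tnn1 : t n < t (n+1) := by
            rcases lt_or_eq_of_le (tmono n (n+1) (by omega) (by omega)) with h | h
            · exact h
            · exfalso
              rw [← h] at hgt
              rw [pairRate_self hgn hgn1 (tnn n (by omega)) (tle1 n (by omega))] at hgt
              linarith
          by_contra hcontra
          push_neg at hcontra
          -- hcontra : t (n+1) < chain g rstar (n+1)
          have h1 : pairRate (g n) (g (n+1)) (t n) (t (n+1))
              ≤ pairRate (g n) (g (n+1)) (chain g rstar n) (t (n+1)) := by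
            rcases eq_or_lt_of_le hge with he | hlt
            · rw [he]
            · exact le_of_lt (pairRate_strictAntiOn_p hgn hgn1
                (lt_of_le_of_lt (le_trans hcn0.le hge) tnn1)
                (le_trans hcontra.le hcn11.le)
                (Set.mem_Ioc.mpr ⟨hcn0, le_trans hge tnn1.le⟩)
                (Set.mem_Ioc.mpr ⟨lt_of_lt_of_le hcn0 hge, tnn1.le⟩) hlt)
          have h2 : pairRate (g n) (g (n+1)) (chain g rstar n) (t (n+1))
              < pairRate (g n) (g (n+1)) (chain g rstar n) (chain g rstar (n+1)) :=
            pairRate_strictMonoOn_q hgn hgn1 hcn0 hcn1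
              (Set.mem_Icc.mpr ⟨le_trans hge tnn1.le, le_trans hcontra.le hcn11.le⟩)
              (Set.mem_Icc.mpr ⟨hcnm.le, hcn11.le⟩) hcontra
          rw [heqc] at h2
          linarith
    -- top equality
    have hgtN := hrate_ge (M-1) (by omega) le_rfl
    rw [rateAt_last hM, show M - 2 = N from rfl] at hgtN
    obtain ⟨hcN0, hcN1, _, _⟩ := hprops N hN1 le_rfl
    have htN : t N = chain g rstar N := by
      rcases eq_or_lt_of_le (hfwd N hN1 le_rfl) with he | hlt
      · exact he.symm
      · exfalso
        have hloglt : Real.log (chain g rstar N) < Real.log (t N) :=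
          Real.log_lt_log hcN0 hlt
        nlinarith
    -- backward induction
    have hbk : ∀ m, m ≤ N - 1 → t (N - m) = chain g rstar (N - m) := by
      intro m
      induction m with
      | zero => intro _; simpa using htN
      | succ mm ihm =>
        intro hm
        have hprev : t (N - mm) = chain g rstar (N - mm) := ihm (by omega)
        have hi1 : 1 ≤ N - (mm+1) := by omega
        have hip1 : N - (mm+1) + 1 = N - mm := by omega
        have h2i : 2 ≤ N - mm := by omega
        have hgt := hrate_ge (N - mm) (by omega) (by omega)
        rw [rateAt_mid hM t h2i (by omega)] at hgt
        have hsub : N - mm - 1 = N - (mm+1) := by omega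
        rw [hsub] at hgt
        obtain ⟨hci0, hci1, _, _⟩ := hprops (N - (mm+1)) hi1 (by omega)
        obtain ⟨hcj0, hcj1, hcjm, hcje⟩ := hprops (N - mm) (by omega) (by omega)
        rw [hsub] at hcjm hcje
        have heqc : pairRate (g (N - (mm+1))) (g (N - mm)) (chain g rstar (N - (mm+1)))
            (chain g rstar (N - mm)) = rstar := hcje h2i
        have hge := hfwd (N - (mm+1)) hi1 (by omega)
        rcases eq_or_lt_of_le hge with he | hlt
        · exact he.symm
        · exfalso
          have hgnn := hgN (N - (mm+1)) hi1 (by omega)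
          have hgnn1 := hgN (N - mm) (by omega) (by omega)
          have htle' : t (N - (mm+1)) ≤ t (N - mm) :=
            tmono (N - (mm+1)) (N - mm) (by omega) (by omega)
          have h1 : pairRate (g (N - (mm+1))) (g (N - mm)) (t (N - (mm+1))) (t (N - mm))
              < pairRate (g (N - (mm+1))) (g (N - mm)) (chain g rstar (N - (mm+1)))
                (t (N - mm)) := by
            apply pairRate_strictAntiOn_p hgnn hgnn1
              (by rw [hprev]; exact hcj0) (by rw [hprev]; exact hcj1.le)
              (Set.mem_Ioc.mpr ⟨hci0, by rw [hprev]; exact hcjm.le⟩)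
              (Set.mem_Ioc.mpr ⟨lt_of_lt_of_le hci0 hge, htle'⟩) hlt
          rw [hprev, heqc] at h1
          rw [hprev] at hgt
          linarith
    intro i hiM
    rcases Nat.eq_zero_or_pos i with rfl | hi0
    · rw [ht0, htstar0]
    rcases eq_or_ne i (M-1) with rfl | hne
    · rw [ht1, htstarM1]
    · have hiN : 1 ≤ i ∧ i ≤ N := by omega
      have := hbk (N - i) (by omega)
      rw [show N - (N - i) = i by omega] at this
      rw [this, htseq i hiN.2]
end

section
/- Let M ≥ 3, let k ∈ {1,…,M−2}, and let g₁,…,g_{M−2} > 0 and g̃₁,…,g̃_{M−2} > 0 be two weight vectors such that g_j ≥ g̃_j for all j ∈ {k+1,…,M−2}, g_j ≤ g̃_j for all j ∈ {1,…,k−1}, and g_k = g̃_k. Let t* and t̃* be the equalized solutions for the weights g and g̃, respectively. Then t*_k ≥ t̃*_k. -/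
section Aux

open Real


private lemma holder2 {a b c d s : ℝ} (ha : 0 < a) (hb : 0 < b) (hc : 0 < c) (hd : 0 < d)
    (hs0 : 0 ≤ s) (hs1 : s ≤ 1) :
    a ^ s * c ^ (1 - s) + b ^ s * d ^ (1 - s) ≤ (a + b) ^ s * (c + d) ^ (1 - s) := by
  have hX : 0 < a + b := by linarith
  have hY : 0 < c + d := by linarith
  have hXs : 0 < (a + b) ^ s := rpow_pos_of_pos hX _
  have hYs : 0 < (c + d) ^ (1 - s) := rpow_pos_of_pos hY _
  have key : ∀ x y : ℝ, 0 < x → 0 < y →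
      x ^ s * y ^ (1 - s) ≤
        ((a + b) ^ s * (c + d) ^ (1 - s)) * (s * (x / (a + b)) + (1 - s) * (y / (c + d))) := by
    intro x y hx hy
    have h1 : (x / (a + b)) ^ s * (y / (c + d)) ^ (1 - s) ≤
        s * (x / (a + b)) + (1 - s) * (y / (c + d)) :=
      Real.geom_mean_le_arith_mean2_weighted hs0 (by linarith)
        (div_nonneg hx.le hX.le) (div_nonneg hy.le hY.le) (by ring)
    have h2 : (x / (a + b)) ^ s = x ^ s / (a + b) ^ s := Real.div_rpow hx.le hX.le s
    have h3 : (y / (c + d)) ^ (1 - s) = y ^ (1 - s) / (c + d) ^ (1 - s) :=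
      Real.div_rpow hy.le hY.le (1-s)
    rw [h2, h3] at h1
    calc x ^ s * y ^ (1 - s)
        = ((a + b) ^ s * (c + d) ^ (1 - s)) *
            (x ^ s / (a + b) ^ s * (y ^ (1 - s) / (c + d) ^ (1 - s))) := by
          field_simp
      _ ≤ _ := by
          apply mul_le_mul_of_nonneg_left h1 (by positivity)
  have k1 := key a c ha hc
  have k2 := key b d hb hd
  have : a ^ s * c ^ (1 - s) + b ^ s * d ^ (1 - s) ≤
      ((a + b) ^ s * (c + d) ^ (1 - s)) *
        ((s * (a / (a + b)) + (1 - s) * (c / (c + d))) +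
         (s * (b / (a + b)) + (1 - s) * (d / (c + d)))) := by
    rw [mul_add]; exact add_le_add k1 k2
  calc a ^ s * c ^ (1 - s) + b ^ s * d ^ (1 - s) ≤ _ := this
    _ = (a + b) ^ s * (c + d) ^ (1 - s) := by field_simp; ring

/-- Bernoulli helper: for `0 < x`, `0 < y`, `0 ≤ mu ≤ 1`:  `x * y^mu ≤ x * x^mu + mu * x^mu * (y-x)`. -/
private lemma bern_aux {x y mu : ℝ} (hx : 0 < x) (hy : 0 < y) (hm0 : 0 ≤ mu) (hm1 : mu ≤ 1) :
    x * y ^ mu ≤ x * x ^ mu + mu * x ^ mu * (y - x) := by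
  have hz : -1 ≤ (y - x) / x := by
    rw [le_div_iff₀ hx]; linarith
  have hb := rpow_one_add_le_one_add_mul_self hz hm0 hm1
  have hxy : y = x * (1 + (y - x) / x) := by field_simp; ring
  have h1 : y ^ mu = x ^ mu * (1 + (y - x) / x) ^ mu := by
    rw [hxy, Real.mul_rpow hx.le (by linarith [hz])]
    rw [← hxy]
  have h2 := mul_le_mul_of_nonneg_left hb (le_of_lt (Real.rpow_pos_of_pos hx mu))
  calc x * y ^ mu = x * (x ^ mu * (1 + (y - x) / x) ^ mu) := by rw [h1]
    _ ≤ x * (x ^ mu * (1 + mu * ((y - x) / x))) := by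
        apply mul_le_mul_of_nonneg_left h2 hx.le
    _ = x * x ^ mu + mu * x ^ mu * (y - x) := by field_simp

private lemma S_lt {g h p q q' : ℝ} (hg : 0 < g) (hh : 0 < h)
    (hp : 0 < p) (hpq : p < q) (hqq : q < q') (hq1 : q' < 1) :
    (1 - p) ^ (g / (g + h)) * (1 - q') ^ (h / (g + h)) + p ^ (g / (g + h)) * q' ^ (h / (g + h))
      < (1 - p) ^ (g / (g + h)) * (1 - q) ^ (h / (g + h))
          + p ^ (g / (g + h)) * q ^ (h / (g + h)) := by
  have hgh : 0 < g + h := by linarith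
  set L := g / (g + h) with hL_def
  set U := h / (g + h) with hU_def
  have hL : 0 < L := by positivity
  have hU : 0 < U := by positivity
  have hLU : L + U = 1 := by rw [hL_def, hU_def]; field_simp
  have hU1 : U ≤ 1 := by linarith
  have hq : 0 < q := lt_trans hp hpq
  have hq'0 : 0 < q' := lt_trans hq hqq
  have h1q : 0 < 1 - q := by linarith
  have h1q' : 0 < 1 - q' := by linarith
  have hp1 : p < 1 := by linarith
  have h1p : 0 < 1 - p := by linarith
  have ha : 0 < (1 - p) ^ L := Real.rpow_pos_of_pos h1p _
  have hb : 0 < p ^ L := Real.rpow_pos_of_pos hp _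
  have hδ : 0 < q' - q := by linarith
  -- Bernoulli bounds
  have hB1 : q * q' ^ U ≤ q * q ^ U + U * q ^ U * (q' - q) := bern_aux hq hq'0 hU.le hU1
  have hB2 : (1 - q) * (1 - q') ^ U ≤
      (1 - q) * (1 - q) ^ U + U * (1 - q) ^ U * ((1 - q') - (1 - q)) :=
    bern_aux h1q h1q' hU.le hU1
  -- strict middle inequality
  have keyX : p ^ L * q ^ U * (1 - q) < (1 - p) ^ L * (1 - q) ^ U * q := by
    have e1 : p ^ L * q ^ U * (1 - q) = (p / q) ^ L * (q * (1 - q)) := by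
      rw [Real.div_rpow hp.le hq.le]
      have : q ^ U = q / q ^ L := by
        rw [eq_div_iff (by positivity), ← Real.rpow_add hq, add_comm U L, hLU, Real.rpow_one]
      rw [this]; field_simp
    have e2 : (1 - p) ^ L * (1 - q) ^ U * q = ((1 - p) / (1 - q)) ^ L * (q * (1 - q)) := by
      rw [Real.div_rpow h1p.le h1q.le]
      have : (1 - q) ^ U = (1 - q) / (1 - q) ^ L := by
        rw [eq_div_iff (by positivity), ← Real.rpow_add h1q, add_comm U L, hLU, Real.rpow_one]
      rw [this]; field_simp
    rw [e1, e2]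
    apply mul_lt_mul_of_pos_right _ (by positivity)
    apply Real.rpow_lt_rpow (by positivity) _ hL
    rw [div_lt_div_iff₀ hq h1q]; nlinarith
  have M1 := mul_le_mul_of_nonneg_left hB1 (mul_pos hb h1q).le
  have M2 := mul_le_mul_of_nonneg_left hB2 (mul_pos ha hq).le
  have K := mul_lt_mul_of_pos_left keyX (mul_pos hU hδ)
  nlinarith [M1, M2, K, mul_pos hq h1q]

private lemma S_pos {g h p q : ℝ} (hp : 0 < p) (hp1 : p < 1) (hq : 0 < q) (hq1 : q < 1) :
    0 < (1 - p) ^ (g / (g + h)) * (1 - q) ^ (h / (g + h))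
      + p ^ (g / (g + h)) * q ^ (h / (g + h)) := by
  have h1p : 0 < 1 - p := by linarith
  have h1q : 0 < 1 - q := by linarith
  positivity

/-- symmetry : `pairRate g h p q = pairRate h g (1-q) (1-p)` -/
private lemma pairRate_symm (g h p q : ℝ) :
    pairRate g h p q = pairRate h g (1 - q) (1 - p) := by
  unfold pairRate
  rw [show (1 : ℝ) - (1 - q) = q by ring, show (1 : ℝ) - (1 - p) = p by ring,
    add_comm h g]
  congr 1
  ring_nf

/-- strictly increasing in `q` -/
private lemma pairRate_lt_q {g h p q q' : ℝ} (hg : 0 < g) (hh : 0 < h)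
    (hp : 0 < p) (hpq : p < q) (hqq : q < q') (hq1 : q' < 1) :
    pairRate g h p q < pairRate g h p q' := by
  have hgh : 0 < g + h := by linarith
  have hq1' : q < 1 := by linarith
  have hp1 : p < 1 := by linarith
  have hq0 : 0 < q := lt_trans hp hpq
  have hq'0 : 0 < q' := by linarith
  have hS := S_lt hg hh hp hpq hqq hq1
  have hpos := S_pos (g := g) (h := h) hp hp1 hq'0 hq1
  unfold pairRate
  have hlog := Real.log_lt_log hpos hS
  nlinarith [hlog, hgh]

/-- non-strict version in `q` -/
private lemma pairRate_le_q {g h p q q' : ℝ} (hg : 0 < g) (hh : 0 < h)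
    (hp : 0 < p) (hpq : p < q) (hqq : q ≤ q') (hq1 : q' < 1) :
    pairRate g h p q ≤ pairRate g h p q' := by
  rcases eq_or_lt_of_le hqq with rfl | hlt
  · exact le_refl _
  · exact (pairRate_lt_q hg hh hp hpq hlt hq1).le

/-- strictly decreasing in `p` -/
private lemma pairRate_lt_p {g h p p' q : ℝ} (hg : 0 < g) (hh : 0 < h)
    (hp : 0 < p) (hpp : p < p') (hpq : p' < q) (hq1 : q < 1) :
    pairRate g h p' q < pairRate g h p q := by
  rw [pairRate_symm g h p' q, pairRate_symm g h p q]
  exact pairRate_lt_q hh hg (by linarith) (by linarith) (by linarith) (by linarith)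

private lemma pairRate_le_p {g h p p' q : ℝ} (hg : 0 < g) (hh : 0 < h)
    (hp : 0 < p) (hpp : p ≤ p') (hpq : p' < q) (hq1 : q < 1) :
    pairRate g h p' q ≤ pairRate g h p q := by
  rcases eq_or_lt_of_le hpp with rfl | hlt
  · exact le_refl _
  · exact (pairRate_lt_p hg hh hp hlt hpq hq1).le

/-- monotone (non-strict) in the first weight `g` -/
private lemma pairRate_mono_g {g g' h p q : ℝ} (hg' : 0 < g') (hgg : g' ≤ g) (hh : 0 < h)
    (hp : 0 < p) (hp1 : p < 1) (hq : 0 < q) (hq1 : q < 1) :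
    pairRate g' h p q ≤ pairRate g h p q := by
  have hg : 0 < g := lt_of_lt_of_le hg' hgg
  have hc : 0 < g + h := by linarith
  have hc' : 0 < g' + h := by linarith
  have h1p : 0 < 1 - p := by linarith
  have h1q : 0 < 1 - q := by linarith
  set s : ℝ := (g' + h) / (g + h) with hs_def
  have hs0 : 0 < s := by positivity
  have hs1 : s ≤ 1 := by
    rw [hs_def, div_le_one hc]; linarith
  set A : ℝ := (1 - p) ^ (g' / (g' + h)) * (1 - q) ^ (h / (g' + h)) with hA_def
  set B : ℝ := p ^ (g' / (g' + h)) * q ^ (h / (g' + h)) with hB_def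
  have hA : 0 < A := by rw [hA_def]; positivity
  have hB : 0 < B := by rw [hB_def]; positivity
  have eA : A ^ s = (1 - p) ^ (g' / (g + h)) * (1 - q) ^ (h / (g + h)) := by
    rw [hA_def, Real.mul_rpow (by positivity) (by positivity),
      ← Real.rpow_mul h1p.le, ← Real.rpow_mul h1q.le, hs_def]
    congr 2 <;> field_simp
  have eB : B ^ s = p ^ (g' / (g + h)) * q ^ (h / (g + h)) := by
    rw [hB_def, Real.mul_rpow (by positivity) (by positivity),
      ← Real.rpow_mul hp.le, ← Real.rpow_mul hq.le, hs_def]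
    congr 2 <;> field_simp
  have exp_eq : g' / (g + h) + (1 - s) = g / (g + h) := by
    rw [hs_def]; field_simp; ring
  have key1 : A ^ s * (1 - p) ^ (1 - s)
      = (1 - p) ^ (g / (g + h)) * (1 - q) ^ (h / (g + h)) := by
    rw [eA, mul_right_comm, ← Real.rpow_add h1p, exp_eq]
  have key2 : B ^ s * p ^ (1 - s) = p ^ (g / (g + h)) * q ^ (h / (g + h)) := by
    rw [eB, mul_right_comm, ← Real.rpow_add hp, exp_eq]
  have holder := holder2 hA hB h1p hp hs0.le hs1
  rw [key1, key2, show (1 - p) + p = (1 : ℝ) by ring, Real.one_rpow, mul_one] at holder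
  -- now : S_g ≤ (A+B)^s
  have hSg : 0 < (1 - p) ^ (g / (g + h)) * (1 - q) ^ (h / (g + h))
      + p ^ (g / (g + h)) * q ^ (h / (g + h)) := S_pos hp hp1 hq hq1
  have hAB : 0 < A + B := by linarith
  have hlog : Real.log ((1 - p) ^ (g / (g + h)) * (1 - q) ^ (h / (g + h))
      + p ^ (g / (g + h)) * q ^ (h / (g + h))) ≤ s * Real.log (A + B) := by
    calc Real.log _ ≤ Real.log ((A + B) ^ s) := Real.log_le_log hSg holder
      _ = s * Real.log (A + B) := Real.log_rpow hAB s
  unfold pairRate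
  rw [← hA_def, ← hB_def]
  have hmul : (g + h) * s = g' + h := by
    rw [hs_def]; field_simp
  calc -(g' + h) * Real.log (A + B) = -(g + h) * (s * Real.log (A + B)) := by
        rw [← hmul]; ring
    _ ≤ -(g + h) * Real.log ((1 - p) ^ (g / (g + h)) * (1 - q) ^ (h / (g + h))
          + p ^ (g / (g + h)) * q ^ (h / (g + h))) := by
        apply mul_le_mul_of_nonpos_left hlog (by linarith)

/-- monotone (non-strict) in the second weight `h` -/
private lemma pairRate_mono_h {g h h' p q : ℝ} (hg : 0 < g) (hh' : 0 < h') (hhh : h' ≤ h)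
    (hp : 0 < p) (hp1 : p < 1) (hq : 0 < q) (hq1 : q < 1) :
    pairRate g h' p q ≤ pairRate g h p q := by
  rw [pairRate_symm g h' p q, pairRate_symm g h p q]
  exact pairRate_mono_g hh' hhh hg (by linarith) (by linarith) (by linarith) (by linarith)

/-- monotone in both weights -/
private lemma pairRate_mono_both {g g' h h' p q : ℝ} (hg' : 0 < g') (hgg : g' ≤ g)
    (hh' : 0 < h') (hhh : h' ≤ h)
    (hp : 0 < p) (hp1 : p < 1) (hq : 0 < q) (hq1 : q < 1) :
    pairRate g' h' p q ≤ pairRate g h p q :=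
  le_trans (pairRate_mono_h hg' hh' hhh hp hp1 hq hq1)
    (pairRate_mono_g hg' hgg (lt_of_lt_of_le hh' hhh) hp hp1 hq hq1)

end Aux

/-- **Monotone shift of matching weights shifts the levels.**
If weights `g, g̃` agree at `k`, with `g_j ≥ g̃_j` above `k` and `g_j ≤ g̃_j` below `k`,
then the corresponding equalized solutions satisfy `t*_k ≥ t̃*_k`. -/
theorem equalized_level_shift
    (M k : ℕ) (hM : 3 ≤ M) (hk1 : 1 ≤ k) (hk2 : k ≤ M - 2)
    (g gt : ℕ → ℝ)
    (hg : ∀ i, 1 ≤ i → i ≤ M - 2 → 0 < g i)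
    (hgt : ∀ i, 1 ≤ i → i ≤ M - 2 → 0 < gt i)
    (habove : ∀ j, k + 1 ≤ j → j ≤ M - 2 → gt j ≤ g j)
    (hbelow : ∀ j, 1 ≤ j → j ≤ k - 1 → g j ≤ gt j)
    (hat : g k = gt k)
    (t ttil : ℕ → ℝ)
    (ht : IsEqualizedSol M g t) (httil : IsEqualizedSol M gt ttil) :
    ttil k ≤ t k := by
  obtain ⟨r, ht0, htM, htmono, hrate⟩ := ht
  obtain ⟨rt, hs0, hsM, hsmono, hsrate⟩ := httil
  by_contra hcon
  push_neg at hcon   -- hcon : t k < ttil k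
  -- chain monotonicity
  have tchain : ∀ j, j ≤ M - 1 → ∀ i, i < j → t i < t j := by
    intro j
    induction j with
    | zero => intro _ i hi; omega
    | succ n ih =>
      intro hn i hi
      have hlast : t n < t (n + 1) := htmono n (by omega)
      rcases Nat.lt_succ_iff_lt_or_eq.mp hi with hlt | rfl
      · exact lt_trans (ih (by omega) i hlt) hlast
      · exact hlast
  have schain : ∀ j, j ≤ M - 1 → ∀ i, i < j → ttil i < ttil j := by
    intro j
    induction j with
    | zero => intro _ i hi; omega
    | succ n ih =>
      intro hn i hi
      have hlast : ttil n < ttil (n + 1) := hsmono n (by omega)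
      rcases Nat.lt_succ_iff_lt_or_eq.mp hi with hlt | rfl
      · exact lt_trans (ih (by omega) i hlt) hlast
      · exact hlast
  have tpos : ∀ i, 1 ≤ i → i ≤ M - 2 → 0 < t i := by
    intro i h1 h2
    have := tchain i (by omega) 0 (by omega)
    rw [ht0] at this; exact this
  have spos : ∀ i, 1 ≤ i → i ≤ M - 2 → 0 < ttil i := by
    intro i h1 h2
    have := schain i (by omega) 0 (by omega)
    rw [hs0] at this; exact this
  have tlt1 : ∀ i, i ≤ M - 2 → t i < 1 := by
    intro i h
    have := tchain (M - 1) le_rfl i (by omega)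
    rw [htM] at this; exact this
  have slt1 : ∀ i, i ≤ M - 2 → ttil i < 1 := by
    intro i h
    have := schain (M - 1) le_rfl i (by omega)
    rw [hsM] at this; exact this
  -- weight comparisons
  have wup : ∀ j, k ≤ j → j ≤ M - 2 → gt j ≤ g j := by
    intro j h1 h2
    rcases eq_or_lt_of_le h1 with rfl | hlt
    · exact le_of_eq hat.symm
    · exact habove j (by omega) h2
  have wdown : ∀ j, 1 ≤ j → j ≤ k → g j ≤ gt j := by
    intro j h1 h2
    rcases eq_or_lt_of_le h2 with rfl | hlt
    · exact le_of_eq hat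
    · exact hbelow j h1 (by omega)
  -- rate equations
  have trate_mid : ∀ i, 2 ≤ i → i ≤ M - 2 →
      pairRate (g (i - 1)) (g i) (t (i - 1)) (t i) = r := by
    intro i h1 h2
    have := hrate i (by omega) (by omega)
    unfold rateAt at this
    rw [if_neg (by omega), if_neg (by omega)] at this
    exact this
  have srate_mid : ∀ i, 2 ≤ i → i ≤ M - 2 →
      pairRate (gt (i - 1)) (gt i) (ttil (i - 1)) (ttil i) = rt := by
    intro i h1 h2
    have := hsrate i (by omega) (by omega)
    unfold rateAt at this
    rw [if_neg (by omega), if_neg (by omega)] at this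
    exact this
  have trate_top : -(g (M - 2)) * Real.log (t (M - 2)) = r := by
    have := hrate (M - 1) (by omega) le_rfl
    unfold rateAt at this
    rw [if_neg (by omega), if_pos rfl] at this
    exact this
  have srate_top : -(gt (M - 2)) * Real.log (ttil (M - 2)) = rt := by
    have := hsrate (M - 1) (by omega) le_rfl
    unfold rateAt at this
    rw [if_neg (by omega), if_pos rfl] at this
    exact this
  have trate_bot : -(g 1) * Real.log (1 - t 1) = r := by
    have := hrate 1 le_rfl (by omega)
    unfold rateAt at this
    rw [if_pos rfl] at this
    exact this
  have srate_bot : -(gt 1) * Real.log (1 - ttil 1) = rt := by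
    have := hsrate 1 le_rfl (by omega)
    unfold rateAt at this
    rw [if_pos rfl] at this
    exact this
  rcases le_or_gt r rt with hr | hr
  · -- Case 1 : r ≤ rt.  Push the inequality upward to M-2.
    have up : ∀ j, k ≤ j → j ≤ M - 2 → t j < ttil j := by
      intro j hj
      induction j, hj using Nat.le_induction with
      | base => intro _; exact hcon
      | succ n hn ih =>
        intro hn2
        have ihn : t n < ttil n := ih (by omega)
        by_contra hle
        push_neg at hle  -- ttil (n+1) ≤ t (n+1)
        have h1 : 0 < t n := tpos n (by omega) (by omega)
        have h2 : ttil n < ttil (n + 1) := hsmono n (by omega)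
        have h3 : t (n + 1) < 1 := tlt1 (n + 1) hn2
        have h4 : 0 < ttil n := spos n (by omega) (by omega)
        have h5 : t n < 1 := tlt1 n (by omega)
        have h6 : 0 < t (n + 1) := tpos (n + 1) (by omega) hn2
        have e1 : pairRate (g n) (g (n + 1)) (t n) (t (n + 1)) = r := by
          have := trate_mid (n + 1) (by omega) hn2
          simpa using this
        have e2 : pairRate (gt n) (gt (n + 1)) (ttil n) (ttil (n + 1)) = rt := by
          have := srate_mid (n + 1) (by omega) hn2
          simpa using this
        have w1 : gt n ≤ g n := wup n hn (by omega)
        have w2 : gt (n + 1) ≤ g (n + 1) := wup (n + 1) (by omega) hn2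
        have gp1 : 0 < gt n := hgt n (by omega) (by omega)
        have gp2 : 0 < gt (n + 1) := hgt (n + 1) (by omega) hn2
        have c1 : pairRate (gt n) (gt (n + 1)) (ttil n) (ttil (n + 1))
            ≤ pairRate (gt n) (gt (n + 1)) (ttil n) (t (n + 1)) :=
          pairRate_le_q gp1 gp2 h4 h2 hle h3
        have c2 : pairRate (gt n) (gt (n + 1)) (ttil n) (t (n + 1))
            < pairRate (gt n) (gt (n + 1)) (t n) (t (n + 1)) :=
          pairRate_lt_p gp1 gp2 h1 ihn (lt_of_lt_of_le h2 hle) h3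
        have c3 : pairRate (gt n) (gt (n + 1)) (t n) (t (n + 1))
            ≤ pairRate (g n) (g (n + 1)) (t n) (t (n + 1)) :=
          pairRate_mono_both gp1 w1 gp2 w2 h1 h5 h6 h3
        rw [e1] at c3; rw [e2] at c1
        linarith
    have hend : t (M - 2) < ttil (M - 2) := up (M - 2) hk2 le_rfl
    have w : gt (M - 2) ≤ g (M - 2) := wup (M - 2) hk2 le_rfl
    have hp1 : 0 < t (M - 2) := tpos (M - 2) (by omega) le_rfl
    have l1 : Real.log (t (M - 2)) < Real.log (ttil (M - 2)) := Real.log_lt_log hp1 hend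
    have l2 : Real.log (t (M - 2)) < 0 := Real.log_neg hp1 (tlt1 (M - 2) le_rfl)
    have gpos : 0 < gt (M - 2) := hgt (M - 2) (by omega) le_rfl
    have A : -(gt (M - 2)) * Real.log (ttil (M - 2))
        < -(gt (M - 2)) * Real.log (t (M - 2)) := by nlinarith
    have B : -(gt (M - 2)) * Real.log (t (M - 2))
        ≤ -(g (M - 2)) * Real.log (t (M - 2)) := by nlinarith
    rw [srate_top] at A
    rw [trate_top] at B
    linarith
  · -- Case 2 : rt < r.  Push the inequality downward to 1.
    have down : ∀ d, d ≤ k - 1 → t (k - d) < ttil (k - d) := by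
      intro d
      induction d with
      | zero => intro _; simpa using hcon
      | succ m ih =>
        intro hm
        have ihm : t (k - m) < ttil (k - m) := ih (by omega)
        set j := k - m with hj
        have hj2 : 2 ≤ j := by omega
        have hjk : j ≤ k := by omega
        have hkm : k - (m + 1) = j - 1 := by omega
        rw [hkm]
        by_contra hle
        push_neg at hle  -- ttil (j-1) ≤ t (j-1)
        have p0 : 0 < ttil (j - 1) := spos (j - 1) (by omega) (by omega)
        have p1 : t (j - 1) < t j := tchain j (by omega) (j - 1) (by omega)
        have p2 : ttil j < 1 := slt1 j (by omega)
        have p4 : ttil (j - 1) < t j := lt_of_le_of_lt hle p1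
        have p5 : t j < 1 := tlt1 j (by omega)
        have p6 : ttil (j - 1) < 1 := by linarith
        have gp1 : 0 < g (j - 1) := hg (j - 1) (by omega) (by omega)
        have gp2 : 0 < g j := hg j (by omega) (by omega)
        have w1 : g (j - 1) ≤ gt (j - 1) := wdown (j - 1) (by omega) (by omega)
        have w2 : g j ≤ gt j := wdown j (by omega) hjk
        have e1 : pairRate (g (j - 1)) (g j) (t (j - 1)) (t j) = r :=
          trate_mid j hj2 (by omega)
        have e2 : pairRate (gt (j - 1)) (gt j) (ttil (j - 1)) (ttil j) = rt :=
          srate_mid j hj2 (by omega)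
        have c1 : pairRate (g (j - 1)) (g j) (t (j - 1)) (t j)
            ≤ pairRate (g (j - 1)) (g j) (ttil (j - 1)) (t j) :=
          pairRate_le_p gp1 gp2 p0 hle p1 p5
        have c2 : pairRate (g (j - 1)) (g j) (ttil (j - 1)) (t j)
            < pairRate (g (j - 1)) (g j) (ttil (j - 1)) (ttil j) :=
          pairRate_lt_q gp1 gp2 p0 p4 ihm p2
        have c3 : pairRate (g (j - 1)) (g j) (ttil (j - 1)) (ttil j)
            ≤ pairRate (gt (j - 1)) (gt j) (ttil (j - 1)) (ttil j) :=
          pairRate_mono_both gp1 w1 gp2 w2 p0 p6 (spos j (by omega) (by omega)) p2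
        rw [e1] at c1; rw [e2] at c3
        linarith
    have h1lt : t 1 < ttil 1 := by
      have := down (k - 1) le_rfl
      simpa [show k - (k - 1) = 1 by omega] using this
    have w : g 1 ≤ gt 1 := wdown 1 le_rfl hk1
    have b1 : 0 < 1 - ttil 1 := by
      have := slt1 1 (by omega); linarith
    have b2 : 0 < t 1 := tpos 1 le_rfl (by omega)
    have l1 : Real.log (1 - ttil 1) < Real.log (1 - t 1) :=
      Real.log_lt_log b1 (by linarith)
    have l2 : Real.log (1 - ttil 1) < 0 := by
      apply Real.log_neg b1
      have := spos 1 le_rfl (by omega); linarith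
    have gpos : 0 < g 1 := hg 1 le_rfl (by omega)
    have A : -(g 1) * Real.log (1 - t 1) < -(g 1) * Real.log (1 - ttil 1) := by nlinarith
    have B : -(g 1) * Real.log (1 - ttil 1) ≤ -(gt 1) * Real.log (1 - ttil 1) := by nlinarith
    rw [trate_bot] at A
    rw [srate_bot] at B
    linarith
end

section
/- Let M ≥ 3 and let t^M = (t_0,…,t_{M−1}) be the equalized solution with uniform weights (all weights equal to 1). Define t' = (t'_0,…,t'_{2M−2}) by: t'_{2i} = t_i for all i ∈ {0,…,M−1}; t'_1 = (1 − √(1 − t_1))/2; t'_{2M−3} = (1 + √(t_{M−2}))/2; and for each odd k with 3 ≤ k ≤ 2M−5, t'_k = c/(1+c) where c = [ (√(1−t'_{k+1}) − √(1−t'_{k−1})) / (√(t'_{k−1}) − √(t'_{k+1})) ]². Then t' is the equalized solution with uniform weights and 2M−1 levels, i.e. t' = t^{2M−1}. -/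
noncomputable def fid (p q : ℝ) : ℝ := Real.sqrt ((1-p)*(1-q)) + Real.sqrt (p*q)

noncomputable def mid (a b : ℝ) : ℝ :=
  (Real.sqrt (1-a) - Real.sqrt (1-b))^2 /
    ((Real.sqrt b - Real.sqrt a)^2 + (Real.sqrt (1-a) - Real.sqrt (1-b))^2)

lemma fid_nonneg (p q : ℝ) : 0 ≤ fid p q :=
  add_nonneg (Real.sqrt_nonneg _) (Real.sqrt_nonneg _)

lemma pairRate_eq_s6 (p q : ℝ) (hp : 0 ≤ p) (hp1 : p ≤ 1) :
    pairRate 1 1 p q = -2 * Real.log (fid p q) := by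
  unfold pairRate fid
  have h2 : ((1:ℝ)/(1+1)) = (1/2 : ℝ) := by norm_num
  rw [h2, ← Real.sqrt_eq_rpow, ← Real.sqrt_eq_rpow, ← Real.sqrt_eq_rpow, ← Real.sqrt_eq_rpow,
    ← Real.sqrt_mul (by linarith : (0:ℝ) ≤ 1-p), ← Real.sqrt_mul hp]
  norm_num

lemma mono_chain (N : ℕ) (t : ℕ → ℝ) (h : ∀ i, i < N → t i < t (i+1)) :
    ∀ j, j ≤ N → ∀ i, i < j → t i < t j := by
  intro j
  induction j with
  | zero => omega
  | succ n ih =>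
    intro hn i hi
    have hlt : t n < t (n+1) := h n (by omega)
    rcases Nat.lt_or_ge i n with h' | h'
    · exact lt_trans (ih (by omega) i h') hlt
    · have : i = n := by omega
      subst this; exact hlt

lemma mid_key (a b : ℝ) (ha : 0 ≤ a) (hb : b ≤ 1) (hab : a < b) :
    (a < mid a b ∧ mid a b < b) ∧
      fid a (mid a b) = fid (mid a b) b ∧
      2 * (fid a (mid a b))^2 = 1 + fid a b := by
  have hb0 : 0 ≤ b := le_trans ha hab.le
  have ha1 : a ≤ 1 := le_trans hab.le hb
  have hA : (Real.sqrt a)^2 = a := Real.sq_sqrt ha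
  have hB : (Real.sqrt b)^2 = b := Real.sq_sqrt hb0
  have hA' : (Real.sqrt (1-a))^2 = 1-a := Real.sq_sqrt (by linarith)
  have hB' : (Real.sqrt (1-b))^2 = 1-b := Real.sq_sqrt (by linarith)
  have hAn : 0 ≤ Real.sqrt a := Real.sqrt_nonneg _
  have hBn : 0 ≤ Real.sqrt b := Real.sqrt_nonneg _
  have hA'n : 0 ≤ Real.sqrt (1-a) := Real.sqrt_nonneg _
  have hB'n : 0 ≤ Real.sqrt (1-b) := Real.sqrt_nonneg _
  have hABlt : Real.sqrt a < Real.sqrt b := Real.sqrt_lt_sqrt ha hab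
  have hB'A' : Real.sqrt (1-b) < Real.sqrt (1-a) :=
    Real.sqrt_lt_sqrt (by linarith) (by linarith)
  set A := Real.sqrt a with hAdef
  set B := Real.sqrt b with hBdef
  set A' := Real.sqrt (1-a) with hA'def
  set B' := Real.sqrt (1-b) with hB'def
  have hDpos : 0 < B - A := by linarith
  have hD'pos : 0 < A' - B' := by linarith
  have hN2 : 0 < (B-A)^2 + (A'-B')^2 := by positivity
  have hm : mid a b = (A'-B')^2 / ((B-A)^2 + (A'-B')^2) := rfl
  have hm1 : 1 - mid a b = (B-A)^2 / ((B-A)^2 + (A'-B')^2) := by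
    rw [hm]; field_simp; ring
  have hsm : Real.sqrt (mid a b) = (A'-B') / Real.sqrt ((B-A)^2 + (A'-B')^2) := by
    rw [hm, show (A'-B')^2 / ((B-A)^2 + (A'-B')^2)
        = ((A'-B') / Real.sqrt ((B-A)^2 + (A'-B')^2))^2 by
      rw [div_pow, Real.sq_sqrt hN2.le]]
    exact Real.sqrt_sq (by positivity)
  have hsm1 : Real.sqrt (1 - mid a b) = (B-A) / Real.sqrt ((B-A)^2 + (A'-B')^2) := by
    rw [hm1, show (B-A)^2 / ((B-A)^2 + (A'-B')^2)
        = ((B-A) / Real.sqrt ((B-A)^2 + (A'-B')^2))^2 by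
      rw [div_pow, Real.sq_sqrt hN2.le]]
    exact Real.sqrt_sq (by positivity)
  have hfid1 : fid a (mid a b)
      = (A'*(B-A) + A*(A'-B')) / Real.sqrt ((B-A)^2 + (A'-B')^2) := by
    unfold fid
    rw [Real.sqrt_mul (by linarith : (0:ℝ) ≤ 1-a), Real.sqrt_mul ha, hsm, hsm1]
    rw [← hAdef, ← hA'def]
    ring
  have hfid2 : fid (mid a b) b
      = (B'*(B-A) + B*(A'-B')) / Real.sqrt ((B-A)^2 + (A'-B')^2) := by
    unfold fid
    rw [Real.sqrt_mul' _ (by linarith : (0:ℝ) ≤ 1-b), Real.sqrt_mul' _ hb0, hsm, hsm1]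
    rw [← hBdef, ← hB'def]
    ring
  have hfidab : fid a b = A'*B' + A*B := by
    unfold fid
    rw [Real.sqrt_mul (by linarith : (0:ℝ) ≤ 1-a), Real.sqrt_mul ha]
  have hu : A^2 + A'^2 = 1 := by rw [hA, hA']; ring
  have hv : B^2 + B'^2 = 1 := by rw [hB, hB']; ring
  have hT : (B-A)^2 + (A'-B')^2 = 2 - 2*(A*B + A'*B') := by linear_combination hu + hv
  have hE1 : A*B + A'*B' < 1 := by
    linarith [hT, pow_pos hDpos 2, sq_nonneg (A'-B')]
  refine ⟨⟨?_, ?_⟩, ?_, ?_⟩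
  · -- a < mid a b
    rw [hm, lt_div_iff₀ hN2, ← hA]
    have h5 : A*(B-A) < A'*(A'-B') := by
      have e5 : A*(B-A) - A'*(A'-B') = (A*B + A'*B') - (A^2+A'^2) := by ring
      linarith [hu, hE1, e5]
    have h6 : (A*(B-A))^2 < (A'*(A'-B'))^2 := by
      apply pow_lt_pow_left₀ h5 (mul_nonneg hAn hDpos.le)
      norm_num
    have e7 : A^2*((B-A)^2+(A'-B')^2) - (A'-B')^2
        = (A*(B-A))^2 - (A'*(A'-B'))^2 := by
      linear_combination ((A'-B')^2) * hu
    linarith [h6, e7]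
  · -- mid a b < b
    rw [hm, div_lt_iff₀ hN2, ← hB]
    have h5 : B'*(A'-B') < B*(B-A) := by
      have e5 : B'*(A'-B') - B*(B-A) = (A*B + A'*B') - (B^2+B'^2) := by ring
      linarith [hv, hE1, e5]
    have h6 : (B'*(A'-B'))^2 < (B*(B-A))^2 := by
      apply pow_lt_pow_left₀ h5 (mul_nonneg hB'n hD'pos.le)
      norm_num
    have e8 : B^2*((B-A)^2+(A'-B')^2) - (A'-B')^2
        = (B*(B-A))^2 - (B'*(A'-B'))^2 := by
      linear_combination ((A'-B')^2) * hv
    linarith [h6, e8]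
  · have e9 : A'*(B-A) + A*(A'-B') = B'*(B-A) + B*(A'-B') := by ring
    rw [hfid1, hfid2, e9]
  · rw [hfid1, hfidab, div_pow, Real.sq_sqrt hN2.le]
    have key4 : 2*(A'*(B-A) + A*(A'-B'))^2
        = (1 + (A'*B' + A*B)) * ((B-A)^2 + (A'-B')^2) := by
      linear_combination (2*(B^2+B'^2) - 1 - (A*B+A'*B')) * hu + (1 - (A*B+A'*B')) * hv
    rw [mul_div_assoc', div_eq_iff hN2.ne']
    linear_combination key4

lemma mid_zero (b : ℝ) (hb0 : 0 < b) (hb1 : b ≤ 1) :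
    mid 0 b = (1 - Real.sqrt (1-b)) / 2 := by
  have hB : (Real.sqrt b)^2 = b := Real.sq_sqrt hb0.le
  have hB' : (Real.sqrt (1-b))^2 = 1-b := Real.sq_sqrt (by linarith)
  have hB'n : 0 ≤ Real.sqrt (1-b) := Real.sqrt_nonneg _
  have hB'1 : Real.sqrt (1-b) < 1 := by nlinarith
  unfold mid
  norm_num
  have hden : (Real.sqrt b)^2 + (1 - Real.sqrt (1-b))^2 ≠ 0 := by nlinarith
  rw [div_eq_div_iff hden (by norm_num : (2:ℝ) ≠ 0)]
  nlinarith [hB, hB']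

lemma mid_one (a : ℝ) (ha0 : 0 ≤ a) (ha1 : a < 1) :
    mid a 1 = (1 + Real.sqrt a) / 2 := by
  have hA : (Real.sqrt a)^2 = a := Real.sq_sqrt ha0
  have hA' : (Real.sqrt (1-a))^2 = 1-a := Real.sq_sqrt (by linarith)
  have hAn : 0 ≤ Real.sqrt a := Real.sqrt_nonneg _
  have hA1 : Real.sqrt a < 1 := by nlinarith
  unfold mid
  norm_num
  have hden : (1 - Real.sqrt a)^2 + (Real.sqrt (1-a))^2 ≠ 0 := by nlinarith
  rw [div_eq_div_iff hden (by norm_num : (2:ℝ) ≠ 0)]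
  nlinarith [hA, hA']

lemma mid_interior (a b : ℝ) (ha : 0 ≤ a) (hb : b ≤ 1) (hab : a < b) :
    (((Real.sqrt (1-b) - Real.sqrt (1-a)) / (Real.sqrt a - Real.sqrt b))^2) /
      (1 + ((Real.sqrt (1-b) - Real.sqrt (1-a)) / (Real.sqrt a - Real.sqrt b))^2)
      = mid a b := by
  have hABlt : Real.sqrt a < Real.sqrt b := Real.sqrt_lt_sqrt ha hab
  have hne : Real.sqrt a - Real.sqrt b ≠ 0 := by linarith [hABlt]
  have hne' : Real.sqrt b - Real.sqrt a ≠ 0 := by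
    intro h; apply hne; linarith
  have h1 : (Real.sqrt (1-b) - Real.sqrt (1-a)) / (Real.sqrt a - Real.sqrt b)
      = (Real.sqrt (1-a) - Real.sqrt (1-b)) / (Real.sqrt b - Real.sqrt a) := by
    rw [div_eq_div_iff hne hne']; ring
  rw [h1]
  unfold mid
  have hN2 : (0:ℝ) < (Real.sqrt b - Real.sqrt a)^2
      + (Real.sqrt (1-a) - Real.sqrt (1-b))^2 := by positivity
  have hD2 : (Real.sqrt b - Real.sqrt a)^2 ≠ 0 := pow_ne_zero _ hne'
  rw [div_pow]
  rw [eq_div_iff hN2.ne']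
  field_simp

lemma rateAt_eq (N : ℕ) (hN : 3 ≤ N) (t : ℕ → ℝ) (h0 : t 0 = 0) (h1 : t (N-1) = 1)
    (hbd : ∀ j, j ≤ N - 1 → 0 ≤ t j ∧ t j ≤ 1)
    (i : ℕ) (hi1 : 1 ≤ i) (hi2 : i ≤ N - 1) :
    rateAt N (fun _ => 1) t i = -2 * Real.log (fid (t (i-1)) (t i)) := by
  unfold rateAt
  by_cases h : i = 1
  · subst h
    simp only [↓reduceIte]
    have hb := (hbd 1 (by omega)).2
    have hf : fid (t (1-1)) (t 1) = Real.sqrt (1 - t 1) := by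
      show fid (t 0) (t 1) = _
      unfold fid; rw [h0]; norm_num
    rw [hf, Real.log_sqrt (by linarith)]
    ring
  · rw [if_neg h]
    by_cases h2 : i = N - 1
    · rw [if_pos h2]; subst h2
      have ha := (hbd (N-2) (by omega)).1
      have hf : fid (t (N-1-1)) (t (N-1)) = Real.sqrt (t (N-2)) := by
        rw [show N-1-1 = N-2 by omega, h1]
        unfold fid; norm_num
      rw [hf, Real.log_sqrt ha]
      ring
    · rw [if_neg h2]
      exact pairRate_eq_s6 _ _ (hbd (i-1) (by omega)).1 (hbd (i-1) (by omega)).2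

/-- **Doubling the number of levels (uniform weights).**
Let `t = t^M` be the equalized solution with uniform weights and `M` levels.  Define `t'` by
`t'_{2i} = t_i`, `t'_1 = (1-√(1-t₁))/2`, `t'_{2M-3} = (1+√(t_{M-2}))/2`, and for odd `k` with
`3 ≤ k ≤ 2M-5`, `t'_k = c/(1+c)` where
`c = [(√(1-t'_{k+1}) - √(1-t'_{k-1}))/(√(t'_{k-1}) - √(t'_{k+1}))]²`.
Then `t'` is the equalized solution with uniform weights and `2M-1` levels. -/
theorem equalized_doubling
    (M : ℕ) (hM : 3 ≤ M) (t t' : ℕ → ℝ)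
    (ht : IsEqualizedSol M (fun _ => (1 : ℝ)) t)
    (heven : ∀ i, i ≤ M - 1 → t' (2 * i) = t i)
    (hfirst : t' 1 = (1 - Real.sqrt (1 - t 1)) / 2)
    (hlast : t' (2 * M - 3) = (1 + Real.sqrt (t (M - 2))) / 2)
    (hodd : ∀ k, Odd k → 3 ≤ k → k ≤ 2 * M - 5 →
      t' k =
        (((Real.sqrt (1 - t' (k + 1)) - Real.sqrt (1 - t' (k - 1))) /
            (Real.sqrt (t' (k - 1)) - Real.sqrt (t' (k + 1)))) ^ 2) /
          (1 + ((Real.sqrt (1 - t' (k + 1)) - Real.sqrt (1 - t' (k - 1))) /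
            (Real.sqrt (t' (k - 1)) - Real.sqrt (t' (k + 1)))) ^ 2)) :
    IsEqualizedSol (2 * M - 1) (fun _ => (1 : ℝ)) t' := by
  obtain ⟨r, h0, h1, hmono, hrate⟩ := ht
  have chain : ∀ j, j ≤ M - 1 → ∀ i, i < j → t i < t j := mono_chain (M-1) t hmono
  have hbd : ∀ j, j ≤ M-1 → 0 ≤ t j ∧ t j ≤ 1 := by
    intro j hj
    constructor
    · rcases Nat.eq_zero_or_pos j with h | h
      · rw [h, h0]
      · have := chain j hj 0 h; rw [h0] at this; linarith
    · rcases eq_or_lt_of_le hj with h | h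
      · rw [h, h1]
      · have := chain (M-1) le_rfl j h; rw [h1] at this; linarith
  have hE : ∀ i, 1 ≤ i → i ≤ M-1 → fid (t (i-1)) (t i) = Real.exp (-(r/2)) := by
    intro i hi1 hi2
    have hre := hrate i hi1 hi2
    rw [rateAt_eq M hM t h0 h1 hbd i hi1 hi2] at hre
    have hab : t (i-1) < t i := chain i hi2 (i-1) (by omega)
    have hpos : 0 < fid (t (i-1)) (t i) := by
      rcases Nat.lt_or_ge i 2 with h | h
      · have hi : i = 1 := by omega
        subst hi
        have h11 : t 1 < 1 := by
          have := chain (M-1) le_rfl 1 (by omega); rw [h1] at this; exact this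
        unfold fid
        have hp1 : 0 < (1 - t (1-1)) * (1 - t 1) := by
          rw [show (1:ℕ)-1 = 0 from rfl, h0]; nlinarith
        have := Real.sqrt_pos.mpr hp1
        have := Real.sqrt_nonneg (t (1-1) * t 1)
        linarith
      · have ht1 : 0 < t 1 := by
          have := chain 1 (by omega) 0 (by omega); rw [h0] at this; exact this
        have hta : 0 < t (i-1) := by
          rcases Nat.lt_or_ge 1 (i-1) with h' | h'
          · have := chain (i-1) (by omega) 1 h'; linarith
          · have he : i - 1 = 1 := by omega
            rw [he]; exact ht1
        unfold fid
        have h3 : 0 < t (i-1) * t i := mul_pos hta (lt_trans hta hab)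
        have := Real.sqrt_pos.mpr h3
        have := Real.sqrt_nonneg ((1 - t (i-1)) * (1 - t i))
        linarith
    have hl : Real.log (fid (t (i-1)) (t i)) = -(r/2) := by linarith
    rw [← hl, Real.exp_log hpos]
  set E := Real.exp (-(r/2)) with hEdef
  have hEpos : 0 < E := Real.exp_pos _
  have Hmid : ∀ j, j ≤ M - 2 → t' (2*j+1) = mid (t j) (t (j+1)) := by
    intro j hj
    have haj : 0 ≤ t j := (hbd j (by omega)).1
    have hbj : t (j+1) ≤ 1 := (hbd (j+1) (by omega)).2
    have habj : t j < t (j+1) := hmono j (by omega)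
    rcases Nat.eq_zero_or_pos j with h | hjpos
    · subst h
      rw [show 2*0+1 = 1 from rfl, hfirst, h0]
      have ht1 : 0 < t 1 := by rw [h0] at habj; exact habj
      exact (mid_zero (t 1) ht1 hbj).symm
    · rcases eq_or_lt_of_le hj with h | h
      · subst h
        rw [show 2*(M-2)+1 = 2*M-3 by omega, hlast]
        have h1' : t (M-2+1) = 1 := by rw [show M-2+1 = M-1 by omega, h1]
        have halt : t (M-2) < 1 := by rw [← h1']; exact habj
        rw [h1']
        exact (mid_one _ haj halt).symm
      · have hk := hodd (2*j+1) ⟨j, by ring⟩ (by omega) (by omega)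
        rw [show 2*j+1-1 = 2*j by omega, show 2*j+1+1 = 2*(j+1) by ring] at hk
        rw [heven j (by omega), heven (j+1) (by omega)] at hk
        rw [hk]
        exact mid_interior (t j) (t (j+1)) haj hbj habj
  have Hkey : ∀ j, j ≤ M-2 →
      (t j < mid (t j) (t (j+1)) ∧ mid (t j) (t (j+1)) < t (j+1)) ∧
      fid (t j) (mid (t j) (t (j+1))) = fid (mid (t j) (t (j+1))) (t (j+1)) ∧
      2 * (fid (t j) (mid (t j) (t (j+1))))^2 = 1 + E := by
    intro j hj
    have haj : 0 ≤ t j := (hbd j (by omega)).1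
    have hbj : t (j+1) ≤ 1 := (hbd (j+1) (by omega)).2
    have habj : t j < t (j+1) := hmono j (by omega)
    have hmk := mid_key (t j) (t (j+1)) haj hbj habj
    have he := hE (j+1) (by omega) (by omega)
    rw [Nat.add_sub_cancel] at he
    rw [he] at hmk
    exact hmk
  have h0' : t' 0 = 0 := by
    have := heven 0 (by omega); rw [Nat.mul_zero] at this; rw [this, h0]
  have h1' : t' (2*M-2) = 1 := by
    have := heven (M-1) le_rfl
    rw [show 2*(M-1) = 2*M-2 by omega] at this
    rw [this, h1]
  have hmono' : ∀ i, i < 2*M-2 → t' i < t' (i+1) := by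
    intro i hi
    rcases Nat.even_or_odd i with ⟨j, hj⟩ | ⟨j, hj⟩
    · obtain rfl : i = 2*j := by omega
      have hj2 : j ≤ M-2 := by omega
      rw [heven j (by omega), Hmid j hj2]
      exact ((Hkey j hj2).1).1
    · obtain rfl : i = 2*j+1 := by omega
      have hj2 : j ≤ M-2 := by omega
      rw [Hmid j hj2, show 2*j+1+1 = 2*(j+1) by ring, heven (j+1) (by omega)]
      exact ((Hkey j hj2).1).2
  have chain' : ∀ j, j ≤ 2*M-2 → ∀ i, i < j → t' i < t' j :=
    mono_chain (2*M-2) t' hmono'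
  have hbd' : ∀ j, j ≤ 2*M-2 → 0 ≤ t' j ∧ t' j ≤ 1 := by
    intro j hj
    constructor
    · rcases Nat.eq_zero_or_pos j with h | h
      · rw [h, h0']
      · have := chain' j hj 0 h; rw [h0'] at this; linarith
    · rcases eq_or_lt_of_le hj with h | h
      · rw [h, h1']
      · have := chain' (2*M-2) le_rfl j h; rw [h1'] at this; linarith
  refine ⟨-Real.log ((1+E)/2), h0', ?_, ?_, ?_⟩
  · rw [show 2*M-1-1 = 2*M-2 by omega]; exact h1'
  · intro i hi
    exact hmono' i (by omega)
  · intro i hi1 hi2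
    rw [rateAt_eq (2*M-1) (by omega) t' h0'
      (by rw [show 2*M-1-1 = 2*M-2 by omega]; exact h1')
      (fun j hj => hbd' j (by omega)) i hi1 hi2]
    have hs : ∃ s : ℝ, fid (t' (i-1)) (t' i) = s ∧ 0 ≤ s ∧ 2 * s^2 = 1 + E := by
      rcases Nat.even_or_odd i with ⟨j, hj⟩ | ⟨j, hj⟩
      · -- i even, i = 2j with 1 ≤ j ≤ M-1
        obtain rfl : i = 2*j := by omega
        have hj1 : 1 ≤ j := by omega
        have hj2 : j - 1 ≤ M-2 := by omega
        have hk := Hkey (j-1) hj2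
        rw [show j-1+1 = j by omega] at hk
        refine ⟨fid (t (j-1)) (mid (t (j-1)) (t j)), ?_, fid_nonneg _ _, hk.2.2⟩
        rw [show 2*j-1 = 2*(j-1)+1 by omega, Hmid (j-1) hj2,
          show j-1+1 = j by omega, heven j (by omega)]
        exact hk.2.1.symm
      · -- i odd, i = 2j+1 with j ≤ M-2
        obtain rfl : i = 2*j+1 := by omega
        have hj2 : j ≤ M-2 := by omega
        refine ⟨fid (t j) (mid (t j) (t (j+1))), ?_, fid_nonneg _ _, (Hkey j hj2).2.2⟩
        rw [show 2*j+1-1 = 2*j by omega, heven j (by omega), Hmid j hj2]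
    obtain ⟨s, hfs, hsn, hs2⟩ := hs
    have hspos : 0 < s := by nlinarith
    have heq : (1+E)/2 = s^2 := by linarith
    rw [hfs, heq, Real.log_pow]
    push_cast
    ring
end

section
/- Let r^M denote the common rate value of the equalized solution with uniform weights and M levels. Then for every ε > 0 there exists M₀ such that for all M ≥ M₀, r^M < ε. -/
lemma exp_neg_rate_bound (M : ℕ) (hM : 4 ≤ M) (t : ℕ → ℝ) (r : ℝ)
    (h : IsEqualizedWithRate M (fun _ => (1 : ℝ)) t r)
    (i : ℕ) (hi1 : 1 ≤ i) (hi2 : i ≤ M - 1) :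
    1 - 2 * (t i - t (i - 1)) ≤ Real.exp (-r) := by
  obtain ⟨h0, h1, hinc, hrate⟩ := h
  have tm : ∀ b, b ≤ M - 1 → ∀ a, a ≤ b → t a ≤ t b := by
    intro b
    induction b with
    | zero => intro _ a ha; have : a = 0 := Nat.le_zero.mp ha; simp [this]
    | succ n ih =>
      intro hb a ha
      rcases Nat.eq_or_lt_of_le ha with h | h
      · exact h ▸ le_rfl
      · have h1' : t a ≤ t n := ih (by omega) a (by omega)
        have h2' : t n < t (n + 1) := hinc n (by omega)
        linarith
  have ht1pos : 0 < t 1 := by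
    have := hinc 0 (by omega); rw [h0] at this; simpa using this
  have hlast : t (M - 2) < 1 := by
    have := hinc (M - 2) (by omega)
    rw [show M - 2 + 1 = M - 1 by omega, h1] at this; exact this
  by_cases hi : i = 1
  · subst hi
    have hr := hrate 1 le_rfl (by omega)
    rw [rateAt] at hr
    rw [if_pos rfl] at hr
    have h1lt : t 1 < 1 := lt_of_le_of_lt (tm (M - 2) (by omega) 1 (by omega)) hlast
    have hexp : 1 - t 1 = Real.exp (-r) := by
      rw [← Real.exp_log (by linarith : (0:ℝ) < 1 - t 1)]
      congr 1; linarith [hr]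
    simp only [Nat.sub_self, h0]
    linarith
  · by_cases hi' : i = M - 1
    · subst hi'
      have hr := hrate (M - 1) (by omega) le_rfl
      rw [rateAt] at hr
      rw [if_neg (by omega : ¬ M - 1 = 1), if_pos rfl] at hr
      have hpos : 0 < t (M - 2) := lt_of_lt_of_le ht1pos (tm (M - 2) (by omega) 1 (by omega))
      have hexp : t (M - 2) = Real.exp (-r) := by
        rw [← Real.exp_log hpos]; congr 1; linarith [hr]
      rw [show M - 1 - 1 = M - 2 by omega, h1]
      linarith
    · -- middle case
      have hr := hrate i hi1 hi2
      rw [rateAt] at hr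
      rw [if_neg hi, if_neg hi'] at hr
      set p := t (i - 1) with hp_def
      set q := t i with hq_def
      have hp : 0 < p := lt_of_lt_of_le ht1pos (tm (i - 1) (by omega) 1 (by omega))
      have hq1 : q < 1 := lt_of_le_of_lt (tm (M - 2) (by omega) i (by omega)) hlast
      have hpq : p < q := by
        have := hinc (i - 1) (by omega)
        rwa [show i - 1 + 1 = i by omega] at this
      have hq : 0 < q := lt_trans hp hpq
      have h1p : 0 < 1 - p := by linarith
      have h1q : 0 < 1 - q := by linarith
      have hhalf : (1:ℝ) / (1 + 1) = 1 / 2 := by norm_num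
      rw [pairRate] at hr
      set S := (1 - p) ^ ((1:ℝ)/2) * (1 - q) ^ ((1:ℝ)/2) + p ^ ((1:ℝ)/2) * q ^ ((1:ℝ)/2)
        with hS_def
      have hr' : -(2:ℝ) * Real.log S = r := by
        rw [hS_def]; rw [hhalf] at hr; convert hr using 2 <;> norm_num
      have hSpos : 0 < S := by
        rw [hS_def]
        have h1 : 0 ≤ (1 - p) ^ ((1:ℝ)/2) * (1 - q) ^ ((1:ℝ)/2) :=
          mul_nonneg (Real.rpow_nonneg (le_of_lt h1p) _) (Real.rpow_nonneg (le_of_lt h1q) _)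
        have h2 : 0 < p ^ ((1:ℝ)/2) * q ^ ((1:ℝ)/2) :=
          mul_pos (Real.rpow_pos_of_pos hp _) (Real.rpow_pos_of_pos hq _)
        linarith
      have hSexp : S = Real.exp (-(r / 2)) := by
        rw [← Real.exp_log hSpos]; congr 1; linarith [hr']
      have sq1q : (1 - q) ^ ((1:ℝ)/2) * (1 - q) ^ ((1:ℝ)/2) = 1 - q := by
        rw [← Real.rpow_add h1q]; norm_num
      have sqp : p ^ ((1:ℝ)/2) * p ^ ((1:ℝ)/2) = p := by
        rw [← Real.rpow_add hp]; norm_num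
      have hb : (1 - q) ^ ((1:ℝ)/2) ≤ (1 - p) ^ ((1:ℝ)/2) :=
        Real.rpow_le_rpow (le_of_lt h1q) (by linarith) (by norm_num)
      have hb' : p ^ ((1:ℝ)/2) ≤ q ^ ((1:ℝ)/2) :=
        Real.rpow_le_rpow (le_of_lt hp) (le_of_lt hpq) (by norm_num)
      have b1 : 1 - q ≤ (1 - p) ^ ((1:ℝ)/2) * (1 - q) ^ ((1:ℝ)/2) :=
        calc 1 - q = (1 - q) ^ ((1:ℝ)/2) * (1 - q) ^ ((1:ℝ)/2) := sq1q.symm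
          _ ≤ (1 - p) ^ ((1:ℝ)/2) * (1 - q) ^ ((1:ℝ)/2) :=
            mul_le_mul_of_nonneg_right hb (Real.rpow_nonneg (le_of_lt h1q) _)
      have b2 : p ≤ p ^ ((1:ℝ)/2) * q ^ ((1:ℝ)/2) :=
        calc p = p ^ ((1:ℝ)/2) * p ^ ((1:ℝ)/2) := sqp.symm
          _ ≤ p ^ ((1:ℝ)/2) * q ^ ((1:ℝ)/2) :=
            mul_le_mul_of_nonneg_left hb' (Real.rpow_nonneg (le_of_lt hp) _)
      have hSlb : 1 - (q - p) ≤ S := by rw [hS_def]; linarith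
      have hexpsplit : Real.exp (-r) = Real.exp (-(r/2)) * Real.exp (-(r/2)) := by
        rw [← Real.exp_add]; ring_nf
      rw [hexpsplit, ← hSexp]
      nlinarith [hSlb, hSpos, sq_nonneg (q - p)]

/-- **The optimal rate vanishes as the number of levels grows.**
If `r^M` denotes the common rate of the equalized solution with uniform weights and `M`
levels, then for every `ε > 0` there is `M₀` such that `r^M < ε` for all `M ≥ M₀`. -/
theorem equalized_rate_tendsto_zero :
    ∀ ε : ℝ, 0 < ε → ∃ M₀ : ℕ, ∀ M : ℕ, M₀ ≤ M →
      ∀ (t : ℕ → ℝ) (r : ℝ), IsEqualizedWithRate M (fun _ => (1 : ℝ)) t r → r < ε := by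
  intro ε hε
  have hc : 0 < 1 - Real.exp (-ε) := by
    have : Real.exp (-ε) < 1 := by
      calc Real.exp (-ε) < Real.exp 0 := Real.exp_lt_exp.mpr (by linarith)
        _ = 1 := Real.exp_zero
    linarith
  obtain ⟨n, hn⟩ := exists_nat_gt (2 / (1 - Real.exp (-ε)))
  refine ⟨n + 4, fun M hM t r h => ?_⟩
  have hM4 : 4 ≤ M := by omega
  have hMreal : (2:ℝ) / ((M:ℝ) - 1) < 1 - Real.exp (-ε) := by
    have h1 : (2:ℝ) / (1 - Real.exp (-ε)) < (M:ℝ) - 1 := by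
      have : (n:ℝ) ≤ (M:ℝ) - 1 := by
        have : (n:ℝ) + 1 ≤ (M:ℝ) := by exact_mod_cast (by omega : n + 1 ≤ M)
        linarith
      linarith
    have hM1 : (0:ℝ) < (M:ℝ) - 1 := by
      have : (1:ℝ) < (M:ℝ) := by exact_mod_cast (by omega : 1 < M)
      linarith
    rw [div_lt_iff₀ hM1]
    rw [div_lt_iff₀ hc] at h1
    linarith [mul_comm ((M:ℝ) - 1) (1 - Real.exp (-ε))]
  obtain ⟨h0, h1, hinc, hrate⟩ := h
  have hM1pos : (0:ℝ) < (M:ℝ) - 1 := by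
    have : (1:ℝ) < (M:ℝ) := by exact_mod_cast (by omega : 1 < M); 
    linarith
  have hsum : ∑ j ∈ Finset.range (M - 1), (t (j + 1) - t j) = 1 := by
    rw [Finset.sum_range_sub, h1, h0]; ring
  have hpig : ∃ j ∈ Finset.range (M - 1), t (j + 1) - t j ≤ 1 / ((M:ℝ) - 1) := by
    by_contra hcon
    push_neg at hcon
    have hlt : ∑ j ∈ Finset.range (M - 1), (1 / ((M:ℝ) - 1))
        < ∑ j ∈ Finset.range (M - 1), (t (j + 1) - t j) :=
      Finset.sum_lt_sum_of_nonempty (by simp; omega) hcon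
    rw [hsum, Finset.sum_const, Finset.card_range, nsmul_eq_mul] at hlt
    have hcard : ((M - 1 : ℕ) : ℝ) = (M:ℝ) - 1 := by
      push_cast [Nat.cast_sub (by omega : 1 ≤ M)]; ring
    rw [hcard, mul_one_div, div_self (ne_of_gt hM1pos)] at hlt
    linarith
  obtain ⟨j, hj, hΔ⟩ := hpig
  have hjlt : j < M - 1 := Finset.mem_range.mp hj
  have hkey := exp_neg_rate_bound M hM4 t r ⟨h0, h1, hinc, hrate⟩ (j + 1) (by omega) (by omega)
  rw [show j + 1 - 1 = j from rfl] at hkey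
  have : Real.exp (-ε) < Real.exp (-r) := by
    have h2 : 2 * (t (j + 1) - t j) ≤ 2 / ((M:ℝ) - 1) := by
      rw [div_eq_mul_one_div]
      linarith
    linarith
  have := Real.exp_lt_exp.mp this
  linarith
end
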